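/- arXiv:2304.12955 — 4 statements merged into one kernel-verified Lean document; each statement's English description precedes it below -/
import Mathlib

section
/- Under the time-varying weighted restricted PDA semantics, the inner weights γ defined by Lang's-algorithm recurrence are correct: for all 0 ≤ i < t and all states q, r ∈ Q and stack symbols x, y ∈ Γ, γ[i→t][q,x→r,y] equals the total weight of all push computations over timesteps i+1, …, t from (i, q, x) to (t, r, y). -/
/-- An operation of a restricted (restricted-form) PDA with states `Q` and stack alphabet `Γ`:
`push q x r y` has left-hand side `q, x` and pushes `y` on top of `x` while moving to state
`r`; `repl q x r y` replaces the top symbol `x` by `y`; `pop q x r` pops the top symbol `x`. -/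
inductive Op (Q Γ : Type) where
  | push (q : Q) (x : Γ) (r : Q) (y : Γ)
  | repl (q : Q) (x : Γ) (r : Q) (y : Γ)
  | pop (q : Q) (x : Γ) (r : Q)
  deriving DecidableEq

/-- `OpStep c o c'` : the operation `o` is applicable to configuration `c` (its left-hand
side state is the current state and its left-hand side stack symbol is the current top
symbol, the stack being nonempty) and produces configuration `c'`.  Stacks are lists whose
head is the top of the stack. -/
inductive OpStep {Q Γ : Type} : Q × List Γ → Op Q Γ → Q × List Γ → Prop
  | push (q : Q) (x : Γ) (r : Q) (y : Γ) (β : List Γ) :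
      OpStep (q, x :: β) (Op.push q x r y) (r, y :: x :: β)
  | repl (q : Q) (x : Γ) (r : Q) (y : Γ) (β : List Γ) :
      OpStep (q, x :: β) (Op.repl q x r y) (r, y :: β)
  | pop (q : Q) (x : Γ) (r : Q) (β : List Γ) :
      OpStep (q, x :: β) (Op.pop q x r) (r, β)

/-- `RunFrom c π c'` : the sequence of operations `π`, applied successively starting from
configuration `c`, is applicable at each step and ends in configuration `c'`. -/
inductive RunFrom {Q Γ : Type} : Q × List Γ → List (Op Q Γ) → Q × List Γ → Prop
  | nil (c : Q × List Γ) : RunFrom c [] c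
  | cons {c c' c'' : Q × List Γ} {o : Op Q Γ} {π : List (Op Q Γ)} :
      OpStep c o c' → RunFrom c' π c'' → RunFrom c (o :: π) c''

/-- Given time-varying operation weights `Δ`, the weight of a run `π` whose first operation
happens at timestep `k` is the product of the weights of its operations at their respective
timesteps. -/
def runWeight {Q Γ : Type} (Δ : ℕ → Op Q Γ → ℝ) : ℕ → List (Op Q Γ) → ℝ
  | _, [] => 1
  | k, o :: π => Δ k o * runWeight Δ (k + 1) π

/-- Table of the inner weights `γ` of Lang's algorithm, with indices shifted by one:
`gamTable q₀ bot Δ t t' I q x r y` equals (for `t' ≤ t` and `I ≤ t'`) the inner weight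
`γ[i → t'][q,x → r,y]` where `i = I - 1` (so `I = 0` represents `i = -1`).  It is defined by
the recurrence
`γ[-1→0][q,x→r,y] = 1` if `(q,x,r,y) = (q₀,⊥,q₀,⊥)` and `0` otherwise, and for `t ≥ 1`,
`γ[i→t] = 1{i = t-1}·Δ_t[q,x→r,xy] + Σ_{s,z} γ[i→t-1][q,x→s,z]·Δ_t[s,z→r,y]
        + Σ_{k=i+1}^{t-2} Σ_u γ[i→k][q,x→u,y]·γ'[k][u,y→t,r]`,
where `γ'[k][u,y→t,r] = Σ_{s,z} γ[k→t-1][u,y→s,z]·Δ_t[s,z→r,ε]`. -/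
def gamTable {Q Γ : Type} [Fintype Q] [Fintype Γ] [DecidableEq Q] [DecidableEq Γ]
    (q₀ : Q) (bot : Γ) (Δ : ℕ → Op Q Γ → ℝ) : ℕ → ℕ → ℕ → Q → Γ → Q → Γ → ℝ
  | 0 => fun t' I q x r y =>
      if t' = 0 ∧ I = 0 ∧ q = q₀ ∧ x = bot ∧ r = q₀ ∧ y = bot then 1 else 0
  | t + 1 => fun t' I q x r y =>
      if t' = t + 1 then
        (if I = t + 1 then Δ (t + 1) (Op.push q x r y) else 0)
        + (∑ s : Q, ∑ z : Γ,
            gamTable q₀ bot Δ t t I q x s z * Δ (t + 1) (Op.repl s z r y))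
        + ∑ k ∈ Finset.Ico I t, ∑ u : Q,
            gamTable q₀ bot Δ t k I q x u y *
              (∑ s : Q, ∑ z : Γ,
                gamTable q₀ bot Δ t t (k + 1) u y s z * Δ (t + 1) (Op.pop s z r))
      else gamTable q₀ bot Δ t t' I q x r y

/-- The inner weights `γ` with shifted lower index: `gam q₀ bot Δ t I q x r y` is
`γ[(I-1) → t][q,x → r,y]` (so `I = 0` represents the lower index `i = -1`). -/
def gam {Q Γ : Type} [Fintype Q] [Fintype Γ] [DecidableEq Q] [DecidableEq Γ]
    (q₀ : Q) (bot : Γ) (Δ : ℕ → Op Q Γ → ℝ) (t I : ℕ) : Q → Γ → Q → Γ → ℝ :=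
  gamTable q₀ bot Δ t t I

/-- `IsPushComp π q x r y` : the operation sequence `π` is a *push computation* from
`(q, x)` to `(r, y)`: applied starting in state `q` from any stack `β·x` with top symbol
`x`, it ends in state `r` with stack `β·x·y` (the original stack unchanged with the single
symbol `y` newly on top), and at every strictly intermediate configuration the stack
properly extends `β·x`. -/
def IsPushComp {Q Γ : Type} (π : List (Op Q Γ)) (q : Q) (x : Γ) (r : Q) (y : Γ) : Prop :=
  ∀ β : List Γ,
    RunFrom (q, x :: β) π (r, y :: x :: β) ∧
    ∀ (pre suf : List (Op Q Γ)) (c : Q × List Γ),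
      π = pre ++ suf → pre ≠ [] → suf ≠ [] → RunFrom (q, x :: β) pre c →
        ∃ γ' : List Γ, γ' ≠ [] ∧ c.2 = γ' ++ x :: β

section Lang

variable {Q Γ : Type}

theorem opStep_det {c c₁ c₂ : Q × List Γ} {o : Op Q Γ}
    (h₁ : OpStep c o c₁) (h₂ : OpStep c o c₂) : c₁ = c₂ := by
  cases h₁ <;> cases h₂ <;> rfl

theorem runFrom_det : ∀ {π : List (Op Q Γ)} {c c₁ c₂ : Q × List Γ},
    RunFrom c π c₁ → RunFrom c π c₂ → c₁ = c₂ := by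
  intro π
  induction π with
  | nil => intro c c₁ c₂ h₁ h₂; cases h₁; cases h₂; rfl
  | cons o π ih =>
    intro c c₁ c₂ h₁ h₂
    cases h₁ with
    | cons hs₁ hr₁ =>
      cases h₂ with
      | cons hs₂ hr₂ =>
        have := opStep_det hs₁ hs₂
        subst this
        exact ih hr₁ hr₂

theorem runFrom_append {π₁ π₂ : List (Op Q Γ)} {c c₂ : Q × List Γ} :
    RunFrom c (π₁ ++ π₂) c₂ ↔ ∃ c₁, RunFrom c π₁ c₁ ∧ RunFrom c₁ π₂ c₂ := by
  induction π₁ generalizing c with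
  | nil =>
    simp only [List.nil_append]
    exact ⟨fun h => ⟨c, RunFrom.nil c, h⟩, fun ⟨c₁, h₁, h₂⟩ => by cases h₁; exact h₂⟩
  | cons o π₁ ih =>
    constructor
    · intro h
      cases h with
      | cons hs hr =>
        obtain ⟨c₁, hr₁, hr₂⟩ := ih.mp hr
        exact ⟨c₁, RunFrom.cons hs hr₁, hr₂⟩
    · rintro ⟨c₁, h₁, h₂⟩
      cases h₁ with
      | cons hs hr => exact RunFrom.cons hs (ih.mpr ⟨c₁, hr, h₂⟩)

theorem runFrom_singleton {o : Op Q Γ} {c c' : Q × List Γ} :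
    RunFrom c [o] c' ↔ OpStep c o c' := by
  constructor
  · intro h; cases h with | cons hs hr => cases hr; exact hs
  · intro h; exact RunFrom.cons h (RunFrom.nil _)

theorem runFrom_nil_iff {c c' : Q × List Γ} : RunFrom c [] c' ↔ c' = c :=
  ⟨fun h => by cases h; rfl, fun h => h ▸ RunFrom.nil c⟩

/-- Inductive characterization of push computations. -/
inductive PC : List (Op Q Γ) → Q → Γ → Q → Γ → Prop
  | push (q : Q) (x : Γ) (r : Q) (y : Γ) : PC [Op.push q x r y] q x r y
  | repl {π : List (Op Q Γ)} {q : Q} {x : Γ} {s : Q} {z : Γ} (r : Q) (y : Γ) :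
      PC π q x s z → PC (π ++ [Op.repl s z r y]) q x r y
  | pop {π₁ π₂ : List (Op Q Γ)} {q : Q} {x : Γ} {u : Q} {y : Γ} {s : Q} {z : Γ} (r : Q) :
      PC π₁ q x u y → PC π₂ u y s z → PC (π₁ ++ π₂ ++ [Op.pop s z r]) q x r y

theorem PC.ne_nil {π : List (Op Q Γ)} {q : Q} {x : Γ} {r : Q} {y : Γ}
    (h : PC π q x r y) : π ≠ [] := by
  cases h <;> simp

end Lang
section Lang2

variable {Q Γ : Type}

theorem PC.isPushComp {π : List (Op Q Γ)} {q : Q} {x : Γ} {r : Q} {y : Γ}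
    (h : PC π q x r y) : IsPushComp π q x r y := by
  induction h with
  | push q x r y =>
    intro β
    refine ⟨runFrom_singleton.mpr (OpStep.push q x r y β), ?_⟩
    intro pre suf c hps hpre hsuf _
    exfalso
    have := congrArg List.length hps
    simp only [List.length_singleton, List.length_append] at this
    have h1 : 0 < pre.length := List.length_pos_iff.mpr hpre
    have h2 : 0 < suf.length := List.length_pos_iff.mpr hsuf
    omega
  | @repl π' q x s z r y hpc ih =>
    intro β
    obtain ⟨hrun, hcond⟩ := ih β
    refine ⟨runFrom_append.mpr ⟨(s, z :: x :: β), hrun,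
      runFrom_singleton.mpr (OpStep.repl s z r y (x :: β))⟩, ?_⟩
    intro pre suf c hps hpre hsuf hrunpre
    rcases List.append_eq_append_iff.mp hps with ⟨a', ha1, ha2⟩ | ⟨c', hc1, hc2⟩
    · -- pre = π' ++ a', [repl] = a' ++ suf
      have ha' : a' = [] := by
        have := congrArg List.length ha2
        simp only [List.length_singleton, List.length_append] at this
        have h2 : 0 < suf.length := List.length_pos_iff.mpr hsuf
        have := List.length_eq_zero_iff.mp (by omega : a'.length = 0)
        exact this
      subst ha'
      rw [List.append_nil] at ha1
      subst ha1
      have : c = (s, z :: x :: β) := runFrom_det hrunpre hrun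
      subst this
      exact ⟨[z], by simp, rfl⟩
    · -- π' = pre ++ c', suf = c' ++ [repl]
      rcases eq_or_ne c' [] with rfl | hc'
      · rw [List.append_nil] at hc1
        subst hc1
        have : c = (s, z :: x :: β) := runFrom_det hrunpre hrun
        subst this
        exact ⟨[z], by simp, rfl⟩
      · exact hcond pre c' c hc1 hpre hc' hrunpre
  | @pop π₁ π₂ q x u y s z r hpc1 hpc2 ih1 ih2 =>
    intro β
    obtain ⟨hrun1, hcond1⟩ := ih1 β
    obtain ⟨hrun2, hcond2⟩ := ih2 (x :: β)
    refine ⟨runFrom_append.mpr ⟨(s, z :: y :: x :: β),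
      runFrom_append.mpr ⟨(u, y :: x :: β), hrun1, hrun2⟩,
      runFrom_singleton.mpr (OpStep.pop s z r (y :: x :: β))⟩, ?_⟩
    intro pre suf c hps hpre hsuf hrunpre
    rcases List.append_eq_append_iff.mp hps with ⟨a', ha1, ha2⟩ | ⟨c', hc1, hc2⟩
    · -- pre = (π₁ ++ π₂) ++ a', [pop] = a' ++ suf
      have ha' : a' = [] := by
        have := congrArg List.length ha2
        simp only [List.length_singleton, List.length_append] at this
        have h2 : 0 < suf.length := List.length_pos_iff.mpr hsuf
        exact List.length_eq_zero_iff.mp (by omega)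
      subst ha'
      rw [List.append_nil] at ha1
      subst ha1
      have : c = (s, z :: y :: x :: β) :=
        runFrom_det hrunpre (runFrom_append.mpr ⟨(u, y :: x :: β), hrun1, hrun2⟩)
      subst this
      exact ⟨[z, y], by simp, rfl⟩
    · -- π₁ ++ π₂ = pre ++ c', suf = c' ++ [pop]
      rcases eq_or_ne c' [] with rfl | hc'
      · rw [List.append_nil] at hc1
        subst hc1
        have : c = (s, z :: y :: x :: β) :=
          runFrom_det hrunpre (runFrom_append.mpr ⟨(u, y :: x :: β), hrun1, hrun2⟩)
        subst this
        exact ⟨[z, y], by simp, rfl⟩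
      · -- pre ++ c' = π₁ ++ π₂, pre nonempty, c' nonempty
        rcases List.append_eq_append_iff.mp hc1 with ⟨a', hb1, hb2⟩ | ⟨d', hd1, hd2⟩
        · -- pre = π₁ ++ a', π₂ = a' ++ c'
          rcases eq_or_ne a' [] with rfl | ha'
          · rw [List.append_nil] at hb1
            subst hb1
            have : c = (u, y :: x :: β) := runFrom_det hrunpre hrun1
            subst this
            exact ⟨[y], by simp, rfl⟩
          · subst hb1
            obtain ⟨cm, hrm, hra⟩ := runFrom_append.mp hrunpre
            have : cm = (u, y :: x :: β) := runFrom_det hrm hrun1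
            subst this
            obtain ⟨γ'', hγ'', hc2'⟩ := hcond2 a' c' c hb2 ha' hc' hra
            exact ⟨γ'' ++ [y], by simp, by rw [hc2']; simp⟩
        · -- π₁ = pre ++ d', c' = d' ++ π₂
          rcases eq_or_ne d' [] with rfl | hd'
          · rw [List.append_nil] at hd1
            subst hd1
            have : c = (u, y :: x :: β) := runFrom_det hrunpre hrun1
            subst this
            exact ⟨[y], by simp, rfl⟩
          · exact hcond1 pre d' c hd1 hpre hd' hrunpre
end Lang2
section Lang3

variable {Q Γ : Type}

theorem run_preserve : ∀ (π : List (Op Q Γ)) (q : Q) (σ₀ τ : List Γ) (d : Q × List Γ),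
    RunFrom (q, σ₀ ++ τ) π d → σ₀ ≠ [] →
    (∀ pre c, pre ≠ [] → pre <+: π → RunFrom (q, σ₀ ++ τ) pre c → τ.length < c.2.length) →
    ∃ δ, δ ≠ [] ∧ d.2 = δ ++ τ := by
  intro π
  induction π with
  | nil =>
    intro q σ₀ τ d hrun hσ₀ _
    cases hrun
    exact ⟨σ₀, hσ₀, rfl⟩
  | cons o π' ih =>
    intro q σ₀ τ d hrun hσ₀ hcond
    cases hrun with
    | @cons _ c₁ _ _ _ hs hr =>
      match σ₀, hσ₀ with
      | h :: σ₀t, _ =>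
        have hstep : OpStep (q, h :: (σ₀t ++ τ)) o c₁ := by simpa using hs
        have hlen : τ.length < c₁.2.length :=
          hcond [o] c₁ (by simp) ⟨π', rfl⟩ (runFrom_singleton.mpr hs)
        cases hstep with
        | push _ _ r' w' =>
          exact ih r' (w' :: h :: σ₀t) τ d (by simpa using hr) (by simp)
            (fun pre c hne hpre hrc => hcond (Op.push q h r' w' :: pre) c (by simp)
              ((List.prefix_cons_inj _).mpr hpre)
              (RunFrom.cons hs (by simpa using hrc)))
        | repl _ _ r' w' =>
          exact ih r' (w' :: σ₀t) τ d (by simpa using hr) (by simp)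
            (fun pre c hne hpre hrc => hcond (Op.repl q h r' w' :: pre) c (by simp)
              ((List.prefix_cons_inj _).mpr hpre)
              (RunFrom.cons hs (by simpa using hrc)))
        | pop _ _ r' =>
          have hσ₀t : σ₀t ≠ [] := by
            intro hnil
            subst hnil
            simp at hlen
          exact ih r' σ₀t τ d (by simpa using hr) hσ₀t
            (fun pre c hne hpre hrc => hcond (Op.pop q h r' :: pre) c (by simp)
              ((List.prefix_cons_inj _).mpr hpre)
              (RunFrom.cons hs (by simpa using hrc)))

end Lang3
section Lang4

variable {Q Γ : Type}

theorem opStep_snd_length {c c' : Q × List Γ} {o : Op Q Γ} (h : OpStep c o c') :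
    c'.2.length ≤ c.2.length + 1 := by
  cases h <;> simp <;> omega

theorem pc_of_run : ∀ (n : ℕ) (π : List (Op Q Γ)) (q : Q) (x : Γ) (r : Q) (y : Γ) (β : List Γ),
    π.length ≤ n →
    RunFrom (q, x :: β) π (r, y :: x :: β) →
    (∀ pre suf c, π = pre ++ suf → pre ≠ [] → suf ≠ [] → RunFrom (q, x :: β) pre c →
      ∃ γ' : List Γ, γ' ≠ [] ∧ c.2 = γ' ++ (x :: β)) →
    PC π q x r y := by
  intro n
  induction n with
  | zero =>
    intro π q x r y β hlen hrun _
    have hπ : π = [] := List.length_eq_zero_iff.mp (Nat.le_zero.mp hlen)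
    subst hπ
    have h2 : ((r, y :: x :: β) : Q × List Γ) = (q, x :: β) := runFrom_det hrun (RunFrom.nil _)
    have := congrArg (fun p => (Prod.snd p).length) h2
    simp at this
  | succ n ih =>
    intro π q x r y β hlen hrun hcond
    rcases List.eq_nil_or_concat π with rfl | ⟨π', o, rfl⟩
    · have h2 : ((r, y :: x :: β) : Q × List Γ) = (q, x :: β) := runFrom_det hrun (RunFrom.nil _)
      have := congrArg (fun p => (Prod.snd p).length) h2
      simp at this
    · simp only [List.concat_eq_append] at hlen hrun hcond ⊢
      have hlen' : π'.length ≤ n := by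
        simp only [List.length_append, List.length_singleton] at hlen; omega
      obtain ⟨cm, hrun', ho⟩ := runFrom_append.mp hrun
      have hostep : OpStep cm o (r, y :: x :: β) := runFrom_singleton.mp ho
      clear ho hrun
      cases hostep with
      | push q₁ _ _ _ =>
        -- cm = (q₁, x :: β), o = Op.push q₁ x r y
        have hπ' : π' = [] := by
          by_contra hne
          obtain ⟨γ', hγ', hc2⟩ := hcond π' [Op.push q₁ x r y] (q₁, x :: β) rfl hne (by simp) hrun'
          have := congrArg List.length hc2
          simp only [List.length_cons, List.length_append] at this
          have := List.length_pos_iff.mpr hγ'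
          omega
        subst hπ'
        have hq : q₁ = q := by
          have h := runFrom_nil_iff.mp hrun'
          exact (Prod.ext_iff.mp h).1
        subst hq
        simpa using PC.push _ x r y
      | repl s z _ _ =>
        -- cm = (s, z :: x :: β), o = Op.repl s z r y
        have hpc' : PC π' q x s z := ih π' q x s z β hlen' hrun'
          (fun pre suf c hps hpre hsuf hrc => hcond pre (suf ++ [Op.repl s z r y]) c
            (by rw [hps, List.append_assoc]) hpre (by simp) hrc)
        exact PC.repl r y hpc'
      | pop s z _ =>
        -- cm = (s, z :: y :: x :: β), o = Op.pop s z r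
        classical
        have hπ'2 : 2 ≤ π'.length := by
          rcases π' with _ | ⟨o₁, π''⟩
          · have h := runFrom_nil_iff.mp hrun'
            have := congrArg (fun p => (Prod.snd p).length) h
            simp at this
            omega
          · rcases π'' with _ | ⟨o₂, π'''⟩
            · have hstep := runFrom_singleton.mp hrun'
              have := opStep_snd_length hstep
              simp at this
            · simp only [List.length_cons]; omega
        set E : ℕ → Prop := fun ℓ => ∃ uw : Q × Γ,
          RunFrom (q, x :: β) (π'.take ℓ) (uw.1, uw.2 :: x :: β) with hEdef
        have hE1 : E 1 := by
          rcases hπ' : π' with _ | ⟨o₁, π''⟩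
          · rw [hπ'] at hπ'2; simp at hπ'2
          · rw [hπ'] at hrun'
            cases hrun' with
            | @cons _ c₁ _ _ _ hs hr =>
              obtain ⟨γ', hγ', hc2⟩ := hcond [o₁] (π'' ++ [Op.pop s z r]) c₁
                (by rw [hπ']; simp) (by simp) (by simp) (runFrom_singleton.mpr hs)
              cases hs with
              | push _ _ r₁ w₁ =>
                exact ⟨(r₁, w₁), by simp [hπ', runFrom_singleton]; exact OpStep.push q x r₁ w₁ β⟩
              | repl _ _ r₁ w₁ =>
                exfalso
                have := congrArg List.length hc2
                simp only [List.length_cons, List.length_append] at this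
                have := List.length_pos_iff.mpr hγ'
                omega
              | pop _ _ r₁ =>
                exfalso
                have := congrArg List.length hc2
                simp only [List.length_cons, List.length_append] at this
                have := List.length_pos_iff.mpr hγ'
                omega
        have hnotend : ¬ E π'.length := by
          rintro ⟨⟨u, w⟩, hru⟩
          rw [List.take_length] at hru
          have h := runFrom_det hru hrun'
          have := congrArg (fun p => (Prod.snd p).length) h
          simp at this
        have hk1 : 1 ≤ Nat.findGreatest E π'.length := Nat.le_findGreatest (by omega) hE1
        have hkE : E (Nat.findGreatest E π'.length) := Nat.findGreatest_spec (m := 1) (by omega) hE1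
        have hkle : Nat.findGreatest E π'.length ≤ π'.length := Nat.findGreatest_le _
        set k := Nat.findGreatest E π'.length with hkdef
        have hklt : k < π'.length := lt_of_le_of_ne hkle (fun h => hnotend (h ▸ hkE))
        have hmax : ∀ ℓ, k < ℓ → ℓ ≤ π'.length → ¬ E ℓ :=
          fun ℓ h1 h2 => Nat.findGreatest_is_greatest h1 h2
        obtain ⟨⟨u, w⟩, hrunk⟩ := hkE
        have hsplit : π'.take k ++ π'.drop k = π' := List.take_append_drop k π'
        have hrun₂ : RunFrom (u, w :: x :: β) (π'.drop k) (s, z :: y :: x :: β) := by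
          obtain ⟨c', h1, h2⟩ := runFrom_append.mp (show RunFrom (q, x :: β) (π'.take k ++ π'.drop k) (s, z :: y :: x :: β) by rw [hsplit]; exact hrun')
          rwa [runFrom_det h1 hrunk] at h2
        have hbig : ∀ pre c, pre ≠ [] → pre <+: π'.drop k → RunFrom (u, w :: x :: β) pre c →
            ∃ δ : List Γ, 2 ≤ δ.length ∧ c.2 = δ ++ (x :: β) := by
          intro pre c hne hpre hrc
          have hrun_start : RunFrom (q, x :: β) (π'.take k ++ pre) c :=
            runFrom_append.mpr ⟨(u, w :: x :: β), hrunk, hrc⟩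
          obtain ⟨sfx, hsfx⟩ := hpre
          rcases eq_or_ne sfx [] with rfl | hsfx_ne
          · rw [List.append_nil] at hsfx
            subst hsfx
            have hcc : c = (s, z :: y :: x :: β) := runFrom_det hrc hrun₂
            subst hcc
            exact ⟨[z, y], by simp, rfl⟩
          · have hπeq : π' = (π'.take k ++ pre) ++ sfx := by
              rw [List.append_assoc, hsfx, hsplit]
            obtain ⟨γ', hγ', hc2⟩ := hcond (π'.take k ++ pre) (sfx ++ [Op.pop s z r]) c
              (by conv_lhs => rw [hπeq]
                  simp [List.append_assoc])
              (by simp [hne]) (by simp) hrun_start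
            refine ⟨γ', ?_, hc2⟩
            by_contra hlt
            push_neg at hlt
            have hγlen : γ'.length = 1 := by
              have := List.length_pos_iff.mpr hγ'; omega
            obtain ⟨w', hγw⟩ := List.length_eq_one_iff.mp hγlen
            subst hγw
            have hprelen : pre.length ≤ π'.length - k := by
              have := congrArg List.length hsfx
              simp only [List.length_append, List.length_drop] at this
              omega
            apply hmax (k + pre.length) (by have := List.length_pos_iff.mpr hne; omega) (by omega)
            have htake : π'.take (k + pre.length) = π'.take k ++ pre := by
              have hlt : (π'.take k).length = k := by rw [List.length_take]; omega
              have h1 : π'.take k ++ (pre ++ sfx) = π' := by rw [hsfx, hsplit]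
              conv_lhs => rw [← h1]
              rw [List.take_append,
                List.take_of_length_le (by rw [hlt]; omega), hlt]
              have h2 : k + pre.length - k = pre.length := by omega
              rw [h2, List.take_left]
            refine ⟨(c.1, w'), ?_⟩
            rw [htake]
            have hc : c = (c.1, w' :: x :: β) := Prod.ext rfl hc2
            exact hc ▸ hrun_start
        have hdropne : π'.drop k ≠ [] := by
          intro h
          have := congrArg List.length h
          simp only [List.length_drop] at this
          simp at this
          omega
        obtain ⟨o₂, π₂', hd⟩ : ∃ o₂ π₂', π'.drop k = o₂ :: π₂' := by
          rcases hvar : π'.drop k with _ | ⟨a, b⟩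
          · exact absurd hvar hdropne
          · exact ⟨a, b, rfl⟩
        rw [hd] at hrun₂ hbig
        cases hrun₂ with
        | @cons _ c₂ _ _ _ hs₂ hr₂ =>
          obtain ⟨δ, hδ2, hc₂2⟩ := hbig [o₂] c₂ (by simp) ⟨π₂', rfl⟩ (runFrom_singleton.mpr hs₂)
          cases hs₂ with
          | push _ _ u₂ v =>
            -- c₂ = (u₂, v :: w :: x :: β), o₂ = Op.push u w u₂ v
            have hw : w = y := by
              obtain ⟨δ', hδ'ne, hδ'⟩ := run_preserve π₂' u₂ [v] (w :: x :: β) (s, z :: y :: x :: β)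
                (by simpa using hr₂) (by simp)
                (fun pre c hne hpre hrc => by
                  obtain ⟨δ'', hδ''2, hc''⟩ := hbig (Op.push u w u₂ v :: pre) c (by simp)
                    ((List.prefix_cons_inj _).mpr hpre)
                    (RunFrom.cons (OpStep.push u w u₂ v (x :: β)) hrc)
                  rw [hc'']
                  simp only [List.length_cons, List.length_append]
                  omega)
              have hl := congrArg List.length hδ'
              simp only [List.length_cons, List.length_append] at hl
              have hδ'1 : δ'.length = 1 := by
                have := List.length_pos_iff.mpr hδ'ne; omega
              obtain ⟨d, hdd⟩ := List.length_eq_one_iff.mp hδ'1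
              subst hdd
              simp only [List.singleton_append, List.cons.injEq] at hδ'
              exact hδ'.2.1.symm
            subst hw
            -- now w = w everywhere
            have hcond₂ : ∀ pre suf c, (Op.push u w u₂ v :: π₂') = pre ++ suf → pre ≠ [] →
                suf ≠ [] → RunFrom (u, w :: x :: β) pre c →
                ∃ γ' : List Γ, γ' ≠ [] ∧ c.2 = γ' ++ (w :: x :: β) := by
              intro pre suf c hps hpre hsuf hrc
              rcases pre with _ | ⟨o₂', pre'⟩
              · exact absurd rfl hpre
              · simp only [List.cons_append, List.cons.injEq] at hps
                obtain ⟨rfl, hps'⟩ := hps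
                cases hrc with
                | @cons _ c₂' _ _ _ hs' hr' =>
                  have hc₂' : c₂' = (u₂, v :: w :: x :: β) :=
                    opStep_det hs' (OpStep.push u w u₂ v (x :: β))
                  subst hc₂'
                  rcases pre' with _ | ⟨o₃, pre''⟩
                  · have hcc : c = (u₂, v :: w :: x :: β) := runFrom_nil_iff.mp hr'
                    subst hcc
                    exact ⟨[v], by simp, rfl⟩
                  · obtain ⟨δ', hδ'ne, hδ'⟩ := run_preserve (o₃ :: pre'') u₂ [v] (w :: x :: β) c
                      (by simpa using hr') (by simp)
                      (fun pre₃ c₃ hne₃ hpre₃ hrc₃ => by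
                        obtain ⟨δ'', hδ''2, hc''⟩ := hbig (Op.push u w u₂ v :: pre₃) c₃ (by simp)
                          ((List.prefix_cons_inj _).mpr (hpre₃.trans ⟨suf, hps'.symm⟩))
                          (RunFrom.cons (OpStep.push u w u₂ v (x :: β)) hrc₃)
                        rw [hc'']
                        simp only [List.length_cons, List.length_append]
                        omega)
                    exact ⟨δ', hδ'ne, hδ'⟩
            have hpc₁ : PC (π'.take k) q x u w := by
              apply ih (π'.take k) q x u w β ?_ hrunk ?_
              · rw [List.length_take]; omega
              · intro pre suf c hps hpre hsuf hrc
                apply hcond pre (suf ++ (π'.drop k ++ [Op.pop s z r])) c ?_ hpre (by simp) hrc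
                conv_lhs => rw [← hsplit]
                rw [hps]
                simp [List.append_assoc]
            have hpc₂ : PC (Op.push u w u₂ v :: π₂') u w s z := by
              apply ih (Op.push u w u₂ v :: π₂') u w s z (x :: β) ?_ ?_ hcond₂
              · have hlend : (π'.drop k).length = π'.length - k := List.length_drop
                rw [hd] at hlend
                simp only [List.length_cons] at hlend ⊢
                omega
              · exact RunFrom.cons (OpStep.push u w u₂ v (x :: β)) hr₂
            have hfin := PC.pop r hpc₁ hpc₂
            have heq : π' = π'.take k ++ (Op.push u w u₂ v :: π₂') := by
              rw [← hd]; exact hsplit.symm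
            rw [heq]
            exact hfin
          | repl _ _ u₂ v =>
            exfalso
            -- c₂ = (u₂, v :: x :: β)
            have := congrArg List.length hc₂2
            simp only [List.length_cons, List.length_append] at this
            omega
          | pop _ _ u₂ =>
            exfalso
            -- c₂ = (u₂, x :: β)
            have := congrArg List.length hc₂2
            simp only [List.length_cons, List.length_append] at this
            omega

end Lang4
section Lang5

variable {Q Γ : Type}

theorem pc_iff_isPushComp {π : List (Op Q Γ)} {q : Q} {x : Γ} {r : Q} {y : Γ} :
    PC π q x r y ↔ IsPushComp π q x r y := by
  constructor
  · exact PC.isPushComp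
  · intro h
    obtain ⟨hrun, hcond⟩ := h []
    exact pc_of_run π.length π q x r y [] le_rfl hrun hcond

private def opEnc : Op Q Γ → (Q × Γ × Q × Γ) ⊕ (Q × Γ × Q × Γ) ⊕ (Q × Γ × Q)
  | .push q x r y => .inl (q, x, r, y)
  | .repl q x r y => .inr (.inl (q, x, r, y))
  | .pop q x r => .inr (.inr (q, x, r))

instance [Finite Q] [Finite Γ] : Finite (Op Q Γ) := by
  apply Finite.of_injective opEnc
  intro a b h
  cases a <;> cases b <;> simp [opEnc] at h <;> simp_all

theorem runWeight_append (Δ : ℕ → Op Q Γ → ℝ) :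
    ∀ (π₁ π₂ : List (Op Q Γ)) (m : ℕ),
      runWeight Δ m (π₁ ++ π₂) = runWeight Δ m π₁ * runWeight Δ (m + π₁.length) π₂ := by
  intro π₁
  induction π₁ with
  | nil => intro π₂ m; simp [runWeight]
  | cons o π₁ ih =>
    intro π₂ m
    simp only [List.cons_append, runWeight, List.length_cons, List.append_eq]
    rw [ih π₂ (m + 1), mul_assoc]
    have harith : m + 1 + π₁.length = m + (π₁.length + 1) := by omega
    rw [harith]

theorem pc_getLast {π : List (Op Q Γ)} {q : Q} {x : Γ} {r : Q} {y : Γ} (h : PC π q x r y) :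
    (π.length = 1 ∧ π = [Op.push q x r y]) ∨
    (∃ s z, π.getLast? = some (Op.repl s z r y)) ∨
    (∃ s z, π.getLast? = some (Op.pop s z r)) := by
  cases h with
  | push => exact Or.inl ⟨rfl, rfl⟩
  | @repl π' q x s z r y h' => exact Or.inr (Or.inl ⟨s, z, by simp⟩)
  | @pop π₁ π₂ q x u y s z r h₁ h₂ =>
    exact Or.inr (Or.inr ⟨s, z, by rw [List.getLast?_concat]⟩)

theorem pc_repl_inv {π' : List (Op Q Γ)} {s : Q} {z : Γ} {r' : Q} {y' : Γ}
    {q : Q} {x : Γ} {r : Q} {y : Γ}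
    (h : PC (π' ++ [Op.repl s z r' y']) q x r y) : r' = r ∧ y' = y ∧ PC π' q x s z := by
  generalize hπ : π' ++ [Op.repl s z r' y'] = π₀ at h
  cases h with
  | push =>
    exfalso
    have := congrArg List.getLast? hπ
    simp at this
  | @repl π'' _ _ s₂ z₂ _ _ h' =>
    obtain ⟨h1, h2⟩ := List.append_inj' hπ.symm rfl
    simp only [List.cons.injEq, Op.repl.injEq, and_true] at h2
    obtain ⟨rfl, rfl, rfl, rfl⟩ := h2
    exact ⟨rfl, rfl, h1 ▸ h'⟩
  | pop =>
    exfalso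
    have := congrArg List.getLast? hπ
    simp only [List.getLast?_concat] at this
    simp at this

theorem pc_pop_inv {π' : List (Op Q Γ)} {s : Q} {z : Γ} {r' : Q}
    {q : Q} {x : Γ} {r : Q} {y : Γ}
    (h : PC (π' ++ [Op.pop s z r']) q x r y) :
    r' = r ∧ ∃ u π₁ π₂, π' = π₁ ++ π₂ ∧ PC π₁ q x u y ∧ PC π₂ u y s z := by
  generalize hπ : π' ++ [Op.pop s z r'] = π₀ at h
  cases h with
  | push =>
    exfalso
    have := congrArg List.getLast? hπ
    simp at this
  | repl =>
    exfalso
    have := congrArg List.getLast? hπ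
    simp only [List.getLast?_concat] at this
    simp at this
  | @pop π₁ π₂ _ _ u _ s₂ z₂ _ h₁ h₂ =>
    obtain ⟨h1, h2⟩ := List.append_inj' hπ.symm rfl
    simp only [List.cons.injEq, Op.pop.injEq, and_true] at h2
    obtain ⟨rfl, rfl, rfl⟩ := h2
    exact ⟨rfl, u, π₁, π₂, h1.symm, h₁, h₂⟩

end Lang5
section Lang6

variable {Q Γ : Type}

/-- The splitting point of a pop-decomposition is unique. -/
theorem pc_split_eq {π₁ π₂ π₁' π₂' : List (Op Q Γ)} {q : Q} {x : Γ} {u u' : Q} {y : Γ}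
    {s' : Q} {z' : Γ}
    (h1 : PC π₁ q x u y) (h2 : PC π₂ u y s' z') (h1' : PC π₁' q x u' y)
    (hne : π₂' ≠ []) (happ : π₁ ++ π₂ = π₁' ++ π₂') (hle : π₁.length ≤ π₁'.length) :
    π₁ = π₁' := by
  obtain ⟨δ, hδ1, hδ2⟩ : ∃ δ, π₁' = π₁ ++ δ ∧ π₂ = δ ++ π₂' := by
    rcases List.append_eq_append_iff.mp happ with ⟨a', ha1, ha2⟩ | ⟨c', hc1, hc2⟩
    · exact ⟨a', ha1, ha2⟩
    · have hc : c' = [] := by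
        have := congrArg List.length hc1
        simp only [List.length_append] at this
        exact List.length_eq_zero_iff.mp (by omega)
      subst hc
      rw [List.append_nil] at hc1
      exact ⟨[], by simp [hc1], by simp [hc2]⟩
  rcases eq_or_ne δ [] with rfl | hδ
  · simp [hδ1]
  exfalso
  obtain ⟨hr1, -⟩ := h1.isPushComp ([] : List Γ)
  obtain ⟨hr1', -⟩ := h1'.isPushComp ([] : List Γ)
  obtain ⟨-, hcond2⟩ := h2.isPushComp ([x] : List Γ)
  rw [hδ1] at hr1'
  obtain ⟨c₀, hc₀1, hc₀2⟩ := runFrom_append.mp hr1'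
  have : c₀ = (u, [y, x]) := runFrom_det hc₀1 hr1
  subst this
  obtain ⟨γ', hγ', hg⟩ := hcond2 δ π₂' (u', [y, x]) hδ2 hδ hne hc₀2
  have := congrArg List.length hg
  simp only [List.length_cons, List.length_append] at this
  have := List.length_pos_iff.mpr hγ'
  omega

theorem pc_split_unique {π₁ π₂ π₁' π₂' : List (Op Q Γ)} {q : Q} {x : Γ} {u u' : Q} {y : Γ}
    {s : Q} {z : Γ} {s' : Q} {z' : Γ}
    (h1 : PC π₁ q x u y) (h2 : PC π₂ u y s z) (h1' : PC π₁' q x u' y) (h2' : PC π₂' u' y s' z')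
    (happ : π₁ ++ π₂ = π₁' ++ π₂') : π₁ = π₁' ∧ π₂ = π₂' ∧ u = u' := by
  have heq : π₁ = π₁' := by
    rcases le_total π₁.length π₁'.length with hle | hle
    · exact pc_split_eq h1 h2 h1' h2'.ne_nil happ hle
    · exact (pc_split_eq h1' h2' h1 h2.ne_nil happ.symm hle).symm
  subst heq
  have heq2 : π₂ = π₂' := by
    have := List.append_inj happ rfl
    exact this.2
  subst heq2
  refine ⟨rfl, rfl, ?_⟩
  obtain ⟨hr1, -⟩ := h1.isPushComp ([] : List Γ)
  obtain ⟨hr1', -⟩ := h1'.isPushComp ([] : List Γ)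
  have := runFrom_det hr1 hr1'
  exact (Prod.ext_iff.mp this).1

variable [Fintype Q] [Fintype Γ] [DecidableEq Q] [DecidableEq Γ]

/-- The finite set of push computations of a given length. -/
noncomputable def pcFinset (n : ℕ) (q : Q) (x : Γ) (r : Q) (y : Γ) : Finset (List (Op Q Γ)) :=
  Set.Finite.toFinset (s := {π : List (Op Q Γ) | π.length = n ∧ PC π q x r y})
    (Set.Finite.subset (List.finite_length_eq _ n) (fun π h => h.1))

theorem mem_pcFinset {n : ℕ} {q : Q} {x : Γ} {r : Q} {y : Γ} {π : List (Op Q Γ)} :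
    π ∈ pcFinset n q x r y ↔ π.length = n ∧ PC π q x r y := by
  simp [pcFinset]

theorem pcFinset_one {q : Q} {x : Γ} {r : Q} {y : Γ} :
    pcFinset 1 q x r y = {[Op.push q x r y]} := by
  ext π
  simp only [mem_pcFinset, Finset.mem_singleton]
  constructor
  · rintro ⟨hlen, hpc⟩
    cases hpc with
    | push => rfl
    | @repl π' _ _ s z _ _ h' =>
      exfalso
      simp only [List.length_append, List.length_singleton] at hlen
      exact h'.ne_nil (List.length_eq_zero_iff.mp (by omega))
    | @pop π₁ π₂ _ _ _ _ _ _ _ h₁ h₂ =>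
      exfalso
      simp only [List.length_append, List.length_singleton] at hlen
      have := List.length_pos_iff.mpr h₁.ne_nil
      have := List.length_pos_iff.mpr h₂.ne_nil
      omega
  · rintro rfl
    exact ⟨rfl, PC.push q x r y⟩

theorem gamTable_of_le (q₀ : Q) (bot : Γ) (Δ : ℕ → Op Q Γ → ℝ) :
    ∀ t t', t' ≤ t → ∀ I (qq : Q) (xx : Γ) (rr : Q) (yy : Γ),
      gamTable q₀ bot Δ t t' I qq xx rr yy = gam q₀ bot Δ t' I qq xx rr yy := by
  intro t
  induction t with
  | zero =>
    intro t' h I qq xx rr yy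
    rw [Nat.le_zero.mp h]
    rfl
  | succ t ih =>
    intro t' h I qq xx rr yy
    rcases eq_or_ne t' (t + 1) with rfl | hne
    · rfl
    · have ht : t' ≤ t := by omega
      show (if t' = t + 1 then _ else gamTable q₀ bot Δ t t' I qq xx rr yy) = _
      rw [if_neg hne]
      exact ih t' ht I qq xx rr yy

theorem gam_of_gt (q₀ : Q) (bot : Γ) (Δ : ℕ → Op Q Γ → ℝ) :
    ∀ t I, t < I → ∀ (qq : Q) (xx : Γ) (rr : Q) (yy : Γ),
      gam q₀ bot Δ t I qq xx rr yy = 0 := by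
  intro t
  induction t with
  | zero =>
    intro I h qq xx rr yy
    simp only [gam, gamTable]
    rw [if_neg]
    rintro ⟨-, hI, -⟩
    omega
  | succ t ih =>
    intro I h qq xx rr yy
    simp only [gam, gamTable]
    rw [if_true]
    have h1 : I ≠ t + 1 := by omega
    rw [if_neg h1]
    have h2 : ∀ (ss : Q) (zz : Γ), gamTable q₀ bot Δ t t I qq xx ss zz = 0 := fun ss zz => by
      rw [gamTable_of_le q₀ bot Δ t t le_rfl]
      exact ih I (by omega) qq xx ss zz
    have h3 : Finset.Ico I t = ∅ := Finset.Ico_eq_empty (by omega)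
    simp [h2, h3]

theorem gam_succ (q₀ : Q) (bot : Γ) (Δ : ℕ → Op Q Γ → ℝ) (t I : ℕ)
    (q : Q) (x : Γ) (r : Q) (y : Γ) :
    gam q₀ bot Δ (t + 1) I q x r y =
      (if I = t + 1 then Δ (t + 1) (Op.push q x r y) else 0)
      + (∑ s : Q, ∑ z : Γ, gam q₀ bot Δ t I q x s z * Δ (t + 1) (Op.repl s z r y))
      + ∑ k ∈ Finset.Ico I t, ∑ u : Q,
          gam q₀ bot Δ k I q x u y *
            (∑ s : Q, ∑ z : Γ, gam q₀ bot Δ t (k + 1) u y s z * Δ (t + 1) (Op.pop s z r)) := by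
  simp only [gam, gamTable]
  rw [if_true]
  refine congrArg₂ (· + ·) rfl ?_
  refine Finset.sum_congr rfl fun k hk => Finset.sum_congr rfl fun u _ => ?_
  rw [gamTable_of_le q₀ bot Δ t k (Finset.mem_Ico.mp hk).2.le]
  rfl

end Lang6
section Lang7

variable {Q Γ : Type} [Fintype Q] [Fintype Γ] [DecidableEq Q] [DecidableEq Γ]

theorem gam_eq_sum (q₀ : Q) (bot : Γ) (Δ : ℕ → Op Q Γ → ℝ) :
    ∀ t i, i < t → ∀ (q : Q) (x : Γ) (r : Q) (y : Γ),
      gam q₀ bot Δ t (i + 1) q x r y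
        = ∑ π ∈ pcFinset (t - i) q x r y, runWeight Δ (i + 1) π := by
  intro t
  induction t using Nat.strong_induction_on with
  | _ t ih =>
    match t with
    | 0 => intro i hi; omega
    | t + 1 =>
      intro i hi q x r y
      rw [gam_succ]
      rcases Nat.lt_succ_iff_lt_or_eq.mp hi with hit | rfl
      · -- i < t
        rw [if_neg (by omega), zero_add]
        classical
        have ihB : ∀ (s : Q) (z : Γ), gam q₀ bot Δ t (i + 1) q x s z
            = ∑ π' ∈ pcFinset (t - i) q x s z, runWeight Δ (i + 1) π' :=
          fun s z => ih t (by omega) i hit q x s z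
        have ihC1 : ∀ k, i < k → k < t → ∀ u, gam q₀ bot Δ k (i + 1) q x u y
            = ∑ π₁ ∈ pcFinset (k - i) q x u y, runWeight Δ (i + 1) π₁ :=
          fun k h1 _ u => ih k (by omega) i h1 q x u y
        have ihC2 : ∀ k, i < k → k < t → ∀ u (s : Q) (z : Γ), gam q₀ bot Δ t (k + 1) u y s z
            = ∑ π₂ ∈ pcFinset (t - k) u y s z, runWeight Δ (k + 1) π₂ :=
          fun k _ h2 u s z => ih t (by omega) k h2 u y s z
        set P1 : List (Op Q Γ) → Prop :=
          fun π => ∃ s z, π.getLast? = some (Op.repl s z r y) with hP1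
        -- split target sum
        rw [← Finset.sum_filter_add_sum_filter_not (pcFinset (t + 1 - i) q x r y) P1]
        congr 1
        -- ==================== repl part ====================
        · have hSReq : (pcFinset (t + 1 - i) q x r y).filter P1
              = Finset.biUnion Finset.univ (fun sz : Q × Γ =>
                  (pcFinset (t - i) q x sz.1 sz.2).image (· ++ [Op.repl sz.1 sz.2 r y])) := by
            ext π
            simp only [Finset.mem_filter, mem_pcFinset, Finset.mem_biUnion, Finset.mem_univ,
              Finset.mem_image, true_and]
            constructor
            · rintro ⟨⟨hlen, hpc⟩, s', z', hlast⟩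
              cases hpc with
              | push => simp at hlast
              | @repl π'' _ _ s₂ z₂ _ _ h' =>
                rw [List.getLast?_concat] at hlast
                simp only [Option.some.injEq, Op.repl.injEq] at hlast
                obtain ⟨rfl, rfl, -, -⟩ := hlast
                refine ⟨(s₂, z₂), π'', ?_, rfl⟩
                simp only [mem_pcFinset]
                refine ⟨?_, h'⟩
                simp only [List.length_append, List.length_singleton] at hlen
                omega
              | pop =>
                rw [List.getLast?_concat] at hlast
                simp at hlast
            · rintro ⟨⟨s', z'⟩, π', hmem, rfl⟩
              simp only [mem_pcFinset] at hmem
              obtain ⟨hlen', hpc'⟩ := hmem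
              refine ⟨⟨?_, PC.repl r y hpc'⟩, s', z', by rw [List.getLast?_concat]⟩
              simp only [List.length_append, List.length_singleton]
              omega
          have hdisjR : (↑(Finset.univ : Finset (Q × Γ)) : Set (Q × Γ)).PairwiseDisjoint
              (fun sz : Q × Γ =>
                (pcFinset (t - i) q x sz.1 sz.2).image (· ++ [Op.repl sz.1 sz.2 r y])) := by
            intro a _ b _ hab
            simp only [Function.onFun]
            rw [Finset.disjoint_left]
            rintro π hπa hπb
            simp only [Finset.mem_image] at hπa hπb
            obtain ⟨π₁, -, h1⟩ := hπa
            obtain ⟨π₂, -, h2⟩ := hπb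
            apply hab
            have h3 := h1.trans h2.symm
            obtain ⟨-, h4⟩ := List.append_inj' h3 rfl
            simp only [List.cons.injEq, Op.repl.injEq, eq_self_iff_true, and_true] at h4
            exact Prod.ext h4.1 h4.2
          rw [hSReq, Finset.sum_biUnion hdisjR, Fintype.sum_prod_type]
          refine Finset.sum_congr rfl fun s _ => Finset.sum_congr rfl fun z _ => ?_
          rw [ihB s z, Finset.sum_mul]
          rw [Finset.sum_image (fun p hp p' hp' he => by
            exact (List.append_inj' he rfl).1)]
          refine Finset.sum_congr rfl fun π' hπ' => ?_
          rw [mem_pcFinset] at hπ'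
          rw [runWeight_append, hπ'.1]
          have harith : i + 1 + (t - i) = t + 1 := by omega
          rw [harith]
          simp [runWeight]
        -- ==================== pop part ====================
        · have hSPeq : (pcFinset (t + 1 - i) q x r y).filter (fun π => ¬ P1 π)
              = Finset.biUnion ((Finset.Ico (i + 1) t) ×ˢ (Finset.univ : Finset (Q × Q × Γ)))
                  (fun kp : ℕ × (Q × Q × Γ) =>
                    ((pcFinset (kp.1 - i) q x kp.2.1 y ×ˢ
                      pcFinset (t - kp.1) kp.2.1 y kp.2.2.1 kp.2.2.2).image
                        (fun p : List (Op Q Γ) × List (Op Q Γ) =>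
                          p.1 ++ p.2 ++ [Op.pop kp.2.2.1 kp.2.2.2 r]))) := by
            ext π
            simp only [Finset.mem_filter, mem_pcFinset, Finset.mem_biUnion, Finset.mem_product,
              Finset.mem_image, Finset.mem_univ, Finset.mem_Ico, and_true]
            constructor
            · rintro ⟨⟨hlen, hpc⟩, hnp⟩
              cases hpc with
              | push =>
                exfalso
                simp only [List.length_singleton] at hlen
                omega
              | @repl π'' _ _ s₂ z₂ _ _ h' =>
                exact absurd ⟨s₂, z₂, by rw [List.getLast?_concat]⟩ hnp
              | @pop π₁ π₂ _ _ u _ s z _ h₁ h₂ =>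
                have hl1 := List.length_pos_iff.mpr h₁.ne_nil
                have hl2 := List.length_pos_iff.mpr h₂.ne_nil
                simp only [List.length_append, List.length_singleton] at hlen
                refine ⟨(i + π₁.length, (u, s, z)), ⟨by omega, by omega⟩,
                  (π₁, π₂), ?_, rfl⟩
                simp only [Finset.mem_product, mem_pcFinset]
                exact ⟨⟨by omega, h₁⟩, ⟨by omega, h₂⟩⟩
            · rintro ⟨⟨k, u, s, z⟩, ⟨hk1, hk2⟩, ⟨π₁, π₂⟩, hmem, rfl⟩
              simp only [Finset.mem_product, mem_pcFinset] at hmem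
              obtain ⟨⟨hl1, hp1⟩, hl2, hp2⟩ := hmem
              have hn1 := List.length_pos_iff.mpr hp1.ne_nil
              have hn2 := List.length_pos_iff.mpr hp2.ne_nil
              refine ⟨⟨?_, PC.pop r hp1 hp2⟩, ?_⟩
              · simp only [List.length_append, List.length_singleton]
                omega
              · rintro ⟨s', z', hlast⟩
                rw [List.getLast?_concat] at hlast
                simp at hlast
          have hdisjP : (↑((Finset.Ico (i + 1) t) ×ˢ
              (Finset.univ : Finset (Q × Q × Γ))) : Set (ℕ × Q × Q × Γ)).PairwiseDisjoint
              (fun kp : ℕ × (Q × Q × Γ) =>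
                ((pcFinset (kp.1 - i) q x kp.2.1 y ×ˢ
                  pcFinset (t - kp.1) kp.2.1 y kp.2.2.1 kp.2.2.2).image
                    (fun p : List (Op Q Γ) × List (Op Q Γ) =>
                      p.1 ++ p.2 ++ [Op.pop kp.2.2.1 kp.2.2.2 r]))) := by
            rintro ⟨k, u, s, z⟩ ha ⟨k', u', s', z'⟩ hb hab
            simp only [Function.onFun]
            rw [Finset.disjoint_left]
            rintro π hπa hπb
            simp only [Finset.mem_image, Finset.mem_product, mem_pcFinset] at hπa hπb
            obtain ⟨⟨π₁, π₂⟩, ⟨⟨hl1, hp1⟩, hl2, hp2⟩, he1⟩ := hπa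
            obtain ⟨⟨π₁', π₂'⟩, ⟨⟨hl1', hp1'⟩, hl2', hp2'⟩, he2⟩ := hπb
            simp only [Finset.coe_product, Finset.mem_coe, Finset.mem_Ico] at ha hb
            apply hab
            have h3 := he1.trans he2.symm
            obtain ⟨h4, h5⟩ := List.append_inj' h3 rfl
            simp only [List.cons.injEq, Op.pop.injEq, eq_self_iff_true, and_true] at h5
            obtain ⟨rfl, rfl⟩ := h5
            obtain ⟨he, -, hu⟩ := pc_split_unique hp1 hp2 hp1' hp2' h4
            have hk : k = k' := by
              have := he ▸ hl1
              rw [hl1'] at this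
              have hka : k ∈ Finset.Ico (i + 1) t := by exact_mod_cast ha.1
              have hkb : k' ∈ Finset.Ico (i + 1) t := by exact_mod_cast hb.1
              rw [Finset.mem_Ico] at hka hkb
              omega
            subst hk
            subst hu
            rfl
          rw [hSPeq, Finset.sum_biUnion hdisjP, Finset.sum_product]
          refine Finset.sum_congr rfl fun k hk => ?_
          obtain ⟨hk1, hk2⟩ := Finset.mem_Ico.mp hk
          rw [Fintype.sum_prod_type]
          refine Finset.sum_congr rfl fun u _ => ?_
          rw [ihC1 k (by omega) hk2 u, Fintype.sum_prod_type, Finset.mul_sum]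
          refine Finset.sum_congr rfl fun s _ => ?_
          rw [Finset.mul_sum]
          refine Finset.sum_congr rfl fun z _ => ?_
          rw [ihC2 k (by omega) hk2 u s z]
          rw [Finset.sum_image (fun p hp p' hp' he => by
            simp only [Finset.mem_coe, Finset.mem_product, mem_pcFinset] at hp hp'
            obtain ⟨h4, -⟩ := List.append_inj' he rfl
            obtain ⟨h5, h6⟩ := List.append_inj h4 (by rw [hp.1.1, hp'.1.1])
            exact Prod.ext h5 h6)]
          rw [Finset.sum_product]
          rw [Finset.sum_mul]
          refine Finset.sum_congr rfl fun π₁ hπ₁ => ?_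
          rw [Finset.sum_mul, Finset.mul_sum]
          refine Finset.sum_congr rfl fun π₂ hπ₂ => ?_
          dsimp only
          rw [mem_pcFinset] at hπ₁ hπ₂
          have ha1 : i + 1 + (k - i) = k + 1 := by omega
          have ha2 : i + 1 + ((k - i) + (t - k)) = t + 1 := by omega
          rw [runWeight_append, runWeight_append, List.length_append, hπ₁.1, hπ₂.1, ha1, ha2]
          simp [runWeight]
          ring
      · -- i = t
        rw [if_pos rfl]
        have hB : ∀ (s : Q) (z : Γ), gam q₀ bot Δ i (i + 1) q x s z = 0 :=
          fun s z => gam_of_gt q₀ bot Δ i (i + 1) (by omega) q x s z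
        have hIco : Finset.Ico (i + 1) i = ∅ := Finset.Ico_eq_empty (by omega)
        have hsub : i + 1 - i = 1 := by omega
        rw [hsub, pcFinset_one, Finset.sum_singleton]
        simp [hB, hIco, runWeight]

end Lang7

/-- **Correctness of the inner weights of Lang's algorithm.**  For all `0 ≤ i < t` and all
states `q, r` and stack symbols `x, y`, the inner weight `γ[i→t][q,x→r,y]` equals the total
weight of all push computations over timesteps `i+1, …, t` from `(i, q, x)` to `(t, r, y)`
(each such computation being a sequence of `t - i` operations, weighted by the product of the
weights of its operations at timesteps `i+1, …, t`). -/
theorem gam_correct {Q Γ : Type} [Fintype Q] [Fintype Γ] [DecidableEq Q] [DecidableEq Γ]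
    (q₀ : Q) (bot : Γ) (Δ : ℕ → Op Q Γ → ℝ) (hΔ : ∀ k o, 0 ≤ Δ k o)
    (i t : ℕ) (hit : i < t) (q : Q) (x : Γ) (r : Q) (y : Γ) :
    gam q₀ bot Δ t (i + 1) q x r y =
      ∑ᶠ π ∈ {π : List (Op Q Γ) | π.length = t - i ∧ IsPushComp π q x r y},
        runWeight Δ (i + 1) π := by
  have hset : {π : List (Op Q Γ) | π.length = t - i ∧ IsPushComp π q x r y}
      = ↑(pcFinset (t - i) q x r y) := by
    ext π
    simp only [Set.mem_setOf_eq, Finset.mem_coe, mem_pcFinset]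
    exact and_congr_right fun _ => pc_iff_isPushComp.symm
  rw [hset, finsum_mem_coe_finset]
  exact gam_eq_sum q₀ bot Δ t i hit q x r y
end

section
/- Under the time-varying weighted restricted PDA semantics, the forward weights α defined from the inner weights γ are correct: for all t ≥ 0 and all r ∈ Q, y ∈ Γ, α[t][r,y] equals the total weight Σ ψ(π) over all runs π of length t starting from the initial configuration (q₀, ⊥) and ending in state r with a nonempty stack whose top symbol is y. Consequently, whenever the total Σ_{r',y'} α[t][r',y'] is positive, the normalized quantity α[t][r,y]/Σ_{r',y'} α[t][r',y'] equals the fraction of total run weight carried by runs of length t ending in state r with top stack symbol y (the marginal distribution over states and top stack symbols). -/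
/-- Table of the forward weights `α`, with indices shifted by one: `alTable q₀ bot Δ t J r y`
equals (for `J ≤ t`) the forward weight `α[J-1][r,y]` (so `J = 0` represents `α[-1]`).
It is defined by `α[-1][r,y] = 1` if `(r,y) = (q₀,⊥)` and `0` otherwise, and
`α[t][r,y] = Σ_{i=-1}^{t-1} Σ_{q,x} α[i][q,x]·γ[i→t][q,x→r,y]` for `t ≥ 0`. -/
def alTable {Q Γ : Type} [Fintype Q] [Fintype Γ] [DecidableEq Q] [DecidableEq Γ]
    (q₀ : Q) (bot : Γ) (Δ : ℕ → Op Q Γ → ℝ) : ℕ → ℕ → Q → Γ → ℝ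
  | 0 => fun J r y => if J = 0 ∧ r = q₀ ∧ y = bot then 1 else 0
  | t + 1 => fun J r y =>
      if J = t + 1 then
        ∑ Jp ∈ Finset.range (t + 1), ∑ q : Q, ∑ x : Γ,
          alTable q₀ bot Δ t Jp q x * gam q₀ bot Δ t Jp q x r y
      else alTable q₀ bot Δ t J r y

/-- The forward weights `α` with shifted index: `alph q₀ bot Δ J r y` is `α[J-1][r,y]`
(so `J = 0` represents `α[-1]` and `J = t+1` represents `α[t]`). -/
def alph {Q Γ : Type} [Fintype Q] [Fintype Γ] [DecidableEq Q] [DecidableEq Γ]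
    (q₀ : Q) (bot : Γ) (Δ : ℕ → Op Q Γ → ℝ) (J : ℕ) : Q → Γ → ℝ :=
  alTable q₀ bot Δ J J


set_option linter.unusedSectionVars false

namespace LangAux

open Finset

variable {Q Γ : Type} [Fintype Q] [Fintype Γ] [DecidableEq Q] [DecidableEq Γ]

instance : Fintype (Op Q Γ) :=
  Fintype.ofSurjective
    (fun p : (Q × Γ × Q × Γ) ⊕ (Q × Γ × Q × Γ) ⊕ (Q × Γ × Q) =>
      match p with
      | .inl (q, x, r, y) => Op.push q x r y
      | .inr (.inl (q, x, r, y)) => Op.repl q x r y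
      | .inr (.inr (q, x, r)) => Op.pop q x r)
    (by
      rintro (⟨q, x, r, y⟩ | ⟨q, x, r, y⟩ | ⟨q, x, r⟩)
      · exact ⟨.inl (q, x, r, y), rfl⟩
      · exact ⟨.inr (.inl (q, x, r, y)), rfl⟩
      · exact ⟨.inr (.inr (q, x, r)), rfl⟩)

/-- Functional small-step semantics. -/
def stepFn : Q × List Γ → Op Q Γ → Option (Q × List Γ)
  | (q, x :: β), Op.push q' x' r y =>
      if q = q' ∧ x = x' then some (r, y :: x :: β) else none
  | (q, x :: β), Op.repl q' x' r y =>
      if q = q' ∧ x = x' then some (r, y :: β) else none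
  | (q, x :: β), Op.pop q' x' r =>
      if q = q' ∧ x = x' then some (r, β) else none
  | (_, []), _ => none

/-- Functional run semantics. -/
def runFn : Q × List Γ → List (Op Q Γ) → Option (Q × List Γ)
  | c, [] => some c
  | c, o :: π => (stepFn c o).bind (fun c' => runFn c' π)

lemma stepFn_eq_some_iff {c c' : Q × List Γ} {o : Op Q Γ} :
    stepFn c o = some c' ↔ OpStep c o c' := by
  constructor
  · intro h
    obtain ⟨q, st⟩ := c
    cases st with
    | nil => cases o <;> simp [stepFn] at h
    | cons x β =>
      cases o with
      | push q' x' r y =>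
        simp only [stepFn] at h
        split_ifs at h with hc
        obtain ⟨rfl, rfl⟩ := hc
        cases h
        exact OpStep.push q x _ _ β
      | repl q' x' r y =>
        simp only [stepFn] at h
        split_ifs at h with hc
        obtain ⟨rfl, rfl⟩ := hc
        cases h
        exact OpStep.repl q x _ _ β
      | pop q' x' r =>
        simp only [stepFn] at h
        split_ifs at h with hc
        obtain ⟨rfl, rfl⟩ := hc
        cases h
        exact OpStep.pop q x _ β
  · intro h
    cases h <;> simp [stepFn]

lemma runFn_eq_some_iff {c c' : Q × List Γ} {π : List (Op Q Γ)} :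
    runFn c π = some c' ↔ RunFrom c π c' := by
  induction π generalizing c with
  | nil =>
    simp only [runFn, Option.some_inj]
    constructor
    · rintro rfl; exact RunFrom.nil c
    · rintro h; cases h; rfl
  | cons o π ih =>
    simp only [runFn]
    constructor
    · intro h
      obtain ⟨c₁, hc₁, hrest⟩ := Option.bind_eq_some_iff.mp h
      exact RunFrom.cons (stepFn_eq_some_iff.mp hc₁) (ih.mp hrest)
    · rintro (_ | ⟨hstep, hrun⟩)
      rw [stepFn_eq_some_iff.mpr hstep]
      exact ih.mpr hrun

lemma runFn_append (c : Q × List Γ) (π₁ π₂ : List (Op Q Γ)) :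
    runFn c (π₁ ++ π₂) = (runFn c π₁).bind (fun c' => runFn c' π₂) := by
  induction π₁ generalizing c with
  | nil => simp [runFn]
  | cons o π₁ ih =>
    simp only [List.cons_append, runFn]
    cases stepFn c o with
    | none => simp
    | some c₁ => simp [ih]

/-- Lifting a run over a deeper stack. -/
lemma runFn_lift {q r : Q} {σ τ : List Γ} {π : List (Op Q Γ)} (β : List Γ)
    (h : runFn (q, σ) π = some (r, τ)) :
    runFn (q, σ ++ β) π = some (r, τ ++ β) := by
  induction π generalizing q σ with
  | nil =>
    simp only [runFn, Option.some_inj, Prod.mk.injEq] at h ⊢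
    obtain ⟨rfl, rfl⟩ := h
    exact ⟨rfl, rfl⟩
  | cons o π ih =>
    simp only [runFn] at h ⊢
    obtain ⟨c₁, hc₁, hrest⟩ := Option.bind_eq_some_iff.mp h
    have hs := stepFn_eq_some_iff.mp hc₁
    cases hs with
    | push q x r' y β' =>
      have hst : stepFn (q, (x :: β') ++ β) (Op.push q x r' y)
          = some (r', y :: x :: (β' ++ β)) := by simp [stepFn]
      rw [hst]
      exact ih hrest
    | repl q x r' y β' =>
      have hst : stepFn (q, (x :: β') ++ β) (Op.repl q x r' y)
          = some (r', y :: (β' ++ β)) := by simp [stepFn]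
      rw [hst]
      exact ih hrest
    | pop q x r' β' =>
      have hst : stepFn (q, (x :: β') ++ β) (Op.pop q x r')
          = some (r', β' ++ β) := by simp [stepFn]
      rw [hst]
      exact ih hrest

/-- Stack depth after `k` steps of a run (junk value 0 if the run fails). -/
noncomputable def dep (c : Q × List Γ) (π : List (Op Q Γ)) (k : ℕ) : ℕ :=
  ((runFn c (π.take k)).map (fun c' => c'.2.length)).getD 0

lemma dep_zero (c : Q × List Γ) (π : List (Op Q Γ)) : dep c π 0 = c.2.length := by
  simp [dep, runFn]

lemma dep_of_runFn {c c' : Q × List Γ} {π : List (Op Q Γ)} {k : ℕ}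
    (h : runFn c (π.take k) = some c') : dep c π k = c'.2.length := by
  simp [dep, h]


lemma runFn_take {c c' : Q × List Γ} {π : List (Op Q Γ)} (h : runFn c π = some c') (k : ℕ) :
    ∃ c₁, runFn c (π.take k) = some c₁ := by
  have h2 := runFn_append c (π.take k) (π.drop k)
  rw [List.take_append_drop, h] at h2
  obtain ⟨c₁, h₁, -⟩ := Option.bind_eq_some_iff.mp h2.symm
  exact ⟨c₁, h₁⟩

lemma dep_prefix (c : Q × List Γ) {π₁ : List (Op Q Γ)} (π₂ : List (Op Q Γ)) {k : ℕ}
    (hk : k ≤ π₁.length) : dep c (π₁ ++ π₂) k = dep c π₁ k := by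
  rw [dep, dep, List.take_append_of_le_length hk]

lemma dep_append_right {c c₁ : Q × List Γ} {π₁ : List (Op Q Γ)} (π₂ : List (Op Q Γ))
    (h : runFn c π₁ = some c₁) (k : ℕ) :
    dep c (π₁ ++ π₂) (π₁.length + k) = dep c₁ π₂ k := by
  have ht : (π₁ ++ π₂).take (π₁.length + k) = π₁ ++ π₂.take k := by
    rw [List.take_length_add_append]
  rw [dep, dep, ht, runFn_append, h, Option.bind_some]

lemma dep_last {c c' : Q × List Γ} {π : List (Op Q Γ)} (h : runFn c π = some c') :
    dep c π π.length = c'.2.length := by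
  rw [dep, List.take_length, h]; rfl

lemma dep_pos {c c' : Q × List Γ} {π : List (Op Q Γ)} (h : runFn c π = some c')
    {k : ℕ} (hk : k < π.length) : 1 ≤ dep c π k := by
  obtain ⟨c₁, h₁⟩ := runFn_take h k
  rw [dep_of_runFn h₁]
  rcases hc : c₁.2 with _ | ⟨a, st⟩
  · exfalso
    have hd : π.drop k ≠ [] := by
      intro hnil
      have := (List.length_drop (i := k) (l := π)) ▸ congrArg List.length hnil
      simp at this
      omega
    obtain ⟨o, rest, ho⟩ := List.exists_cons_of_ne_nil hd
    have h2 := runFn_append c (π.take k) (π.drop k)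
    rw [List.take_append_drop, h, h₁, Option.bind_some, ho] at h2
    obtain ⟨q₁, st₁⟩ := c₁
    simp only at hc
    subst hc
    cases o <;> simp [runFn, stepFn] at h2
  · simp [hc]

lemma dep_cons {c c₁ : Q × List Γ} {o : Op Q Γ} (π : List (Op Q Γ))
    (hstep : stepFn c o = some c₁) (k : ℕ) :
    dep c (o :: π) (k + 1) = dep c₁ π k := by
  rw [dep, dep, List.take_succ_cons]
  simp [runFn, hstep]

lemma dep_lift {q : Q} {σ : List Γ} {c' : Q × List Γ} {π : List (Op Q Γ)}
    (h : runFn (q, σ) π = some c') (β : List Γ) (k : ℕ) :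
    dep (q, σ ++ β) π k = dep (q, σ) π k + β.length := by
  obtain ⟨⟨r₁, τ₁⟩, h₁⟩ := runFn_take h k
  rw [dep_of_runFn h₁, dep_of_runFn (runFn_lift β h₁)]
  simp

/-- Un-lifting: a run that stays strictly above the suffix `β` factors through the shallow
stack. -/
lemma runFn_unlift {π : List (Op Q Γ)} {q : Q} {a : Γ} {σ β : List Γ} {c : Q × List Γ}
    (h : runFn (q, (a :: σ) ++ β) π = some c)
    (hdep : ∀ k, k < π.length → β.length + 1 ≤ dep (q, (a :: σ) ++ β) π k) :
    ∃ τ, runFn (q, a :: σ) π = some (c.1, τ) ∧ c.2 = τ ++ β := by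
  induction π generalizing q a σ c with
  | nil =>
    simp only [runFn, Option.some_inj] at h
    subst h
    exact ⟨a :: σ, rfl, rfl⟩
  | cons o π ih =>
    simp only [List.cons_append] at h hdep
    simp only [runFn] at h
    obtain ⟨c₁, hc₁, hrest⟩ := Option.bind_eq_some_iff.mp h
    have hs := stepFn_eq_some_iff.mp hc₁
    have hdep' : ∀ k, k < π.length → β.length + 1 ≤ dep c₁ π k := by
      intro k hk
      have := hdep (k + 1) (by simpa using Nat.succ_lt_succ hk)
      rwa [show (a :: (σ ++ β)) = (a :: σ) ++ β from rfl,
        dep_cons π (by simpa using hc₁) k] at this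
    cases hs with
    | push q x r' y β' =>
      -- here x = a, β' = σ ++ β, c₁ = (r', y :: a :: (σ ++ β))
      have hc₁' : runFn (r', (y :: a :: σ) ++ β) π = some c := by simpa using hrest
      obtain ⟨τ, hτ, hcτ⟩ := ih hc₁' (by
        intro k hk
        have := hdep' k hk
        simpa using this)
      refine ⟨τ, ?_, hcτ⟩
      simpa [runFn, stepFn] using hτ
    | repl q x r' y β' =>
      have hc₁' : runFn (r', (y :: σ) ++ β) π = some c := by simpa using hrest
      obtain ⟨τ, hτ, hcτ⟩ := ih hc₁' (by
        intro k hk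
        have := hdep' k hk
        simpa using this)
      refine ⟨τ, ?_, hcτ⟩
      simpa [runFn, stepFn] using hτ
    | pop q x r' β' =>
      -- c₁ = (r', σ ++ β)
      cases π with
      | nil =>
        simp only [runFn, Option.some_inj] at hrest
        subst hrest
        exact ⟨σ, by simp [runFn, stepFn], rfl⟩
      | cons o₂ π₂ =>
        have hσ : σ ≠ [] := by
          intro hnil
          have := hdep' 0 (by simp)
          rw [dep_zero] at this
          subst hnil
          simp at this
        obtain ⟨b, σ', rfl⟩ := List.exists_cons_of_ne_nil hσ
        have hc₁' : runFn (r', (b :: σ') ++ β) (o₂ :: π₂) = some c := by simpa using hrest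
        obtain ⟨τ, hτ, hcτ⟩ := ih hc₁' (by
          intro k hk
          have := hdep' k hk
          simpa using this)
        refine ⟨τ, ?_, hcτ⟩
        simpa [runFn, stepFn] using hτ

/-- At an index where the depth strictly increases, the operation is a push. -/
lemma push_boundary {c c' : Q × List Γ} {π : List (Op Q Γ)} (h : runFn c π = some c')
    {j : ℕ} (hj : j < π.length) (hlt : dep c π j < dep c π (j + 1)) :
    ∃ q x β u w, runFn c (π.take j) = some (q, x :: β) ∧
      runFn c (π.take (j + 1)) = some (u, w :: x :: β) ∧
      π.take (j + 1) = π.take j ++ [Op.push q x u w] := by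
  obtain ⟨cj, hcj⟩ := runFn_take h j
  have hdropne : π.drop j ≠ [] := by
    intro hnil
    have := (List.length_drop (i := j) (l := π)) ▸ congrArg List.length hnil
    simp at this
    omega
  obtain ⟨o, rest, ho⟩ := List.exists_cons_of_ne_nil hdropne
  have htake : π.take (j + 1) = π.take j ++ [o] := by
    rw [show j + 1 = j + 1 from rfl, List.take_add, ho]
    rfl
  have h2 := runFn_append c (π.take j) (π.drop j)
  rw [List.take_append_drop, h, hcj, Option.bind_some, ho] at h2
  simp only [runFn] at h2
  obtain ⟨cj1, hstep, -⟩ := Option.bind_eq_some_iff.mp h2.symm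
  have htakerun : runFn c (π.take (j + 1)) = some cj1 := by
    rw [htake, runFn_append, hcj, Option.bind_some]
    simp [runFn, hstep]
  have hdj : dep c π j = cj.2.length := dep_of_runFn hcj
  have hdj1 : dep c π (j + 1) = cj1.2.length := dep_of_runFn htakerun
  have hs := stepFn_eq_some_iff.mp hstep
  cases hs with
  | push q x u w β =>
    exact ⟨q, x, β, u, w, hcj, htakerun, htake⟩
  | repl q x r' y β =>
    exfalso
    rw [hdj, hdj1] at hlt
    simp only [List.length_cons] at hlt
    omega
  | pop q x r' β =>
    exfalso
    rw [hdj, hdj1] at hlt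
    simp only [List.length_cons] at hlt
    omega


/-- All lists of operations of a given length. -/
def allLists : ℕ → Finset (List (Op Q Γ))
  | 0 => {[]}
  | n + 1 => Finset.univ.biUnion fun o : Op Q Γ => (allLists n).image (o :: ·)

lemma mem_allLists {n : ℕ} {π : List (Op Q Γ)} : π ∈ allLists n ↔ π.length = n := by
  induction n generalizing π with
  | zero => simp [allLists, List.length_eq_zero_iff]
  | succ n ih =>
    simp only [allLists, Finset.mem_biUnion, Finset.mem_univ, true_and, Finset.mem_image]
    constructor
    · rintro ⟨o, π', hπ', rfl⟩
      simp [ih.mp hπ']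
    · intro h
      cases π with
      | nil => simp at h
      | cons o π' =>
        exact ⟨o, π', ih.mpr (by simpa using h), rfl⟩

/-- Runs from `(u, [w])` ending in configuration exactly `(r, [y])`. -/
def Dset (n : ℕ) (u : Q) (w : Γ) (r : Q) (y : Γ) : Finset (List (Op Q Γ)) :=
  (allLists n).filter fun π => runFn (u, [w]) π = some (r, [y])

lemma mem_Dset {n : ℕ} {u r : Q} {w y : Γ} {π : List (Op Q Γ)} :
    π ∈ Dset n u w r y ↔ π.length = n ∧ runFn (u, [w]) π = some (r, [y]) := by
  simp [Dset, mem_allLists]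

lemma runWeight_append (Δ : ℕ → Op Q Γ → ℝ) (k : ℕ) (π₁ π₂ : List (Op Q Γ)) :
    runWeight Δ k (π₁ ++ π₂) = runWeight Δ k π₁ * runWeight Δ (k + π₁.length) π₂ := by
  induction π₁ generalizing k with
  | nil => simp [runWeight]
  | cons o π₁ ih =>
    simp only [List.cons_append, runWeight, List.length_cons, List.append_eq]
    rw [ih (k + 1), show k + 1 + π₁.length = k + (π₁.length + 1) by omega]
    ring

/-- Total weight of runs from `(u,[w])` of length `n`, starting at timestep `k`, ending in
configuration exactly `(r, [y])`. -/
noncomputable def Bw (Δ : ℕ → Op Q Γ → ℝ) (k n : ℕ) (u : Q) (w : Γ) (r : Q) (y : Γ) : ℝ :=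
  ∑ π ∈ Dset n u w r y, runWeight Δ k π

lemma Bw_zero (Δ : ℕ → Op Q Γ → ℝ) (k : ℕ) (u r : Q) (w y : Γ) :
    Bw Δ k 0 u w r y = if u = r ∧ w = y then 1 else 0 := by
  rw [Bw]
  have : Dset 0 u w r y = if u = r ∧ w = y then {([] : List (Op Q Γ))} else ∅ := by
    split_ifs with hc
    · obtain ⟨rfl, rfl⟩ := hc
      ext π
      simp [mem_Dset, List.length_eq_zero_iff, runFn]
      rintro rfl
      simp [runFn]
    · ext π
      simp only [mem_Dset, List.length_eq_zero_iff, Finset.notMem_empty, iff_false, not_and]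
      rintro rfl h
      simp only [runFn, Option.some_inj, Prod.mk.injEq, List.cons.injEq, and_true] at h
      exact hc ⟨h.1, h.2⟩
  rw [this]
  split_ifs <;> simp [runWeight]


lemma repl_comp_run {u s r : Q} {w z : Γ} (y : Γ) {p : List (Op Q Γ)}
    (h : runFn (u, [w]) p = some (s, [z])) :
    runFn (u, [w]) (p ++ [Op.repl s z r y]) = some (r, [y]) := by
  rw [runFn_append, h, Option.bind_some]
  simp [runFn, stepFn]

lemma pop_comp_run {u u₁ u₂ s : Q} {w y w₂ z : Γ} {p1 p2 : List (Op Q Γ)}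
    (h1 : runFn (u, [w]) p1 = some (u₁, [y])) (h2 : runFn (u₂, [w₂]) p2 = some (s, [z]))
    (r : Q) :
    runFn (u, [w]) (p1 ++ Op.push u₁ y u₂ w₂ :: (p2 ++ [Op.pop s z r])) = some (r, [y]) := by
  rw [runFn_append, h1, Option.bind_some]
  simp only [runFn]
  rw [show stepFn (u₁, [y]) (Op.push u₁ y u₂ w₂) = some (u₂, [w₂, y]) by simp [stepFn],
    Option.bind_some, runFn_append]
  have hl := runFn_lift [y] h2
  simp only [List.singleton_append] at hl
  rw [hl, Option.bind_some]
  simp [runFn, stepFn]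

lemma pop_comp_dep {u u₁ u₂ s r : Q} {w y w₂ z : Γ} {p1 p2 : List (Op Q Γ)}
    (h1 : runFn (u, [w]) p1 = some (u₁, [y])) (h2 : runFn (u₂, [w₂]) p2 = some (s, [z])) :
    dep (u, [w]) (p1 ++ Op.push u₁ y u₂ w₂ :: (p2 ++ [Op.pop s z r])) p1.length = 1 ∧
    ∀ i, p1.length < i → i ≤ p1.length + p2.length + 1 →
      2 ≤ dep (u, [w]) (p1 ++ Op.push u₁ y u₂ w₂ :: (p2 ++ [Op.pop s z r])) i := by
  set ρ : List (Op Q Γ) := Op.push u₁ y u₂ w₂ :: (p2 ++ [Op.pop s z r]) with hρ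
  constructor
  · rw [dep_prefix _ ρ le_rfl, dep_last h1]
    rfl
  · intro i hgt hle
    obtain ⟨kk, rfl⟩ : ∃ kk, i = p1.length + (kk + 1) := ⟨i - p1.length - 1, by omega⟩
    have hkk : kk ≤ p2.length := by omega
    rw [dep_append_right ρ h1 (kk + 1), hρ,
      dep_cons _ (show stepFn (u₁, [y]) (Op.push u₁ y u₂ w₂) = some (u₂, [w₂, y]) by
        simp [stepFn]) kk,
      dep_prefix _ [Op.pop s z r] hkk]
    have hdl := dep_lift h2 [y] kk
    simp only [List.singleton_append, List.length_singleton] at hdl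
    rw [hdl]
    rcases eq_or_lt_of_le hkk with hkk' | hkk'
    · rw [hkk', dep_last h2]
      simp
    · have := dep_pos h2 hkk'
      omega

lemma Dset_succ_cases {n : ℕ} {u r : Q} {w y : Γ} {π : List (Op Q Γ)}
    (hπ : π ∈ Dset (n + 1) u w r y) :
    (∃ s z p, p ∈ Dset n u w s z ∧ π = p ++ [Op.repl s z r y]) ∨
    (∃ j, j < n ∧ ∃ u₁ u₂ w₂ s z p1 p2,
      p1 ∈ Dset j u w u₁ y ∧ p2 ∈ Dset (n - 1 - j) u₂ w₂ s z ∧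
      π = p1 ++ Op.push u₁ y u₂ w₂ :: (p2 ++ [Op.pop s z r])) := by
  obtain ⟨hlen, hrun0⟩ := mem_Dset.mp hπ
  have hne : π ≠ [] := by intro h; rw [h] at hlen; simp at hlen
  obtain ⟨p', o, hπeq⟩ : ∃ p' o, π = p' ++ [o] :=
    ⟨π.dropLast, π.getLast hne, (List.dropLast_append_getLast hne).symm⟩
  have hlen' : p'.length = n := by
    have := hπeq ▸ hlen
    simp at this
    omega
  have hrun : runFn (u, [w]) (p' ++ [o]) = some (r, [y]) := hπeq ▸ hrun0
  rw [runFn_append] at hrun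
  obtain ⟨cmid, hmid, hstep'⟩ := Option.bind_eq_some_iff.mp hrun
  have hstep : stepFn cmid o = some (r, [y]) := by simpa [runFn] using hstep'
  have hOp := stepFn_eq_some_iff.mp hstep
  cases hOp with
  | repl s1 z1 =>
    exact Or.inl ⟨s1, z1, p', mem_Dset.mpr ⟨hlen', hmid⟩, hπeq⟩
  | pop s1 z1 =>
    -- cmid = (s1, [z1, y]), o = Op.pop s1 z1 r
    right
    cases n with
    | zero =>
      exfalso
      have : p' = [] := List.length_eq_zero_iff.mp hlen'
      subst this
      simp [runFn] at hmid
    | succ n' => ?_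
    set N := n' + 1 with hN
    have hπlen : π.length = N + 1 := hlen
    set Pd : ℕ → Prop := fun i => dep (u, [w]) π i = 1 with hPd
    have hP0 : Pd 0 := by rw [hPd]; simp [dep_zero]
    set j : ℕ := Nat.findGreatest Pd (N - 1) with hj
    have hPj : Pd j := Nat.findGreatest_spec (Nat.zero_le _) hP0
    have hjle : j ≤ N - 1 := Nat.findGreatest_le _
    have hdepn : dep (u, [w]) π N = 2 := by
      have htN : π.take N = p' := by rw [hπeq, ← hlen', List.take_left]
      rw [dep_of_runFn (by rw [htN]; exact hmid)]
      rfl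
    have hgt : ∀ i, j < i → i ≤ N → 2 ≤ dep (u, [w]) π i := by
      intro i h1 h2
      rcases eq_or_lt_of_le h2 with rfl | hlt
      · omega
      · have hnP := Nat.findGreatest_is_greatest (hj ▸ h1) (by omega)
        have h1' := dep_pos hrun0 (k := i) (by omega)
        rw [hPd] at hnP
        simp only at hnP
        omega
    have hlt : dep (u, [w]) π j < dep (u, [w]) π (j + 1) := by
      rw [hPj]
      exact hgt (j + 1) (Nat.lt_succ_self j) (by omega)
    obtain ⟨q1', x1', β1, u₂, w₂, hA, hB, hC⟩ :=
      push_boundary hrun0 (by omega) hlt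
    have hβ1 : β1 = [] := by
      have hd := dep_of_runFn hA
      rw [hPj] at hd
      simp at hd
      exact hd
    subst hβ1
    have htakeeq : π.take (j + 1) = p'.take (j + 1) := by
      rw [hπeq, List.take_append_of_le_length (by omega)]
    set π₂ := p'.drop (j + 1) with hπ₂
    have hlenπ₂ : π₂.length = N - 1 - j := by
      rw [hπ₂, List.length_drop, hlen']
      omega
    have hsplit : π = π.take (j + 1) ++ (π₂ ++ [Op.pop s1 z1 r]) := by
      rw [htakeeq, hπeq, ← List.append_assoc, List.take_append_drop]
    have hmid2 : runFn (u₂, [w₂, x1']) π₂ = some (s1, [z1, y]) := by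
      have h3 := runFn_append (u, [w]) (p'.take (j + 1)) π₂
      rw [List.take_append_drop, hmid, ← htakeeq, hB, Option.bind_some] at h3
      exact h3.symm
    have hlentake : (π.take (j + 1)).length = j + 1 := by
      rw [List.length_take]
      omega
    have hdepmid : ∀ kk, kk < π₂.length → 2 ≤ dep (u₂, [w₂, x1']) π₂ kk := by
      intro kk hkk
      have harr : dep (u, [w]) π (j + 1 + kk) = dep (u₂, [w₂, x1']) π₂ kk := by
        conv_lhs => rw [hsplit]
        rw [show j + 1 + kk = (π.take (j + 1)).length + kk by rw [hlentake],
          dep_append_right _ hB kk, dep_prefix _ [Op.pop s1 z1 r] (le_of_lt hkk)]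
      rw [← harr]
      exact hgt (j + 1 + kk) (by omega) (by omega)
    obtain ⟨τ, hτrun, hτeq⟩ :=
      runFn_unlift (q := u₂) (a := w₂) (σ := []) (β := [x1']) (c := (s1, [z1, y]))
        hmid2 (by intro kk hkk; simpa using hdepmid kk hkk)
    have hx1y : x1' = y ∧ τ = [z1] := by
      rcases τ with _ | ⟨a, _ | ⟨b, l⟩⟩
      · simp at hτeq
      · simp only at hτeq
        rw [List.singleton_append] at hτeq
        injection hτeq with h1 h2
        injection h2 with h3 h4
        exact ⟨h3.symm, by rw [h1]⟩
      · simp at hτeq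
    obtain ⟨rfl, rfl⟩ := hx1y
    refine ⟨j, by omega, q1', u₂, w₂, s1, z1, π.take j, π₂,
      mem_Dset.mpr ⟨by rw [List.length_take]; omega, hA⟩,
      mem_Dset.mpr ⟨hlenπ₂, hτrun⟩, ?_⟩
    conv_lhs => rw [hsplit]
    rw [hC]
    simp


lemma pop_comp_eq {n j j' : ℕ} {u u₁ u₂ s u₁' u₂' s' r : Q} {w y w₂ z w₂' z' : Γ}
    {p1 p2 p1' p2' : List (Op Q Γ)}
    (hj : j < n) (hj' : j' < n)
    (h1 : p1 ∈ Dset j u w u₁ y) (h2 : p2 ∈ Dset (n - 1 - j) u₂ w₂ s z)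
    (h1' : p1' ∈ Dset j' u w u₁' y) (h2' : p2' ∈ Dset (n - 1 - j') u₂' w₂' s' z')
    (heq : p1 ++ Op.push u₁ y u₂ w₂ :: (p2 ++ [Op.pop s z r])
         = p1' ++ Op.push u₁' y u₂' w₂' :: (p2' ++ [Op.pop s' z' r])) :
    j = j' ∧ u₁ = u₁' ∧ u₂ = u₂' ∧ w₂ = w₂' ∧ s = s' ∧ z = z' ∧ p1 = p1' ∧ p2 = p2' := by
  obtain ⟨hl1, hr1⟩ := mem_Dset.mp h1
  obtain ⟨hl2, hr2⟩ := mem_Dset.mp h2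
  obtain ⟨hl1', hr1'⟩ := mem_Dset.mp h1'
  obtain ⟨hl2', hr2'⟩ := mem_Dset.mp h2'
  have hfacts := pop_comp_dep (r := r) hr1 hr2
  have hfacts' := pop_comp_dep (r := r) hr1' hr2'
  rw [← heq] at hfacts'
  have hjj : j = j' := by
    by_contra hne
    rcases Nat.lt_or_ge j j' with hlt | hge
    · have := hfacts.2 p1'.length (by omega) (by omega)
      rw [hfacts'.1] at this
      omega
    · have hlt : j' < j := by omega
      have := hfacts'.2 p1.length (by omega) (by omega)
      rw [hfacts.1] at this
      omega
  subst hjj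
  obtain ⟨hp1, htail⟩ := List.append_inj heq (by omega)
  injection htail with hpush htail2
  injection hpush with e1 e2 e3 e4
  obtain ⟨hp2, hpop⟩ := List.append_inj' htail2 rfl
  injection hpop with hpop htriv
  injection hpop with f1 f2 f3
  exact ⟨rfl, e1, e3, e4, f1, f2, hp1, hp2⟩

lemma Bw_succ (Δ : ℕ → Op Q Γ → ℝ) (k n : ℕ) (u : Q) (w : Γ) (r : Q) (y : Γ) :
    Bw Δ k (n + 1) u w r y =
      (∑ s : Q, ∑ z : Γ, Bw Δ k n u w s z * Δ (k + n) (Op.repl s z r y)) +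
      ∑ j ∈ Finset.range n, ∑ u₁ : Q, ∑ u₂ : Q, ∑ w₂ : Γ, ∑ s : Q, ∑ z : Γ,
        Bw Δ k j u w u₁ y * Δ (k + j) (Op.push u₁ y u₂ w₂) *
          Bw Δ (k + j + 1) (n - 1 - j) u₂ w₂ s z * Δ (k + n) (Op.pop s z r) := by
  classical
  set R : Finset (List (Op Q Γ)) :=
    (Finset.univ : Finset (Q × Γ)).biUnion
      (fun sz => (Dset n u w sz.1 sz.2).image (fun p => p ++ [Op.repl sz.1 sz.2 r y])) with hR
  set P : Finset (List (Op Q Γ)) :=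
    (Finset.range n).biUnion (fun j =>
      (Finset.univ : Finset (Q × Q × Γ × Q × Γ)).biUnion (fun κ =>
        ((Dset j u w κ.1 y) ×ˢ (Dset (n - 1 - j) κ.2.1 κ.2.2.1 κ.2.2.2.1 κ.2.2.2.2)).image
          (fun p => p.1 ++ Op.push κ.1 y κ.2.1 κ.2.2.1 ::
            (p.2 ++ [Op.pop κ.2.2.2.1 κ.2.2.2.2 r])))) with hP
  have hmemP : ∀ π, π ∈ P ↔ ∃ j, j < n ∧ ∃ u₁ u₂ w₂ s z p1 p2,
      p1 ∈ Dset j u w u₁ y ∧ p2 ∈ Dset (n - 1 - j) u₂ w₂ s z ∧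
      π = p1 ++ Op.push u₁ y u₂ w₂ :: (p2 ++ [Op.pop s z r]) := by
    intro π
    simp only [hP, Finset.mem_biUnion, Finset.mem_range, Finset.mem_univ, true_and,
      Finset.mem_image, Finset.mem_product, Prod.exists]
    constructor
    · rintro ⟨j, hj, u₁, u₂, w₂, s, z, p1, p2, ⟨m1, m2⟩, rfl⟩
      exact ⟨j, hj, u₁, u₂, w₂, s, z, p1, p2, m1, m2, rfl⟩
    · rintro ⟨j, hj, u₁, u₂, w₂, s, z, p1, p2, m1, m2, rfl⟩
      exact ⟨j, hj, u₁, u₂, w₂, s, z, p1, p2, ⟨m1, m2⟩, rfl⟩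
  have hmemR : ∀ π, π ∈ R ↔ ∃ s z p, p ∈ Dset n u w s z ∧ π = p ++ [Op.repl s z r y] := by
    intro π
    simp only [hR, Finset.mem_biUnion, Finset.mem_univ, true_and, Finset.mem_image,
      Prod.exists]
    constructor
    · rintro ⟨s, z, p, hp, rfl⟩
      exact ⟨s, z, p, hp, rfl⟩
    · rintro ⟨s, z, p, hp, rfl⟩
      exact ⟨s, z, p, hp, rfl⟩
  have hunion : Dset (n + 1) u w r y = R ∪ P := by
    ext π
    simp only [Finset.mem_union]
    constructor
    · intro h
      rcases Dset_succ_cases h with ⟨s, z, p, hp, rfl⟩ |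
        ⟨j, hj, u₁, u₂, w₂, s, z, p1, p2, hp1, hp2, rfl⟩
      · exact Or.inl ((hmemR _).mpr ⟨s, z, p, hp, rfl⟩)
      · exact Or.inr ((hmemP _).mpr ⟨j, hj, u₁, u₂, w₂, s, z, p1, p2, hp1, hp2, rfl⟩)
    · rintro (h | h)
      · obtain ⟨s, z, p, hp, rfl⟩ := (hmemR _).mp h
        obtain ⟨hl, hr⟩ := mem_Dset.mp hp
        exact mem_Dset.mpr ⟨by simp [hl], repl_comp_run y hr⟩
      · obtain ⟨j, hj, u₁, u₂, w₂, s, z, p1, p2, hp1, hp2, rfl⟩ := (hmemP _).mp h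
        obtain ⟨hl1, hr1⟩ := mem_Dset.mp hp1
        obtain ⟨hl2, hr2⟩ := mem_Dset.mp hp2
        refine mem_Dset.mpr ⟨?_, pop_comp_run hr1 hr2 r⟩
        simp [hl1, hl2]
        omega
  have hdisj : Disjoint R P := by
    rw [Finset.disjoint_left]
    intro π hπR hπP
    obtain ⟨s, z, p, hp, he1⟩ := (hmemR _).mp hπR
    obtain ⟨j, hj, u₁, u₂, w₂, s', z', p1, p2, hp1, hp2, he2⟩ := (hmemP _).mp hπP
    rw [he1] at he2
    have he3 : p ++ [Op.repl s z r y]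
        = (p1 ++ Op.push u₁ y u₂ w₂ :: p2) ++ [Op.pop s' z' r] := by
      rw [he2]; simp
    obtain ⟨-, habs⟩ := List.append_inj' he3 rfl
    simp at habs
  rw [Bw, hunion, Finset.sum_union hdisj]
  congr 1
  · -- repl part
    rw [hR, Finset.sum_biUnion]
    · rw [Fintype.sum_prod_type]
      refine Finset.sum_congr rfl fun s _ => Finset.sum_congr rfl fun z _ => ?_
      rw [Finset.sum_image (by intro p _ p' _ h; exact (List.append_inj' h rfl).1)]
      rw [Bw, Finset.sum_mul]
      refine Finset.sum_congr rfl fun p hp => ?_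
      rw [runWeight_append, (mem_Dset.mp hp).1]
      simp [runWeight]
    · intro a _ b _ hne
      simp only [Function.onFun]
      rw [Finset.disjoint_left]
      intro π h1 h2
      simp only [Finset.mem_image] at h1 h2
      obtain ⟨p, -, he1⟩ := h1
      obtain ⟨p', -, he2⟩ := h2
      rw [← he2] at he1
      obtain ⟨-, habs⟩ := List.append_inj' he1 rfl
      injection habs with habs htriv
      injection habs with e1 e2 e3 e4
      exact hne (Prod.ext e1 e2)
  · -- pop part
    rw [hP, Finset.sum_biUnion]
    · refine Finset.sum_congr rfl fun j hj => ?_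
      rw [Finset.mem_range] at hj
      rw [Finset.sum_biUnion]
      · rw [Fintype.sum_prod_type]
        refine Finset.sum_congr rfl fun u₁ _ => ?_
        rw [Fintype.sum_prod_type]
        refine Finset.sum_congr rfl fun u₂ _ => ?_
        rw [Fintype.sum_prod_type]
        refine Finset.sum_congr rfl fun w₂ _ => ?_
        rw [Fintype.sum_prod_type]
        refine Finset.sum_congr rfl fun s _ => Finset.sum_congr rfl fun z _ => ?_
        rw [Finset.sum_image (by
          rintro ⟨p1, p2⟩ hm ⟨p1', p2'⟩ hm' h
          rw [Finset.mem_coe, Finset.mem_product] at hm hm'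
          obtain ⟨-, -, -, -, -, -, e7, e8⟩ :=
            pop_comp_eq hj hj hm.1 hm.2 hm'.1 hm'.2 h
          exact Prod.ext e7 e8)]
        rw [Finset.sum_product]
        rw [Bw, Bw, Finset.sum_mul, Finset.sum_mul, Finset.sum_mul]
        refine Finset.sum_congr rfl fun p1 hp1 => ?_
        rw [Finset.mul_sum, Finset.sum_mul]
        refine Finset.sum_congr rfl fun p2 hp2 => ?_
        dsimp only
        obtain ⟨hl1, -⟩ := mem_Dset.mp hp1
        obtain ⟨hl2, -⟩ := mem_Dset.mp hp2
        rw [runWeight_append, hl1]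
        simp only [runWeight, runWeight_append, hl2]
        rw [show k + j + 1 + (n - 1 - j) = k + n by omega]
        simp [runWeight]
        ring
      · intro κ _ κ' _ hne
        simp only [Function.onFun]
        rw [Finset.disjoint_left]
        intro π h1 h2
        simp only [Finset.mem_image, Finset.mem_product, Prod.exists] at h1 h2
        obtain ⟨p1, p2, ⟨m1, m2⟩, he1⟩ := h1
        obtain ⟨p1', p2', ⟨m1', m2'⟩, he2⟩ := h2
        rw [← he2] at he1
        obtain ⟨-, e1, e2, e3, e4, e5, -, -⟩ := pop_comp_eq hj hj m1 m2 m1' m2' he1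
        exact hne (Prod.ext e1 (Prod.ext e2 (Prod.ext e3 (Prod.ext e4 e5))))
    · intro j1 hj1 j2 hj2 hne
      simp only [Function.onFun]
      rw [Finset.mem_coe, Finset.mem_range] at hj1 hj2
      rw [Finset.disjoint_left]
      intro π h1 h2
      simp only [Finset.mem_biUnion, Finset.mem_univ, true_and, Finset.mem_image,
        Finset.mem_product, Prod.exists] at h1 h2
      obtain ⟨u₁, u₂, w₂, s, z, p1, p2, ⟨m1, m2⟩, he1⟩ := h1
      obtain ⟨u₁', u₂', w₂', s', z', p1', p2', ⟨m1', m2'⟩, he2⟩ := h2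
      rw [← he2] at he1
      obtain ⟨e0, -⟩ := pop_comp_eq hj1 hj2 m1 m2 m1' m2' he1
      exact hne e0


lemma sum_swap4 {M : Type} [AddCommMonoid M] (f : Q → Γ → Q → Γ → M) :
    (∑ s : Q, ∑ z : Γ, ∑ a : Q, ∑ b : Γ, f s z a b)
      = ∑ a : Q, ∑ b : Γ, ∑ s : Q, ∑ z : Γ, f s z a b :=
  calc (∑ s : Q, ∑ z : Γ, ∑ a : Q, ∑ b : Γ, f s z a b)
      = ∑ s : Q, ∑ a : Q, ∑ z : Γ, ∑ b : Γ, f s z a b :=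
        Finset.sum_congr rfl fun s _ => Finset.sum_comm
    _ = ∑ a : Q, ∑ s : Q, ∑ z : Γ, ∑ b : Γ, f s z a b := Finset.sum_comm
    _ = ∑ a : Q, ∑ s : Q, ∑ b : Γ, ∑ z : Γ, f s z a b :=
        Finset.sum_congr rfl fun a _ => Finset.sum_congr rfl fun s _ => Finset.sum_comm
    _ = ∑ a : Q, ∑ b : Γ, ∑ s : Q, ∑ z : Γ, f s z a b :=
        Finset.sum_congr rfl fun a _ => Finset.sum_comm

lemma gamTable_stable (q₀ : Q) (bot : Γ) (Δ : ℕ → Op Q Γ → ℝ) (N : ℕ) :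
    ∀ t' I q x r y, t' ≤ N →
      gamTable q₀ bot Δ N t' I q x r y = gam q₀ bot Δ t' I q x r y := by
  induction N with
  | zero =>
    intro t' I q x r y h
    have : t' = 0 := Nat.le_zero.mp h
    subst this
    rfl
  | succ N ih =>
    intro t' I q x r y h
    rcases eq_or_lt_of_le h with rfl | hlt
    · rfl
    · show gamTable q₀ bot Δ (N + 1) t' I q x r y = _
      simp only [gamTable]
      rw [if_neg (by omega)]
      exact ih t' I q x r y (by omega)

lemma gam_zero (q₀ : Q) (bot : Γ) (Δ : ℕ → Op Q Γ → ℝ) :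
    ∀ t I q x r y, t < I → gam q₀ bot Δ t I q x r y = 0 := by
  intro t
  induction t with
  | zero =>
    intro I q x r y h
    show gamTable q₀ bot Δ 0 0 I q x r y = 0
    simp only [gamTable]
    rw [if_neg (by omega)]
  | succ t ih =>
    intro I q x r y h
    show gamTable q₀ bot Δ (t + 1) (t + 1) I q x r y = 0
    simp only [gamTable]
    rw [if_pos trivial, if_neg (by omega)]
    have h1 : ∀ s z, gamTable q₀ bot Δ t t I q x s z = 0 := fun s z =>
      (gamTable_stable q₀ bot Δ t t I q x s z le_rfl).trans (ih I q x s z (by omega))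
    have h2 : Finset.Ico I t = ∅ := by
      rw [Finset.Ico_eq_empty_iff]
      omega
    simp [h1, h2]


lemma core_identity (X : ℝ) (P : Q → Γ → ℝ) (B : Q → Γ → Q → Γ → ℝ) (D : Q → Γ → ℝ) :
    X * (∑ s : Q, ∑ z : Γ, (∑ a : Q, ∑ b : Γ, P a b * B a b s z) * D s z)
      = ∑ a : Q, ∑ b : Γ, ∑ s : Q, ∑ z : Γ, X * P a b * B a b s z * D s z := by
  rw [← sum_swap4 (fun s z a b => X * P a b * B a b s z * D s z), Finset.mul_sum]
  refine Finset.sum_congr rfl fun s _ => ?_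
  rw [Finset.mul_sum]
  refine Finset.sum_congr rfl fun z _ => ?_
  simp only [Finset.sum_mul, Finset.mul_sum]
  exact Finset.sum_congr rfl fun a _ => Finset.sum_congr rfl fun b _ => by ring

lemma core_identity_repl (P : Q → Γ → ℝ) (B1 : Q → Γ → Q → Γ → ℝ) (D : Q → Γ → ℝ) :
    (∑ s : Q, ∑ z : Γ, (∑ a : Q, ∑ b : Γ, P a b * B1 a b s z) * D s z)
      = ∑ a : Q, ∑ b : Γ, P a b * (∑ s : Q, ∑ z : Γ, B1 a b s z * D s z) := by
  have h := core_identity (1 : ℝ) P B1 D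
  simp only [one_mul] at h
  rw [h]
  refine Finset.sum_congr rfl fun a _ => Finset.sum_congr rfl fun b _ => ?_
  rw [Finset.mul_sum]
  refine Finset.sum_congr rfl fun s _ => ?_
  rw [Finset.mul_sum]
  exact Finset.sum_congr rfl fun z _ => by ring

lemma sum_swap_u {M : Type} [AddCommMonoid M] (f : Q → Q → Γ → M) :
    (∑ u : Q, ∑ a : Q, ∑ b : Γ, f u a b) = ∑ a : Q, ∑ b : Γ, ∑ u : Q, f u a b :=
  calc (∑ u : Q, ∑ a : Q, ∑ b : Γ, f u a b)
      = ∑ a : Q, ∑ u : Q, ∑ b : Γ, f u a b := Finset.sum_comm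
    _ = ∑ a : Q, ∑ b : Γ, ∑ u : Q, f u a b :=
        Finset.sum_congr rfl fun a _ => Finset.sum_comm

lemma core_identity2 (P : Q → Γ → ℝ) (B1 : Q → Γ → Q → ℝ) (P2 : Q → Q → Γ → ℝ)
    (B2 : Q → Γ → Q → Γ → ℝ) (D : Q → Γ → ℝ) :
    (∑ u1 : Q, (∑ a : Q, ∑ b : Γ, P a b * B1 a b u1) *
      (∑ s : Q, ∑ z : Γ, (∑ c : Q, ∑ d : Γ, P2 u1 c d * B2 c d s z) * D s z))
    = ∑ a : Q, ∑ b : Γ, ∑ u1 : Q, ∑ c : Q, ∑ d : Γ, ∑ s : Q, ∑ z : Γ,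
        P a b * B1 a b u1 * (P2 u1 c d * B2 c d s z * D s z) := by
  have h1 : ∀ u1 : Q,
      (∑ s : Q, ∑ z : Γ, (∑ c : Q, ∑ d : Γ, P2 u1 c d * B2 c d s z) * D s z)
        = ∑ c : Q, ∑ d : Γ, ∑ s : Q, ∑ z : Γ, P2 u1 c d * B2 c d s z * D s z := by
    intro u1
    have := core_identity (1 : ℝ) (fun c d => P2 u1 c d) B2 D
    simpa using this
  calc (∑ u1 : Q, (∑ a : Q, ∑ b : Γ, P a b * B1 a b u1) *
      (∑ s : Q, ∑ z : Γ, (∑ c : Q, ∑ d : Γ, P2 u1 c d * B2 c d s z) * D s z))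
      = ∑ u1 : Q, ∑ a : Q, ∑ b : Γ, (P a b * B1 a b u1) *
          (∑ c : Q, ∑ d : Γ, ∑ s : Q, ∑ z : Γ, P2 u1 c d * B2 c d s z * D s z) := by
        refine Finset.sum_congr rfl fun u1 _ => ?_
        rw [h1 u1, Finset.sum_mul]
        refine Finset.sum_congr rfl fun a _ => ?_
        rw [Finset.sum_mul]
    _ = ∑ a : Q, ∑ b : Γ, ∑ u1 : Q, (P a b * B1 a b u1) *
          (∑ c : Q, ∑ d : Γ, ∑ s : Q, ∑ z : Γ, P2 u1 c d * B2 c d s z * D s z) :=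
        sum_swap_u _
    _ = ∑ a : Q, ∑ b : Γ, ∑ u1 : Q, ∑ c : Q, ∑ d : Γ, ∑ s : Q, ∑ z : Γ,
        P a b * B1 a b u1 * (P2 u1 c d * B2 c d s z * D s z) := by
        refine Finset.sum_congr rfl fun a _ => Finset.sum_congr rfl fun b _ =>
          Finset.sum_congr rfl fun u1 _ => ?_
        simp only [Finset.mul_sum]

lemma swap_range {M : Type} [AddCommMonoid M] (m : ℕ) (S : ℕ → Q → Γ → M) :
    (∑ a : Q, ∑ b : Γ, ∑ j ∈ Finset.range m, S j a b)
      = ∑ j ∈ Finset.range m, ∑ a : Q, ∑ b : Γ, S j a b :=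
  calc (∑ a : Q, ∑ b : Γ, ∑ j ∈ Finset.range m, S j a b)
      = ∑ a : Q, ∑ j ∈ Finset.range m, ∑ b : Γ, S j a b :=
        Finset.sum_congr rfl fun a _ => Finset.sum_comm
    _ = ∑ j ∈ Finset.range m, ∑ a : Q, ∑ b : Γ, S j a b := Finset.sum_comm


lemma swap_range2 (m : ℕ) (P : Q → Γ → ℝ) (S : ℕ → Q → Γ → ℝ) :
    (∑ a : Q, ∑ b : Γ, P a b * ∑ j ∈ Finset.range m, S j a b)
      = ∑ j ∈ Finset.range m, ∑ a : Q, ∑ b : Γ, P a b * S j a b := by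
  rw [← swap_range m (fun j a b => P a b * S j a b)]
  exact Finset.sum_congr rfl fun a _ => Finset.sum_congr rfl fun b _ => Finset.mul_sum ..

lemma gam_eq (q₀ : Q) (bot : Γ) (Δ : ℕ → Op Q Γ → ℝ) (t : ℕ) :
    (∀ q x r y, gam q₀ bot Δ t 0 q x r y
        = if q = q₀ ∧ x = bot then Bw Δ 1 t q x r y else 0) ∧
    (∀ I, 1 ≤ I → I ≤ t → ∀ q x r y, gam q₀ bot Δ t I q x r y
        = ∑ a : Q, ∑ b : Γ, Δ I (Op.push q x a b) * Bw Δ (I + 1) (t - I) a b r y) := by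
  induction t using Nat.strong_induction_on with
  | _ t IH =>
  rcases t with _ | t
  · constructor
    · intro q x r y
      show gamTable q₀ bot Δ 0 0 0 q x r y = _
      simp only [gamTable]
      rw [Bw_zero]
      split_ifs <;> simp_all
    · intro I hI1 hI2
      exact absurd hI2 (by omega)
  · have hunf : ∀ I q x r y, gam q₀ bot Δ (t + 1) I q x r y =
        (if I = t + 1 then Δ (t + 1) (Op.push q x r y) else 0)
        + (∑ s : Q, ∑ z : Γ, gam q₀ bot Δ t I q x s z * Δ (t + 1) (Op.repl s z r y))
        + ∑ k ∈ Finset.Ico I t, ∑ u : Q, gam q₀ bot Δ k I q x u y *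
            (∑ s : Q, ∑ z : Γ, gam q₀ bot Δ t (k + 1) u y s z * Δ (t + 1) (Op.pop s z r)) := by
      intro I q x r y
      show gamTable q₀ bot Δ (t + 1) (t + 1) I q x r y = _
      simp only [gamTable, gam]
      rw [if_pos trivial]
      refine congrArg₂ (· + ·) rfl ?_
      refine Finset.sum_congr rfl fun k hk => Finset.sum_congr rfl fun u _ => ?_
      rw [Finset.mem_Ico] at hk
      rw [gamTable_stable q₀ bot Δ t k I q x u y (by omega)]
      rfl
    constructor
    · -- the I = 0 claim
      intro q x r y
      rw [hunf, if_neg (by omega), zero_add]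
      by_cases hc : q = q₀ ∧ x = bot
      · rw [if_pos hc, Bw_succ]
        have e1 : ∀ s z, gam q₀ bot Δ t 0 q x s z = Bw Δ 1 t q x s z := fun s z => by
          rw [(IH t (by omega)).1 q x s z, if_pos hc]
        congr 1
        · refine Finset.sum_congr rfl fun s _ => Finset.sum_congr rfl fun z _ => ?_
          rw [e1, show 1 + t = t + 1 by omega]
        · rw [← Finset.range_eq_Ico]
          refine Finset.sum_congr rfl fun k hk => ?_
          rw [Finset.mem_range] at hk
          refine Finset.sum_congr rfl fun u1 _ => ?_
          rw [show gam q₀ bot Δ k 0 q x u1 y = Bw Δ 1 k q x u1 y from by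
            rw [(IH k (by omega)).1 q x u1 y, if_pos hc]]
          have e3 : ∀ s z, gam q₀ bot Δ t (k + 1) u1 y s z
              = ∑ a : Q, ∑ b : Γ, Δ (k + 1) (Op.push u1 y a b) *
                  Bw Δ (k + 1 + 1) (t - (k + 1)) a b s z :=
            fun s z => (IH t (by omega)).2 (k + 1) (by omega) (by omega) u1 y s z
          conv_lhs =>
            rw [show (∑ s : Q, ∑ z : Γ, gam q₀ bot Δ t (k + 1) u1 y s z *
                Δ (t + 1) (Op.pop s z r)) =
              ∑ s : Q, ∑ z : Γ, (∑ a : Q, ∑ b : Γ, Δ (k + 1) (Op.push u1 y a b) *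
                  Bw Δ (k + 1 + 1) (t - (k + 1)) a b s z) * Δ (t + 1) (Op.pop s z r) from
              Finset.sum_congr rfl fun s _ => Finset.sum_congr rfl fun z _ => by rw [e3]]
          rw [core_identity]
          rw [show 1 + k = k + 1 by omega,
            show t - 1 - k = t - (k + 1) by omega, show 1 + t = t + 1 by omega]
        -- done pos case
      · rw [if_neg hc]
        have e1 : ∀ n', n' < t + 1 → ∀ s z, gam q₀ bot Δ n' 0 q x s z = 0 :=
          fun n' hn' s z => by rw [(IH n' hn').1 q x s z, if_neg hc]
        rw [show (∑ s : Q, ∑ z : Γ, gam q₀ bot Δ t 0 q x s z * Δ (t + 1) (Op.repl s z r y))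
            = 0 from by
          refine Finset.sum_eq_zero fun s _ => Finset.sum_eq_zero fun z _ => ?_
          rw [e1 t (by omega), zero_mul]]
        rw [show (∑ k ∈ Finset.Ico 0 t, ∑ u : Q, gam q₀ bot Δ k 0 q x u y *
            (∑ s : Q, ∑ z : Γ, gam q₀ bot Δ t (k + 1) u y s z * Δ (t + 1) (Op.pop s z r)))
            = 0 from by
          refine Finset.sum_eq_zero fun k hk => Finset.sum_eq_zero fun u _ => ?_
          rw [Finset.mem_Ico] at hk
          rw [e1 k (by omega), zero_mul]]
        ring
    · -- the I ≥ 1 claim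
      intro I hI1 hI2 q x r y
      rw [hunf]
      rcases eq_or_lt_of_le hI2 with rfl | hIlt
      · -- I = t + 1
        rw [if_pos rfl, Nat.sub_self]
        rw [show (∑ s : Q, ∑ z : Γ, gam q₀ bot Δ t (t + 1) q x s z *
            Δ (t + 1) (Op.repl s z r y)) = 0 from by
          refine Finset.sum_eq_zero fun s _ => Finset.sum_eq_zero fun z _ => ?_
          rw [gam_zero q₀ bot Δ t (t + 1) q x s z (by omega), zero_mul]]
        rw [show Finset.Ico (t + 1) t = ∅ from by rw [Finset.Ico_eq_empty_iff]; omega]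
        simp only [Finset.sum_empty, add_zero]
        simp only [Bw_zero, mul_ite, mul_one, mul_zero]
        rw [Finset.sum_eq_single r]
        · rw [Finset.sum_eq_single y]
          · simp
          · intro b _ hb
            simp [hb]
          · intro h
            exact absurd (Finset.mem_univ y) h
        · intro a _ ha
          refine Finset.sum_eq_zero fun b _ => ?_
          simp [ha]
        · intro h
          exact absurd (Finset.mem_univ r) h
      · -- 1 ≤ I ≤ t
        have hIt : I ≤ t := by omega
        rw [if_neg (by omega), zero_add]
        have e1 : ∀ s z, gam q₀ bot Δ t I q x s z
            = ∑ a : Q, ∑ b : Γ, Δ I (Op.push q x a b) * Bw Δ (I + 1) (t - I) a b s z :=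
          fun s z => (IH t (by omega)).2 I hI1 hIt q x s z
        -- rewrite RHS using Bw_succ
        rw [show t + 1 - I = (t - I) + 1 by omega]
        simp only [Bw_succ]
        rw [show I + 1 + (t - I) = t + 1 by omega]
        simp only [mul_add, Finset.sum_add_distrib]
        congr 1
        · -- repl parts
          rw [show (∑ s : Q, ∑ z : Γ, gam q₀ bot Δ t I q x s z * Δ (t + 1) (Op.repl s z r y))
              = ∑ s : Q, ∑ z : Γ, (∑ a : Q, ∑ b : Γ, Δ I (Op.push q x a b) *
                  Bw Δ (I + 1) (t - I) a b s z) * Δ (t + 1) (Op.repl s z r y) from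
            Finset.sum_congr rfl fun s _ => Finset.sum_congr rfl fun z _ => by rw [e1]]
          exact core_identity_repl _ _ _
        · -- pop parts
          rw [swap_range2 (t - I) (fun a b => Δ I (Op.push q x a b)) (fun j a b =>
            ∑ u1 : Q, ∑ c : Q, ∑ d : Γ, ∑ s : Q, ∑ z : Γ,
              Bw Δ (I + 1) j a b u1 y * Δ (I + 1 + j) (Op.push u1 y c d) *
                Bw Δ (I + 1 + j + 1) (t - I - 1 - j) c d s z * Δ (t + 1) (Op.pop s z r))]
          rw [Finset.sum_Ico_eq_sum_range]
          refine Finset.sum_congr rfl fun j hj => ?_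
          rw [Finset.mem_range] at hj
          -- rewrite the gam's inside
          have e2 : ∀ u1, gam q₀ bot Δ (I + j) I q x u1 y
              = ∑ a : Q, ∑ b : Γ, Δ I (Op.push q x a b) * Bw Δ (I + 1) (I + j - I) a b u1 y :=
            fun u1 => (IH (I + j) (by omega)).2 I hI1 (by omega) q x u1 y
          have e3 : ∀ u1 s z, gam q₀ bot Δ t (I + j + 1) u1 y s z
              = ∑ c : Q, ∑ d : Γ, Δ (I + j + 1) (Op.push u1 y c d) *
                  Bw Δ (I + j + 1 + 1) (t - (I + j + 1)) c d s z :=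
            fun u1 s z => (IH t (by omega)).2 (I + j + 1) (by omega) (by omega) u1 y s z
          rw [show (∑ u : Q, gam q₀ bot Δ (I + j) I q x u y *
              (∑ s : Q, ∑ z : Γ, gam q₀ bot Δ t (I + j + 1) u y s z *
                Δ (t + 1) (Op.pop s z r)))
              = ∑ u1 : Q, (∑ a : Q, ∑ b : Γ, Δ I (Op.push q x a b) *
                  Bw Δ (I + 1) (I + j - I) a b u1 y) *
                (∑ s : Q, ∑ z : Γ, (∑ c : Q, ∑ d : Γ, Δ (I + j + 1) (Op.push u1 y c d) *
                  Bw Δ (I + j + 1 + 1) (t - (I + j + 1)) c d s z) * Δ (t + 1) (Op.pop s z r))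
              from Finset.sum_congr rfl fun u1 _ => by
                rw [e2]
                congr 1
                exact Finset.sum_congr rfl fun s _ => Finset.sum_congr rfl fun z _ => by
                  rw [e3]]
          rw [core_identity2]
          rw [show I + j - I = j by omega, show I + 1 + j = I + j + 1 by omega,
            show t - I - 1 - j = t - (I + j + 1) by omega]
          refine Finset.sum_congr rfl fun a _ => Finset.sum_congr rfl fun b _ => ?_
          simp only [Finset.mul_sum]
          refine Finset.sum_congr rfl fun u1 _ => Finset.sum_congr rfl fun c _ =>
            Finset.sum_congr rfl fun d _ => Finset.sum_congr rfl fun s _ =>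
            Finset.sum_congr rfl fun z _ => by ring


open Classical in
noncomputable def Eset (q₀ : Q) (bot : Γ) (n : ℕ) (r : Q) (y : Γ) : Finset (List (Op Q Γ)) :=
  (allLists n).filter (fun π => ∃ β, runFn (q₀, [bot]) π = some (r, y :: β))

lemma mem_Eset {q₀ : Q} {bot : Γ} {n : ℕ} {r : Q} {y : Γ} {π : List (Op Q Γ)} :
    π ∈ Eset q₀ bot n r y ↔
      π.length = n ∧ ∃ β, runFn (q₀, [bot]) π = some (r, y :: β) := by
  simp [Eset, mem_allLists]

lemma push_comp_E {q₀ q u r : Q} {bot x w y : Γ} {β : List Γ} {p1 p2 : List (Op Q Γ)}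
    (h1 : runFn (q₀, [bot]) p1 = some (q, x :: β)) (h2 : runFn (u, [w]) p2 = some (r, [y])) :
    runFn (q₀, [bot]) (p1 ++ Op.push q x u w :: p2) = some (r, y :: x :: β) ∧
    dep (q₀, [bot]) (p1 ++ Op.push q x u w :: p2) p1.length = β.length + 1 ∧
    ∀ i, p1.length < i → i ≤ p1.length + p2.length + 1 →
      β.length + 2 ≤ dep (q₀, [bot]) (p1 ++ Op.push q x u w :: p2) i := by
  have hstep : stepFn (q, x :: β) (Op.push q x u w) = some (u, w :: x :: β) := by
    simp [stepFn]
  have hl2 : runFn (u, [w] ++ (x :: β)) p2 = some (r, [y] ++ (x :: β)) := runFn_lift _ h2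
  simp only [List.singleton_append] at hl2
  refine ⟨?_, ?_, ?_⟩
  · rw [runFn_append, h1, Option.bind_some]
    simp only [runFn]
    rw [hstep, Option.bind_some]
    exact hl2
  · rw [dep_prefix _ _ le_rfl, dep_last h1]
    simp
  · intro i hgt hle
    obtain ⟨kk, rfl⟩ : ∃ kk, i = p1.length + (kk + 1) := ⟨i - p1.length - 1, by omega⟩
    have hkk : kk ≤ p2.length := by omega
    rw [dep_append_right _ h1 (kk + 1), dep_cons _ hstep kk]
    have hdl := dep_lift h2 (x :: β) kk
    simp only [List.singleton_append, List.length_cons] at hdl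
    rw [hdl]
    rcases eq_or_lt_of_le hkk with hkk' | hkk'
    · rw [hkk', dep_last h2]
      simp only [List.length_singleton]
      omega
    · have := dep_pos h2 hkk'
      omega

lemma Eset_cases {q₀ r : Q} {bot y : Γ} {n : ℕ} {π : List (Op Q Γ)}
    (hπ : π ∈ Eset q₀ bot n r y) :
    π ∈ Dset n q₀ bot r y ∨
    ∃ j, j < n ∧ ∃ q x u w p1 p2, p1 ∈ Eset q₀ bot j q x ∧
      p2 ∈ Dset (n - 1 - j) u w r y ∧ π = p1 ++ Op.push q x u w :: p2 := by
  obtain ⟨hlen, β, hrun⟩ := mem_Eset.mp hπ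
  rcases β with _ | ⟨x0, β⟩
  · exact Or.inl (mem_Dset.mpr ⟨hlen, hrun⟩)
  right
  set m : ℕ := β.length + 2 with hm
  have hn1 : 1 ≤ n := by
    rcases Nat.eq_zero_or_pos n with rfl | h
    · exfalso
      have : π = [] := List.length_eq_zero_iff.mp hlen
      subst this
      simp only [runFn, Option.some_inj, Prod.mk.injEq] at hrun
      have := congrArg List.length hrun.2
      simp at this
    · exact h
  set Pd : ℕ → Prop := fun i => dep (q₀, [bot]) π i < m with hPd
  have hP0 : Pd 0 := by rw [hPd]; simp [dep_zero]; omega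
  set j : ℕ := Nat.findGreatest Pd (n - 1) with hj
  have hPj : Pd j := Nat.findGreatest_spec (Nat.zero_le _) hP0
  have hjle : j ≤ n - 1 := Nat.findGreatest_le _
  have hdepn : dep (q₀, [bot]) π n = m := by
    rw [← hlen, dep_last hrun]
    simp [hm]
  have hgt : ∀ i, j < i → i ≤ n → m ≤ dep (q₀, [bot]) π i := by
    intro i h1 h2
    rcases eq_or_lt_of_le h2 with rfl | hlt
    · omega
    · have hnP := Nat.findGreatest_is_greatest (hj ▸ h1) (by omega)
      rw [hPd] at hnP
      simp only [not_lt] at hnP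
      exact hnP
  have hlt : dep (q₀, [bot]) π j < dep (q₀, [bot]) π (j + 1) := by
    have h1 : dep (q₀, [bot]) π j < m := hPj
    have h2 : m ≤ dep (q₀, [bot]) π (j + 1) := hgt (j + 1) (Nat.lt_succ_self j) (by omega)
    omega
  obtain ⟨q, x, β₁, u, w, hA, hB, hC⟩ := push_boundary hrun (by omega) hlt
  have hdj : dep (q₀, [bot]) π j = β₁.length + 1 := by
    rw [dep_of_runFn hA]; simp
  have hdj1 : dep (q₀, [bot]) π (j + 1) = β₁.length + 2 := by
    rw [dep_of_runFn hB]; simp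
  have hm1 : β₁.length + 1 = m - 1 := by
    have h1 : dep (q₀, [bot]) π j < m := hPj
    have h2 := hgt (j + 1) (Nat.lt_succ_self j) (by omega)
    omega
  set p2 := π.drop (j + 1) with hp2
  have hlenp2 : p2.length = n - 1 - j := by
    rw [hp2, List.length_drop, hlen]
    omega
  have hsplit : π = π.take (j + 1) ++ p2 := (List.take_append_drop (j + 1) π).symm
  have hlentake : (π.take (j + 1)).length = j + 1 := by
    rw [List.length_take]
    omega
  have hmid2 : runFn (u, w :: x :: β₁) p2 = some (r, y :: x0 :: β) := by
    have h3 := runFn_append (q₀, [bot]) (π.take (j + 1)) p2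
    rw [← hsplit, hrun, hB, Option.bind_some] at h3
    exact h3.symm
  have hdepmid : ∀ kk, kk < p2.length → m ≤ dep (u, w :: x :: β₁) p2 kk := by
    intro kk hkk
    have harr : dep (q₀, [bot]) π (j + 1 + kk) = dep (u, w :: x :: β₁) p2 kk := by
      conv_lhs => rw [hsplit]
      rw [show j + 1 + kk = (π.take (j + 1)).length + kk by rw [hlentake],
        dep_append_right _ hB kk]
    rw [← harr]
    exact hgt (j + 1 + kk) (by omega) (by omega)
  obtain ⟨τ, hτrun, hτeq⟩ :=
    runFn_unlift (q := u) (a := w) (σ := []) (β := x :: β₁) (c := (r, y :: x0 :: β))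
      (by simpa using hmid2) (by
        intro kk hkk
        simp only [List.length_cons]
        have := hdepmid kk hkk
        simp only [List.singleton_append]
        omega)
  have hτlen : τ.length = 1 := by
    have := congrArg List.length hτeq
    simp at this
    omega
  rcases τ with _ | ⟨y0, τ'⟩
  · simp at hτlen
  rcases τ' with _ | _
  · simp only at hτeq
    rw [List.singleton_append] at hτeq
    injection hτeq with e1 e2
    injection e2 with e3 e4
    subst e1
    refine ⟨j, by omega, q, x, u, w, π.take j, p2,
      mem_Eset.mpr ⟨by rw [List.length_take]; omega, β₁, hA⟩,
      mem_Dset.mpr ⟨hlenp2, hτrun⟩, ?_⟩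
    conv_lhs => rw [hsplit]
    rw [hC]
    simp
  · simp at hτlen

lemma push_comp_eq {q₀ r : Q} {bot y : Γ} {n j j' : ℕ} {q x u w q' x' u' w'}
    {p1 p2 p1' p2' : List (Op Q Γ)}
    (hj : j < n) (hj' : j' < n)
    (h1 : p1 ∈ Eset q₀ bot j q x) (h2 : p2 ∈ Dset (n - 1 - j) u w r y)
    (h1' : p1' ∈ Eset q₀ bot j' q' x') (h2' : p2' ∈ Dset (n - 1 - j') u' w' r y)
    (heq : p1 ++ Op.push q x u w :: p2 = p1' ++ Op.push q' x' u' w' :: p2') :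
    j = j' ∧ q = q' ∧ x = x' ∧ u = u' ∧ w = w' ∧ p1 = p1' ∧ p2 = p2' := by
  obtain ⟨hl1, β, hr1⟩ := mem_Eset.mp h1
  obtain ⟨hl2, hr2⟩ := mem_Dset.mp h2
  obtain ⟨hl1', β', hr1'⟩ := mem_Eset.mp h1'
  obtain ⟨hl2', hr2'⟩ := mem_Dset.mp h2'
  have hf := push_comp_E hr1 hr2
  have hf' := push_comp_E hr1' hr2'
  rw [← heq] at hf'
  have hββ : β.length = β'.length := by
    have := hf.1.symm.trans hf'.1
    simp only [Option.some_inj, Prod.mk.injEq, List.cons.injEq] at this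
    have := congrArg List.length this.2.2.2
    simpa using this
  have hjj : j = j' := by
    by_contra hne
    rcases Nat.lt_or_ge j j' with hlt | hge
    · have h := hf.2.2 p1'.length (by omega) (by omega)
      rw [hf'.2.1] at h
      omega
    · have hlt : j' < j := by omega
      have h := hf'.2.2 p1.length (by omega) (by omega)
      rw [hf.2.1] at h
      omega
  subst hjj
  obtain ⟨hp1, htail⟩ := List.append_inj heq (by omega)
  injection htail with hpush hp2
  injection hpush with e1 e2 e3 e4
  exact ⟨rfl, e1, e2, e3, e4, hp1, hp2⟩

/-- Total weight of runs of length `n` from the initial configuration ending in state `r`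
with top symbol `y`. -/
noncomputable def Ew (q₀ : Q) (bot : Γ) (Δ : ℕ → Op Q Γ → ℝ) (n : ℕ) (r : Q) (y : Γ) : ℝ :=
  ∑ π ∈ Eset q₀ bot n r y, runWeight Δ 1 π

lemma Ew_rec (q₀ : Q) (bot : Γ) (Δ : ℕ → Op Q Γ → ℝ) (n : ℕ) (r : Q) (y : Γ) :
    Ew q₀ bot Δ n r y = Bw Δ 1 n q₀ bot r y +
      ∑ j ∈ Finset.range n, ∑ q : Q, ∑ x : Γ, ∑ u : Q, ∑ w : Γ,
        Ew q₀ bot Δ j q x * Δ (j + 1) (Op.push q x u w) *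
          Bw Δ (j + 2) (n - 1 - j) u w r y := by
  classical
  set PP : Finset (List (Op Q Γ)) :=
    (Finset.range n).biUnion (fun j =>
      (Finset.univ : Finset (Q × Γ × Q × Γ)).biUnion (fun κ =>
        ((Eset q₀ bot j κ.1 κ.2.1) ×ˢ (Dset (n - 1 - j) κ.2.2.1 κ.2.2.2 r y)).image
          (fun p => p.1 ++ Op.push κ.1 κ.2.1 κ.2.2.1 κ.2.2.2 :: p.2))) with hPP
  have hmemPP : ∀ π, π ∈ PP ↔ ∃ j, j < n ∧ ∃ q x u w p1 p2,
      p1 ∈ Eset q₀ bot j q x ∧ p2 ∈ Dset (n - 1 - j) u w r y ∧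
      π = p1 ++ Op.push q x u w :: p2 := by
    intro π
    simp only [hPP, Finset.mem_biUnion, Finset.mem_range, Finset.mem_univ, true_and,
      Finset.mem_image, Finset.mem_product, Prod.exists]
    constructor
    · rintro ⟨j, hj, q, x, u, w, p1, p2, ⟨m1, m2⟩, rfl⟩
      exact ⟨j, hj, q, x, u, w, p1, p2, m1, m2, rfl⟩
    · rintro ⟨j, hj, q, x, u, w, p1, p2, m1, m2, rfl⟩
      exact ⟨j, hj, q, x, u, w, p1, p2, ⟨m1, m2⟩, rfl⟩
  have hunion : Eset q₀ bot n r y = Dset n q₀ bot r y ∪ PP := by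
    ext π
    simp only [Finset.mem_union]
    constructor
    · intro h
      rcases Eset_cases h with h | ⟨j, hj, q, x, u, w, p1, p2, hp1, hp2, rfl⟩
      · exact Or.inl h
      · exact Or.inr ((hmemPP _).mpr ⟨j, hj, q, x, u, w, p1, p2, hp1, hp2, rfl⟩)
    · rintro (h | h)
      · obtain ⟨hl, hr⟩ := mem_Dset.mp h
        exact mem_Eset.mpr ⟨hl, [], hr⟩
      · obtain ⟨j, hj, q, x, u, w, p1, p2, hp1, hp2, rfl⟩ := (hmemPP _).mp h
        obtain ⟨hl1, β, hr1⟩ := mem_Eset.mp hp1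
        obtain ⟨hl2, hr2⟩ := mem_Dset.mp hp2
        refine mem_Eset.mpr ⟨?_, x :: β, (push_comp_E hr1 hr2).1⟩
        simp [hl1, hl2]
        omega
  have hdisj : Disjoint (Dset n q₀ bot r y) PP := by
    rw [Finset.disjoint_left]
    intro π hπD hπP
    obtain ⟨hl, hr⟩ := mem_Dset.mp hπD
    obtain ⟨j, hj, q, x, u, w, p1, p2, hp1, hp2, rfl⟩ := (hmemPP _).mp hπP
    obtain ⟨hl1, β, hr1⟩ := mem_Eset.mp hp1
    obtain ⟨hl2, hr2⟩ := mem_Dset.mp hp2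
    have := hr.symm.trans (push_comp_E hr1 hr2).1
    simp only [Option.some_inj, Prod.mk.injEq, List.cons.injEq] at this
    have := congrArg List.length this.2.2
    simp at this
  rw [Ew, hunion, Finset.sum_union hdisj]
  congr 1
  rw [hPP, Finset.sum_biUnion]
  · refine Finset.sum_congr rfl fun j hj => ?_
    rw [Finset.mem_range] at hj
    rw [Finset.sum_biUnion]
    · rw [Fintype.sum_prod_type]
      refine Finset.sum_congr rfl fun q _ => ?_
      rw [Fintype.sum_prod_type]
      refine Finset.sum_congr rfl fun x _ => ?_
      rw [Fintype.sum_prod_type]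
      refine Finset.sum_congr rfl fun u _ => Finset.sum_congr rfl fun w _ => ?_
      rw [Finset.sum_image (by
        rintro ⟨p1, p2⟩ hm ⟨p1', p2'⟩ hm' h
        rw [Finset.mem_coe, Finset.mem_product] at hm hm'
        obtain ⟨-, -, -, -, -, e6, e7⟩ := push_comp_eq hj hj hm.1 hm.2 hm'.1 hm'.2 h
        exact Prod.ext e6 e7)]
      rw [Finset.sum_product]
      rw [Ew, Bw, Finset.sum_mul, Finset.sum_mul]
      refine Finset.sum_congr rfl fun p1 hp1 => ?_
      rw [Finset.mul_sum]
      refine Finset.sum_congr rfl fun p2 hp2 => ?_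
      dsimp only
      obtain ⟨hl1, -⟩ := mem_Eset.mp hp1
      obtain ⟨hl2, -⟩ := mem_Dset.mp hp2
      rw [show (p1 ++ Op.push q x u w :: p2)
          = p1 ++ ([Op.push q x u w] ++ p2) from by simp,
        runWeight_append, hl1, runWeight_append]
      simp only [runWeight, List.length_singleton]
      rw [show 1 + j = j + 1 by omega, show j + 1 + 1 = j + 2 by omega]
      ring
    · intro κ _ κ' _ hne
      simp only [Function.onFun]
      rw [Finset.disjoint_left]
      intro π h1 h2
      simp only [Finset.mem_image, Finset.mem_product, Prod.exists] at h1 h2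
      obtain ⟨p1, p2, ⟨m1, m2⟩, he1⟩ := h1
      obtain ⟨p1', p2', ⟨m1', m2'⟩, he2⟩ := h2
      rw [← he2] at he1
      obtain ⟨-, e1, e2, e3, e4, -, -⟩ := push_comp_eq hj hj m1 m2 m1' m2' he1
      exact hne (Prod.ext e1 (Prod.ext e2 (Prod.ext e3 e4)))
  · intro j1 hj1 j2 hj2 hne
    simp only [Function.onFun]
    rw [Finset.mem_coe, Finset.mem_range] at hj1 hj2
    rw [Finset.disjoint_left]
    intro π h1 h2
    simp only [Finset.mem_biUnion, Finset.mem_univ, true_and, Finset.mem_image,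
      Finset.mem_product, Prod.exists] at h1 h2
    obtain ⟨q, x, u, w, p1, p2, ⟨m1, m2⟩, he1⟩ := h1
    obtain ⟨q', x', u', w', p1', p2', ⟨m1', m2'⟩, he2⟩ := h2
    rw [← he2] at he1
    obtain ⟨e0, -⟩ := push_comp_eq hj1 hj2 m1 m2 m1' m2' he1
    exact hne e0


lemma sum_ite_qg (f : Q → Γ → ℝ) (q₀ : Q) (bot : Γ) :
    (∑ q : Q, ∑ x : Γ, if q = q₀ ∧ x = bot then f q x else 0) = f q₀ bot := by
  rw [Finset.sum_eq_single q₀]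
  · rw [Finset.sum_eq_single bot]
    · simp
    · intro b _ hb
      simp [hb]
    · intro h
      exact absurd (Finset.mem_univ bot) h
  · intro a _ ha
    exact Finset.sum_eq_zero fun b _ => by simp [ha]
  · intro h
    exact absurd (Finset.mem_univ q₀) h

lemma alTable_stable (q₀ : Q) (bot : Γ) (Δ : ℕ → Op Q Γ → ℝ) (N : ℕ) :
    ∀ J, J ≤ N → ∀ r y, alTable q₀ bot Δ N J r y = alTable q₀ bot Δ J J r y := by
  induction N with
  | zero =>
    intro J h r y
    have : J = 0 := Nat.le_zero.mp h
    subst this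
    rfl
  | succ N ih =>
    intro J h r y
    rcases eq_or_lt_of_le h with rfl | hlt
    · rfl
    · show alTable q₀ bot Δ (N + 1) J r y = _
      simp only [alTable]
      rw [if_neg (by omega)]
      exact ih J (by omega) r y

lemma alph_eq (q₀ : Q) (bot : Γ) (Δ : ℕ → Op Q Γ → ℝ) :
    ∀ n r y, alph q₀ bot Δ (n + 1) r y = Ew q₀ bot Δ n r y := by
  intro n
  induction n using Nat.strong_induction_on with
  | _ n IH =>
  intro r y
  have hunf : alph q₀ bot Δ (n + 1) r y =
      ∑ Jp ∈ Finset.range (n + 1), ∑ q : Q, ∑ x : Γ,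
        alTable q₀ bot Δ n Jp q x * gam q₀ bot Δ n Jp q x r y := by
    show alTable q₀ bot Δ (n + 1) (n + 1) r y = _
    simp only [alTable]
    rw [if_pos trivial]
  rw [hunf, Finset.sum_range_succ', Ew_rec]
  have h0 : (∑ q : Q, ∑ x : Γ, alTable q₀ bot Δ n 0 q x * gam q₀ bot Δ n 0 q x r y)
      = Bw Δ 1 n q₀ bot r y := by
    have e : ∀ q xx, alTable q₀ bot Δ n 0 q xx * gam q₀ bot Δ n 0 q xx r y
        = if q = q₀ ∧ xx = bot then Bw Δ 1 n q xx r y else 0 := by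
      intro q xx
      rw [alTable_stable q₀ bot Δ n 0 (by omega), (gam_eq q₀ bot Δ n).1]
      show (if 0 = 0 ∧ q = q₀ ∧ xx = bot then (1 : ℝ) else 0) * _ = _
      by_cases hc : q = q₀ ∧ xx = bot
      · simp [hc]
      · rw [if_neg (by tauto), if_neg hc]
        ring
    calc (∑ q : Q, ∑ xx : Γ, alTable q₀ bot Δ n 0 q xx * gam q₀ bot Δ n 0 q xx r y)
        = ∑ q : Q, ∑ xx : Γ, (if q = q₀ ∧ xx = bot then Bw Δ 1 n q xx r y else 0) :=
          Finset.sum_congr rfl fun q _ => Finset.sum_congr rfl fun xx _ => e q xx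
      _ = Bw Δ 1 n q₀ bot r y := sum_ite_qg _ q₀ bot
  rw [h0, add_comm]
  congr 1
  refine Finset.sum_congr rfl fun j hj => ?_
  rw [Finset.mem_range] at hj
  refine Finset.sum_congr rfl fun q _ => ?_
  refine Finset.sum_congr rfl fun x _ => ?_
  rw [alTable_stable q₀ bot Δ n (j + 1) (by omega)]
  have hIH := IH j hj q x
  rw [alph] at hIH
  rw [hIH]
  rw [(gam_eq q₀ bot Δ n).2 (j + 1) (by omega) (by omega) q x r y]
  rw [show n - (j + 1) = n - 1 - j by omega]
  rw [Finset.mul_sum]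
  refine Finset.sum_congr rfl fun u _ => ?_
  rw [Finset.mul_sum]
  refine Finset.sum_congr rfl fun w _ => by ring

end LangAux









/-- **Correctness of the forward weights of Lang's algorithm.**  For all `t ≥ 0` and all
`r ∈ Q`, `y ∈ Γ`, the forward weight `α[t][r,y]` (here `alph q₀ bot Δ (t+1) r y` in shifted
indexing) equals the total weight `Σ ψ(π)` over all runs `π` of length `t` starting from the
initial configuration `(q₀, ⊥)` and ending in state `r` with a nonempty stack whose top
symbol is `y`.  Consequently, whenever the total `Σ_{r',y'} α[t][r',y']` is positive, the
normalized quantity `α[t][r,y] / Σ_{r',y'} α[t][r',y']` equals the fraction of total run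
weight carried by runs of length `t` ending in state `r` with top stack symbol `y`. -/
theorem alph_correct {Q Γ : Type} [Fintype Q] [Fintype Γ] [DecidableEq Q] [DecidableEq Γ]
    (q₀ : Q) (bot : Γ) (Δ : ℕ → Op Q Γ → ℝ) (hΔ : ∀ k o, 0 ≤ Δ k o)
    (t : ℕ) (r : Q) (y : Γ) :
    alph q₀ bot Δ (t + 1) r y =
      (∑ᶠ π ∈ {π : List (Op Q Γ) | π.length = t ∧
          ∃ β : List Γ, RunFrom (q₀, [bot]) π (r, y :: β)},
        runWeight Δ 1 π) ∧
    (0 < ∑ r' : Q, ∑ y' : Γ, alph q₀ bot Δ (t + 1) r' y' →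
      alph q₀ bot Δ (t + 1) r y / (∑ r' : Q, ∑ y' : Γ, alph q₀ bot Δ (t + 1) r' y') =
        (∑ᶠ π ∈ {π : List (Op Q Γ) | π.length = t ∧
            ∃ β : List Γ, RunFrom (q₀, [bot]) π (r, y :: β)},
          runWeight Δ 1 π) /
        (∑ᶠ π ∈ {π : List (Op Q Γ) | π.length = t ∧
            ∃ (r' : Q) (y' : Γ) (β : List Γ), RunFrom (q₀, [bot]) π (r', y' :: β)},
          runWeight Δ 1 π)) := by
  classical
  have h1 : alph q₀ bot Δ (t + 1) r y = LangAux.Ew q₀ bot Δ t r y :=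
    LangAux.alph_eq q₀ bot Δ t r y
  have hset : ∀ (r' : Q) (y' : Γ),
      {π : List (Op Q Γ) | π.length = t ∧ ∃ β : List Γ, RunFrom (q₀, [bot]) π (r', y' :: β)}
        = ↑(LangAux.Eset q₀ bot t r' y') := by
    intro r' y'
    ext π
    simp only [Set.mem_setOf_eq, Finset.mem_coe, LangAux.mem_Eset,
      ← LangAux.runFn_eq_some_iff]
  have hnum : (∑ᶠ π ∈ {π : List (Op Q Γ) | π.length = t ∧
      ∃ β : List Γ, RunFrom (q₀, [bot]) π (r, y :: β)}, runWeight Δ 1 π)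
      = LangAux.Ew q₀ bot Δ t r y := by
    rw [hset r y, finsum_mem_coe_finset]
    rfl
  have hpart1 : alph q₀ bot Δ (t + 1) r y =
      (∑ᶠ π ∈ {π : List (Op Q Γ) | π.length = t ∧
        ∃ β : List Γ, RunFrom (q₀, [bot]) π (r, y :: β)}, runWeight Δ 1 π) := by
    rw [h1, hnum]
  refine ⟨hpart1, ?_⟩
  intro _
  have hbig : {π : List (Op Q Γ) | π.length = t ∧ ∃ (r' : Q) (y' : Γ) (β : List Γ),
      RunFrom (q₀, [bot]) π (r', y' :: β)}
      = ↑((Finset.univ : Finset (Q × Γ)).biUnion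
          (fun p => LangAux.Eset q₀ bot t p.1 p.2)) := by
    ext π
    simp only [Set.mem_setOf_eq, Finset.mem_coe, Finset.mem_biUnion, Finset.mem_univ,
      true_and, LangAux.mem_Eset, ← LangAux.runFn_eq_some_iff, Prod.exists]
    constructor
    · rintro ⟨hl, r', y', β, hr⟩
      exact ⟨r', y', hl, β, hr⟩
    · rintro ⟨r', y', hl, β, hr⟩
      exact ⟨hl, r', y', β, hr⟩
  have hdisjBF : (↑(Finset.univ : Finset (Q × Γ)) : Set (Q × Γ)).PairwiseDisjoint
      (fun p : Q × Γ => LangAux.Eset q₀ bot t p.1 p.2) := by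
    intro a _ b _ hne
    simp only [Function.onFun]
    rw [Finset.disjoint_left]
    intro π hπa hπb
    obtain ⟨-, βa, ha⟩ := LangAux.mem_Eset.mp hπa
    obtain ⟨-, βb, hb⟩ := LangAux.mem_Eset.mp hπb
    rw [ha] at hb
    simp only [Option.some_inj, Prod.mk.injEq, List.cons.injEq] at hb
    exact hne (Prod.ext hb.1 hb.2.1)
  have hden : (∑ᶠ π ∈ {π : List (Op Q Γ) | π.length = t ∧ ∃ (r' : Q) (y' : Γ) (β : List Γ),
      RunFrom (q₀, [bot]) π (r', y' :: β)}, runWeight Δ 1 π)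
      = ∑ r' : Q, ∑ y' : Γ, alph q₀ bot Δ (t + 1) r' y' := by
    rw [hbig, finsum_mem_coe_finset, Finset.sum_biUnion hdisjBF, Fintype.sum_prod_type]
    refine Finset.sum_congr rfl fun r' _ => Finset.sum_congr rfl fun y' _ => ?_
    rw [LangAux.alph_eq q₀ bot Δ t r' y']
    rfl
  rw [← hpart1, hden]
end

section
/- For any finite list of context-free languages L₁, …, L_k over a common alphabet Σ, there exist a single restricted PDA P over Σ and subsets G₁, …, G_k of its states such that for every string w ∈ Σ* and every j ∈ {1, …, k}: w ∈ L_j if and only if some run of P scanning w ends in a state of G_j with ⊥ as the top stack symbol. Consequently, w ∈ L₁ ∩ ⋯ ∩ L_k if and only if for every j ∈ {1, …, k} some run of P scanning w ends in a state of G_j with ⊥ on top of the stack. -/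
/-- A *restricted PDA*: a bottom-marked nondeterministic pushdown automaton each of whose
transitions scans exactly one input symbol and either pushes a single symbol on top of the
current top symbol (`q, a, x → r, xy`), replaces the top symbol (`q, a, x → r, y`), or pops
the top symbol (`q, a, x → r, ε`).  Stacks are lists whose head is the top of the stack. -/
structure RestrictedPDA (Q T S : Type) where
  /-- The start state. -/
  start : Q
  /-- The designated bottom symbol `⊥`. -/
  bot : S
  /-- `pushTrans q a x r y` is the transition `q, a, x → r, xy`. -/
  pushTrans : Q → T → S → Q → S → Prop
  /-- `replTrans q a x r y` is the transition `q, a, x → r, y`. -/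
  replTrans : Q → T → S → Q → S → Prop
  /-- `popTrans q a x r` is the transition `q, a, x → r, ε`. -/
  popTrans : Q → T → S → Q → Prop
  /-- The set of accept states. -/
  accept : Set Q

/-- A single step of a restricted PDA, scanning one input symbol. -/
inductive RestrictedPDA.Step {Q T S : Type} (M : RestrictedPDA Q T S) :
    Q × List S → T → Q × List S → Prop
  | push {q : Q} {a : T} {x : S} {r : Q} {y : S} {β : List S} :
      M.pushTrans q a x r y → RestrictedPDA.Step M (q, x :: β) a (r, y :: x :: β)
  | repl {q : Q} {a : T} {x : S} {r : Q} {y : S} {β : List S} :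
      M.replTrans q a x r y → RestrictedPDA.Step M (q, x :: β) a (r, y :: β)
  | pop {q : Q} {a : T} {x : S} {r : Q} {β : List S} :
      M.popTrans q a x r → RestrictedPDA.Step M (q, x :: β) a (r, β)

/-- `M.Scans c w c'` means that `M` can go from configuration `c` to configuration `c'` by a
run scanning exactly the string `w` (one input symbol per step). -/
inductive RestrictedPDA.Scans {Q T S : Type} (M : RestrictedPDA Q T S) :
    Q × List S → List T → Q × List S → Prop
  | refl (c : Q × List S) : RestrictedPDA.Scans M c [] c
  | step {c c' c'' : Q × List S} {a : T} {w : List T} :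
      M.Step c a c' → RestrictedPDA.Scans M c' w c'' → RestrictedPDA.Scans M c (a :: w) c''

/-- The language of a restricted PDA: it accepts `w` iff some run starting from the start
state with stack containing only `⊥` and scanning `w` ends in an accept state with `⊥` as
the top stack symbol. -/
def RestrictedPDA.language {Q T S : Type} (M : RestrictedPDA Q T S) : Language T :=
  {w | ∃ r ∈ M.accept, ∃ β : List S, M.Scans (M.start, [M.bot]) w (r, M.bot :: β)}


namespace RPDAProof

structure BG (T : Type) where
  N : Type
  start : N
  re : N → T → Prop
  ru : N → N → Prop
  rb : N → N → N → Prop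
  reps : N → Prop

variable {T : Type}

inductive BG.Gen (G : BG T) : G.N → List T → Prop
  | eps {A} : G.reps A → BG.Gen G A []
  | term {A a} : G.re A a → BG.Gen G A [a]
  | unit {A B w} : G.ru A B → BG.Gen G B w → BG.Gen G A w
  | bin {A B C u v} : G.rb A B C → BG.Gen G B u → BG.Gen G C v → BG.Gen G A (u ++ v)


variable {T : Type}

section Conversion

variable (g : ContextFreeGrammar.{0} T)

abbrev occN (A : g.NT) : Prop :=
  A = g.initial ∨ ∃ r ∈ g.rules, A = r.input ∨ Symbol.nonterminal A ∈ r.output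

abbrev occT (a : T) : Prop := ∃ r ∈ g.rules, Symbol.terminal a ∈ r.output

abbrev occS (s : List (Symbol T g.NT)) : Prop := s = [] ∨ ∃ r ∈ g.rules, s <:+ r.output

abbrev BN := {A // occN g A} ⊕ ({s // occS g s} ⊕ {a // occT g a})

/-- The binary grammar associated to a context-free grammar. -/
def toBG : BG T where
  N := BN g
  start := Sum.inl ⟨g.initial, Or.inl rfl⟩
  re X a := ∃ h : occT g a, X = Sum.inr (Sum.inr ⟨a, h⟩)
  ru X Y := ∃ r ∈ g.rules, ∃ (hA : occN g r.input) (hs : occS g r.output),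
    X = Sum.inl ⟨r.input, hA⟩ ∧ Y = Sum.inr (Sum.inl ⟨r.output, hs⟩)
  rb X Y Z := ∃ (hd : Symbol T g.NT) (tl : List (Symbol T g.NT))
    (h : occS g (hd :: tl)) (h2 : occS g tl),
    X = Sum.inr (Sum.inl ⟨hd :: tl, h⟩) ∧ Z = Sum.inr (Sum.inl ⟨tl, h2⟩) ∧
    ((∃ a ha, hd = Symbol.terminal a ∧ Y = Sum.inr (Sum.inr ⟨a, ha⟩)) ∨
     (∃ A hA, hd = Symbol.nonterminal A ∧ Y = Sum.inl ⟨A, hA⟩))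
  reps X := ∃ h : occS g [], X = Sum.inr (Sum.inl ⟨[], h⟩)

/-- Denotation of a nonterminal of `toBG g` as a string of symbols of `g`. -/
def denote : BN g → List (Symbol T g.NT)
  | Sum.inl A => [Symbol.nonterminal A.1]
  | Sum.inr (Sum.inl s) => s.1
  | Sum.inr (Sum.inr a) => [Symbol.terminal a.1]

lemma gen_to_derives {X : (toBG g).N} {w : List T} (h : (toBG g).Gen X w) :
    g.Derives (denote g X) (w.map Symbol.terminal) := by
  induction h with
  | eps h => obtain ⟨h, rfl⟩ := h; exact ContextFreeGrammar.Derives.refl _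
  | term h => obtain ⟨h, rfl⟩ := h; exact ContextFreeGrammar.Derives.refl _
  | unit h _ ih =>
      obtain ⟨r, hr, hA, hs, rfl, rfl⟩ := h
      exact (ContextFreeGrammar.Produces.single
        ⟨r, hr, ContextFreeRule.Rewrites.input_output⟩).trans ih
  | bin h _ _ ihY ihZ =>
      obtain ⟨hd, tl, h1, h2, rfl, rfl, hY⟩ := h
      rename_i B u v hgB hgC
      simp only [denote] at ihZ
      rw [List.map_append]
      have step2 : g.Derives (List.map Symbol.terminal u ++ tl)
          (List.map Symbol.terminal u ++ List.map Symbol.terminal v) := ihZ.append_left _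
      have key : g.Derives (hd :: tl) (List.map Symbol.terminal u ++ tl) := by
        rcases hY with ⟨a, ha, rfl, rfl⟩ | ⟨A, hA, rfl, rfl⟩ <;>
          simpa [denote] using ihY.append_right tl
      exact key.trans step2

/-- Generation of a word by a single symbol. -/
def SymGen : Symbol T g.NT → List T → Prop
  | Symbol.terminal a, u => u = [a]
  | Symbol.nonterminal A, u => ∃ h : occN g A, (toBG g).Gen (Sum.inl ⟨A, h⟩) u

/-- Generation of a word by a string of symbols, symbol-wise. -/
inductive GenS : List (Symbol T g.NT) → List T → Prop
  | nil : GenS [] []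
  | cons {X s u v} : SymGen g X u → GenS s v → GenS (X :: s) (u ++ v)

lemma GenS.append_split {s₁ s₂ : List (Symbol T g.NT)} {w : List T}
    (h : GenS g (s₁ ++ s₂) w) :
    ∃ w₁ w₂, w = w₁ ++ w₂ ∧ GenS g s₁ w₁ ∧ GenS g s₂ w₂ := by
  induction s₁ generalizing w with
  | nil => exact ⟨[], w, rfl, GenS.nil, h⟩
  | cons X s₁ ih =>
      rw [List.cons_append] at h
      cases h with
      | cons hX hs =>
          obtain ⟨w₁, w₂, rfl, h₁, h₂⟩ := ih hs
          exact ⟨_ ++ w₁, w₂, by simp, GenS.cons hX h₁, h₂⟩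

lemma GenS.append_mk {s₁ s₂ : List (Symbol T g.NT)} {w₁ w₂ : List T}
    (h₁ : GenS g s₁ w₁) (h₂ : GenS g s₂ w₂) : GenS g (s₁ ++ s₂) (w₁ ++ w₂) := by
  induction h₁ with
  | nil => exact h₂
  | cons hX hs ih => rw [List.append_assoc]; exact GenS.cons hX ih

lemma genS_terminal_word (w : List T) : GenS g (w.map Symbol.terminal) w := by
  induction w with
  | nil => exact GenS.nil
  | cons a w ih =>
      have : GenS g (Symbol.terminal a :: w.map Symbol.terminal) ([a] ++ w) :=
        GenS.cons (by rfl) ih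
      simpa using this

lemma occS_tail {x : Symbol T g.NT} {tl : List (Symbol T g.NT)} (h : occS g (x :: tl)) :
    occS g tl := by
  rcases h with h | ⟨r, hr, hsuf⟩
  · exact absurd h (by simp)
  · exact Or.inr ⟨r, hr, ((List.suffix_cons x tl).trans hsuf)⟩

lemma occ_head {x : Symbol T g.NT} {tl : List (Symbol T g.NT)} (h : occS g (x :: tl)) :
    ∃ r ∈ g.rules, x ∈ r.output := by
  rcases h with h | ⟨r, hr, hsuf⟩
  · exact absurd h (by simp)
  · exact ⟨r, hr, hsuf.subset (by simp)⟩

lemma gen_suf {s : List (Symbol T g.NT)} {w : List T} (hg : GenS g s w) (h : occS g s) :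
    (toBG g).Gen (Sum.inr (Sum.inl ⟨s, h⟩)) w := by
  induction hg with
  | nil => exact BG.Gen.eps ⟨h, rfl⟩
  | @cons X s' u v hX hs ih =>
      have h2 := occS_tail g h
      cases X with
      | terminal a =>
          obtain ⟨r, hr, hm⟩ := occ_head g h
          cases hX
          exact BG.Gen.bin ⟨_, _, h, h2, rfl, rfl, Or.inl ⟨a, ⟨r, hr, hm⟩, rfl, rfl⟩⟩
            (BG.Gen.term ⟨⟨r, hr, hm⟩, rfl⟩) (ih h2)
      | nonterminal A =>
          have hA : occN g A := by
            obtain ⟨r, hr, hm⟩ := occ_head g h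
            exact Or.inr ⟨r, hr, Or.inr hm⟩
          obtain ⟨h', hgen⟩ := hX
          exact BG.Gen.bin ⟨_, _, h, h2, rfl, rfl, Or.inr ⟨A, hA, rfl, rfl⟩⟩ hgen (ih h2)

lemma genS_repl (r : ContextFreeRule T g.NT) (hr : r ∈ g.rules) :
    ∀ (p : List (Symbol T g.NT)) {q w}, GenS g (p ++ r.output ++ q) w →
      GenS g (p ++ Symbol.nonterminal r.input :: q) w := by
  intro p
  induction p with
  | nil =>
      intro q w h
      obtain ⟨w₁, w₂, rfl, h₁, h₂⟩ := GenS.append_split g (h : GenS g (r.output ++ q) w)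
      have hsuf : occS g r.output := Or.inr ⟨r, hr, List.suffix_refl _⟩
      have hocc : occN g r.input := Or.inr ⟨r, hr, Or.inl rfl⟩
      have : (toBG g).Gen (Sum.inl ⟨r.input, hocc⟩) w₁ :=
        BG.Gen.unit ⟨r, hr, hocc, hsuf, rfl, rfl⟩ (gen_suf g h₁ hsuf)
      exact GenS.cons (X := Symbol.nonterminal r.input) ⟨hocc, this⟩ h₂
  | cons X p' ih =>
      intro q w h
      rw [List.cons_append, List.cons_append] at h
      cases h with
      | cons hX hs => exact GenS.cons hX (ih hs)

lemma derives_to_genS {s : List (Symbol T g.NT)} {w : List T}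
    (h : g.Derives s (w.map Symbol.terminal)) : GenS g s w := by
  induction h using Relation.ReflTransGen.head_induction_on with
  | refl => exact genS_terminal_word g w
  | head hp _ ih =>
      obtain ⟨r, hr, hrw⟩ := hp
      obtain ⟨p, q, rfl, rfl⟩ := hrw.exists_parts
      have := genS_repl g r hr p (by simpa using ih)
      simpa using this

/-- The main conversion result. -/
theorem toBG_gen_iff (w : List T) :
    (toBG g).Gen (toBG g).start w ↔ w ∈ g.language := by
  constructor
  · intro h
    have := gen_to_derives g h
    simpa [denote, toBG, ContextFreeGrammar.mem_language_iff] using this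
  · intro h
    rw [ContextFreeGrammar.mem_language_iff] at h
    have h2 := derives_to_genS g h
    cases h2 with
    | cons hX hs =>
        cases hs
        obtain ⟨h', hgen⟩ := hX
        simpa [toBG] using hgen

lemma finite_setOf_nt_mem (l : List (Symbol T g.NT)) :
    {A : g.NT | Symbol.nonterminal A ∈ l}.Finite := by
  induction l with
  | nil => simp
  | cons x tl ih =>
      simp only [List.mem_cons, Set.setOf_or]
      refine Set.Finite.union ?_ ih
      cases x with
      | terminal a => convert Set.finite_empty; simp
      | nonterminal B =>
          refine Set.Finite.subset (Set.finite_singleton B) ?_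
          intro A hA
          simp only [Set.mem_setOf_eq, Symbol.nonterminal.injEq] at hA
          simp [hA]

lemma finite_setOf_t_mem (l : List (Symbol T g.NT)) :
    {a : T | Symbol.terminal a ∈ l}.Finite := by
  induction l with
  | nil => simp
  | cons x tl ih =>
      simp only [List.mem_cons, Set.setOf_or]
      refine Set.Finite.union ?_ ih
      cases x with
      | terminal b =>
          refine Set.Finite.subset (Set.finite_singleton b) ?_
          intro a ha
          simp only [Set.mem_setOf_eq, Symbol.terminal.injEq] at ha
          simp [ha]
      | nonterminal B => convert Set.finite_empty; simp

lemma finite_BN : Finite (BN g) := by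
  have h1 : Finite {A // occN g A} := by
    refine Set.Finite.to_subtype ?_
    have : {A | occN g A} ⊆ insert g.initial
        (⋃ r ∈ (↑g.rules : Set (ContextFreeRule T g.NT)), {r.input} ∪ {A | Symbol.nonterminal A ∈ r.output}) := by
      intro A hA
      rcases hA with rfl | ⟨r, hr, h⟩
      · exact Set.mem_insert _ _
      · refine Set.mem_insert_iff.2 (Or.inr ?_)
        refine Set.mem_biUnion hr ?_
        rcases h with rfl | h
        · exact Or.inl rfl
        · exact Or.inr h
    refine Set.Finite.subset ?_ this
    refine Set.Finite.insert _ (Set.Finite.biUnion g.rules.finite_toSet ?_)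
    intro r _
    exact (Set.finite_singleton _).union (finite_setOf_nt_mem g _)
  have h2 : Finite {s // occS g s} := by
    refine Set.Finite.to_subtype ?_
    have : {s | occS g s} ⊆ insert [] (⋃ r ∈ (↑g.rules : Set (ContextFreeRule T g.NT)), {s | s ∈ r.output.tails}) := by
      intro s hs
      rcases hs with rfl | ⟨r, hr, h⟩
      · exact Set.mem_insert _ _
      · exact Set.mem_insert_iff.2 (Or.inr (Set.mem_biUnion hr (by simpa using h)))
    refine Set.Finite.subset ?_ this
    refine Set.Finite.insert _ (Set.Finite.biUnion g.rules.finite_toSet ?_)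
    intro r _
    exact r.output.tails.finite_toSet
  have h3 : Finite {a // occT g a} := by
    refine Set.Finite.to_subtype ?_
    have : {a | occT g a} ⊆ ⋃ r ∈ (↑g.rules : Set (ContextFreeRule T g.NT)), {a | Symbol.terminal a ∈ r.output} := by
      intro a ⟨r, hr, h⟩
      exact Set.mem_biUnion hr h
    exact Set.Finite.subset (Set.Finite.biUnion g.rules.finite_toSet
      fun r _ => finite_setOf_t_mem g _) this
  exact inferInstance

/-- Every context-free language is the language of a finite binary grammar. -/
theorem exists_BG {L : Language T} (hL : L.IsContextFree) :
    ∃ G : BG T, Finite G.N ∧ ∀ w, G.Gen G.start w ↔ w ∈ L := by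
  obtain ⟨g, rfl⟩ := hL
  exact ⟨toBG g, finite_BN g, toBG_gen_iff g⟩

end Conversion

section Spine

variable (G : BG T)

/-- `A` derives the empty word. -/
def BG.Null (A : G.N) : Prop := G.Gen A []

/-- One spine step: a rule whose body has `B` at the first possibly-productive position,
with `ρ` the remaining sibling. -/
def stepR (A B : G.N) (ρ : Option G.N) : Prop :=
  (G.ru A B ∧ ρ = none) ∨ (∃ C, G.rb A B C ∧ ρ = some C) ∨
    (∃ C, G.rb A C B ∧ G.Null C ∧ ρ = none)

/-- Semantics of an optional sibling. -/
def GenO : Option G.N → List T → Prop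
  | none, w => w = []
  | some C, w => G.Gen C w

/-- `Sib A B w` : there is a spine (of length ≥ 1) from `A` down to `B` whose
reversed sibling remainders together yield `w`. -/
inductive Sib : G.N → G.N → List T → Prop
  | one {A B ρ v} : stepR G A B ρ → GenO G ρ v → Sib A B v
  | more {A B' B ρ u v} : Sib A B' u → stepR G B' B ρ → GenO G ρ v → Sib A B (v ++ u)

lemma Sib.prepend {A B D : G.N} {ρ v u} (hst : stepR G A B ρ) (hv : GenO G ρ v)
    (h : Sib G B D u) : Sib G A D (u ++ v) := by
  induction h with
  | one hst' hv' => exact Sib.more (Sib.one hst hv) hst' hv'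
  | @more B' B'' ρ' u' v' _ hst' hv' ih =>
      have := Sib.more ih hst' hv'
      rwa [← List.append_assoc] at this

/-- One-step composition. -/
lemma step_out {A B : G.N} {ρ v x} (hst : stepR G A B ρ) (hv : GenO G ρ v)
    (hx : G.Gen B x) : G.Gen A (x ++ v) := by
  rcases hst with ⟨hru, rfl⟩ | ⟨C, hrb, rfl⟩ | ⟨C, hrb, hC, rfl⟩
  · cases hv; simpa using BG.Gen.unit hru hx
  · exact BG.Gen.bin hrb hx hv
  · cases hv; simpa using BG.Gen.bin hrb hC hx

/-- Reassembly along a sibling record. -/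
lemma sib_out {A D : G.N} {u x} (h : Sib G A D u) (hx : G.Gen D x) : G.Gen A (x ++ u) := by
  induction h generalizing x with
  | one hst hv => exact step_out G hst hv hx
  | more _ hst hv ih =>
      have := ih (step_out G hst hv hx)
      rwa [List.append_assoc] at this

/-- Key lemma (first-terminal analysis for `Gen`), forward direction. -/
lemma gen_cons {A : G.N} {w' : List T} (h : G.Gen A w') :
    ∀ {a : T} {w : List T}, w' = a :: w →
      ∃ D, G.re D a ∧ ((D = A ∧ w = []) ∨ Sib G A D w) := by
  induction h with
  | eps _ => intro a w hw; cases hw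
  | @term A' b hre =>
      intro a w hw
      obtain ⟨rfl, rfl⟩ := List.cons_eq_cons.mp hw
      exact ⟨A', hre, Or.inl ⟨rfl, rfl⟩⟩
  | @unit A' B w' hru _ ih =>
      intro a w hw
      obtain ⟨D, hre, hD⟩ := ih hw
      refine ⟨D, hre, Or.inr ?_⟩
      rcases hD with ⟨rfl, rfl⟩ | hsib
      · exact Sib.one (Or.inl ⟨hru, rfl⟩) rfl
      · have := Sib.prepend G (Or.inl ⟨hru, rfl⟩) rfl hsib
        simpa using this
  | @bin A' B C u v hrb hB hC ihB ihC =>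
      intro a w hw
      cases u with
      | nil =>
          simp only [List.nil_append] at hw
          obtain ⟨D, hre, hD⟩ := ihC hw
          refine ⟨D, hre, Or.inr ?_⟩
          have hstep : stepR G A' C none := Or.inr (Or.inr ⟨B, hrb, hB, rfl⟩)
          rcases hD with ⟨rfl, rfl⟩ | hsib
          · exact Sib.one hstep rfl
          · have := Sib.prepend G hstep rfl hsib
            simpa using this
      | cons b u' =>
          rw [List.cons_append, List.cons_eq_cons] at hw
          obtain ⟨rfl, rfl⟩ := hw
          obtain ⟨D, hre, hD⟩ := ihB rfl
          refine ⟨D, hre, Or.inr ?_⟩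
          have hstep : stepR G A' B (some C) := Or.inr (Or.inl ⟨C, hrb, rfl⟩)
          rcases hD with ⟨rfl, rfl⟩ | hsib
          · exact Sib.one hstep hC
          · exact Sib.prepend G hstep hC hsib

/-- First-terminal analysis, backward direction. -/
lemma gen_cons_rev {A D : G.N} {a : T} {w : List T} (hre : G.re D a)
    (hD : (D = A ∧ w = []) ∨ Sib G A D w) : G.Gen A (a :: w) := by
  rcases hD with ⟨rfl, rfl⟩ | hsib
  · exact BG.Gen.term hre
  · have := sib_out G hsib (BG.Gen.term hre)
    simpa using this

/-- A null spine step. -/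
def NStep (A B : G.N) : Prop := ∃ ρ, stepR G A B ρ ∧ GenO G ρ []

lemma sib_chain {A X Y : G.N} {u} (h : Sib G A X u)
    (hc : Relation.ReflTransGen (NStep G) X Y) : Sib G A Y u := by
  induction hc with
  | refl => exact h
  | tail _ hstep ih =>
      obtain ⟨ρ, hst, h0⟩ := hstep
      have := Sib.more ih hst h0
      simpa using this

/-- Witness form for the optional top part of a sibling record. -/
def OSib (A B : G.N) (rest : List T) : Prop := (B = A ∧ rest = []) ∨ Sib G A B rest

lemma sib_of_parts {A B B₀ B₁ C : G.N} {x rest}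
    (hc : Relation.ReflTransGen (NStep G) B₀ B) (hst : stepR G B₁ B₀ (some C))
    (hx : G.Gen C x) (ho : OSib G A B₁ rest) : Sib G A B (x ++ rest) := by
  refine sib_chain G ?_ hc
  rcases ho with ⟨rfl, rfl⟩ | hsib
  · simpa using Sib.one hst hx
  · exact Sib.more hsib hst hx

lemma genO_cons {ρ : Option G.N} {a : T} {w : List T} (h : GenO G ρ (a :: w)) :
    ∃ C, ρ = some C ∧ G.Gen C (a :: w) := by
  match ρ, h with
  | some C, h => exact ⟨C, rfl, h⟩

/-- First-terminal analysis for sibling records, forward direction. -/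
lemma sib_cons {A B : G.N} {w' : List T} (h : Sib G A B w') :
    ∀ {a : T} {w : List T}, w' = a :: w →
      ∃ B₀ B₁ C, Relation.ReflTransGen (NStep G) B₀ B ∧ stepR G B₁ B₀ (some C) ∧
        ∃ v rest, G.Gen C (a :: v) ∧ OSib G A B₁ rest ∧ w = v ++ rest := by
  induction h with
  | one hst hv =>
      intro a w hw
      subst hw
      obtain ⟨C, rfl, hC⟩ := genO_cons G hv
      exact ⟨_, _, C, Relation.ReflTransGen.refl, hst, w, [], hC,
        Or.inl ⟨rfl, rfl⟩, by simp⟩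
  | @more B' B'' ρ u v hsib hst hv ih =>
      intro a w hw
      cases v with
      | nil =>
          simp only [List.nil_append] at hw
          obtain ⟨B₀, B₁, C, hc, hst', v', rest, hgen, ho, hrest⟩ := ih hw
          exact ⟨B₀, B₁, C, hc.tail ⟨ρ, hst, hv⟩, hst', v', rest, hgen, ho, hrest⟩
      | cons b v' =>
          rw [List.cons_append, List.cons_eq_cons] at hw
          obtain ⟨rfl, rfl⟩ := hw
          obtain ⟨C, rfl, hC⟩ := genO_cons G hv
          exact ⟨B'', B', C, Relation.ReflTransGen.refl, hst, v', u, hC,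
            Or.inr hsib, rfl⟩

end Spine

section CellFramework

variable {C : Type} (Sem : C → List T → Prop)

inductive SemL : List C → List T → Prop
  | nil : SemL [] []
  | cons {c γ u v} : Sem c u → SemL γ v → SemL (c :: γ) (u ++ v)

def Dec (c : C) (a : T) : List C → Prop
  | [] => Sem c [a]
  | [d] => ∀ u, Sem d u → Sem c (a :: u)
  | [d, e] => ∀ u v, Sem d u → Sem e v → Sem c (a :: (u ++ v))
  | _ => False

lemma SemL.single {c : C} {w : List T} (h : Sem c w) : SemL Sem [c] w := by
  have := SemL.cons h SemL.nil
  simpa using this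

lemma SemL.pair {c d : C} {u v : List T} (hc : Sem c u) (hd : Sem d v) :
    SemL Sem [c, d] (u ++ v) := SemL.cons hc (SemL.single Sem hd)

lemma SemL.append_split {γ₁ γ₂ : List C} {w : List T} (h : SemL Sem (γ₁ ++ γ₂) w) :
    ∃ w₁ w₂, w = w₁ ++ w₂ ∧ SemL Sem γ₁ w₁ ∧ SemL Sem γ₂ w₂ := by
  induction γ₁ generalizing w with
  | nil => exact ⟨[], w, rfl, SemL.nil, h⟩
  | cons c γ₁ ih =>
      rw [List.cons_append] at h
      cases h with
      | cons hc hγ =>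
          obtain ⟨w₁, w₂, rfl, h₁, h₂⟩ := ih hγ
          exact ⟨_ ++ w₁, w₂, by simp, SemL.cons hc h₁, h₂⟩

lemma SemL.append_mk {γ₁ γ₂ : List C} {w₁ w₂ : List T}
    (h₁ : SemL Sem γ₁ w₁) (h₂ : SemL Sem γ₂ w₂) : SemL Sem (γ₁ ++ γ₂) (w₁ ++ w₂) := by
  induction h₁ with
  | nil => exact h₂
  | cons hc hγ ih => rw [List.append_assoc]; exact SemL.cons hc ih

lemma dec_sound {c : C} {a : T} {γ : List C} {v : List T}
    (hd : Dec Sem c a γ) (hv : SemL Sem γ v) : Sem c (a :: v) := by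
  match γ, hd with
  | [], hd => cases hv; exact hd
  | [d], hd =>
      cases hv with
      | cons hu hv' => cases hv'; simpa using hd _ hu
  | [d, e], hd =>
      cases hv with
      | cons hu hv' =>
          cases hv' with
          | cons hu' hv'' => cases hv''; simpa using hd _ _ hu hu'

lemma semL_step {c : C} {a : T} {γd γ : List C} {w : List T}
    (hd : Dec Sem c a γd) (h : SemL Sem (γd ++ γ) w) : SemL Sem (c :: γ) (a :: w) := by
  obtain ⟨w₁, w₂, rfl, h₁, h₂⟩ := SemL.append_split Sem h
  have := SemL.cons (dec_sound Sem hd h₁) h₂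
  simpa using this

lemma SemL.cons_inv {c : C} {γ : List C} {w : List T} (h : SemL Sem (c :: γ) w) :
    ∃ u v, w = u ++ v ∧ Sem c u ∧ SemL Sem γ v := by
  cases h with
  | cons hc hγ => exact ⟨_, _, rfl, hc, hγ⟩

def HasRes : Prop := ∀ c a w, Sem c (a :: w) → ∃ γ, Dec Sem c a γ ∧ SemL Sem γ w

def EpsFree : Prop := ∀ c, ¬ Sem c []

lemma semL_nil_of_epsFree (hef : EpsFree Sem) {γ : List C} {w : List T} (h : SemL Sem γ w)
    (hw : w = []) : γ = [] := by
  induction h with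
  | nil => rfl
  | cons hc hγ ih =>
      rw [List.append_eq_nil_iff] at hw
      exact absurd (hw.1 ▸ hc) (hef _)

end CellFramework

section GrammarCells

variable (G : BG T)

/-- The stack cells associated with a binary grammar. -/
abbrev Cell := G.N ⊕ G.N × G.N

/-- Semantics of the cells. -/
def CSem : Cell G → List T → Prop
  | Sum.inl A, w => G.Gen A w ∧ w ≠ []
  | Sum.inr (A, B), w => Sib G A B w ∧ w ≠ []

lemma csem_epsFree : EpsFree (CSem G) := by
  rintro (A | ⟨A, B⟩) ⟨_, h⟩ <;> exact h rfl

lemma csem_hasRes : HasRes (CSem G) := by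
  rintro (A | ⟨A, B⟩) a w hc
  case inl =>
    obtain ⟨hgen, -⟩ := id hc
    rcases eq_or_ne w [] with rfl | hw
    · exact ⟨[], hc, SemL.nil⟩
    obtain ⟨D, hre, hD⟩ := gen_cons G hgen rfl
    rcases hD with ⟨rfl, rfl⟩ | hsib
    · exact absurd rfl hw
    refine ⟨[Sum.inr (A, D)], ?_, SemL.single _ ⟨hsib, hw⟩⟩
    rintro u ⟨hu, hune⟩
    exact ⟨gen_cons_rev G hre (Or.inr hu), by simp⟩
  case inr =>
    obtain ⟨hsib, -⟩ := id hc
    rcases eq_or_ne w [] with rfl | hw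
    · exact ⟨[], hc, SemL.nil⟩
    obtain ⟨B₀, B₁, D0, hchain, hstep, v, rest, hgen, ho, rfl⟩ := sib_cons G hsib rfl
    rcases eq_or_ne v [] with rfl | hv
    · -- first part empty: rest ≠ []
      have hrest : Sib G A B₁ rest := by
        rcases ho with ⟨rfl, rfl⟩ | h'
        · exact absurd rfl hw
        · exact h'
      refine ⟨[Sum.inr (A, B₁)], ?_, SemL.single _ ⟨hrest, by simpa using hw⟩⟩
      rintro u ⟨hu, hune⟩
      exact ⟨by simpa using sib_of_parts G hchain hstep hgen (Or.inr hu), by simp⟩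
    · obtain ⟨D, hre, hD⟩ := gen_cons G hgen rfl
      rcases hD with ⟨rfl, rfl⟩ | hsibCD
      · exact absurd rfl hv
      rcases eq_or_ne rest [] with rfl | hrest
      · -- second part empty
        refine ⟨[Sum.inr (D0, D)], ?_, by simpa using SemL.single _ (⟨hsibCD, hv⟩ :
          CSem G (Sum.inr (D0, D)) v)⟩
        rintro u ⟨hu, hune⟩
        have hgen' : G.Gen D0 (a :: u) := gen_cons_rev G hre (Or.inr hu)
        have := sib_of_parts G hchain hstep hgen' ho
        exact ⟨by simpa using this, by simp⟩
      · -- both parts nonempty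
        have hrest' : Sib G A B₁ rest := by
          rcases ho with ⟨rfl, rfl⟩ | h'
          · exact absurd rfl hrest
          · exact h'
        refine ⟨[Sum.inr (D0, D), Sum.inr (A, B₁)], ?_,
          SemL.pair _ ⟨hsibCD, hv⟩ ⟨hrest', hrest⟩⟩
        rintro u u' ⟨hu, -⟩ ⟨hu', -⟩
        have hgen' : G.Gen D0 (a :: u) := gen_cons_rev G hre (Or.inr hu)
        have := sib_of_parts G hchain hstep hgen' (Or.inr hu')
        exact ⟨by simpa using this, by simp⟩

/-- Semantics of the start cell. -/
lemma csem_start (w : List T) :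
    CSem G (Sum.inl G.start) w ↔ G.Gen G.start w ∧ w ≠ [] := Iff.rfl

end GrammarCells

section PDA

variable {k : ℕ} {C : Fin k → Type} (Sem : ∀ j, C j → List T → Prop)
  (c₀ : ∀ j, C j) (E : Fin k → Prop)

/-- State type of the big machine: `none` is the global start state; otherwise a machine
index together with a cache holding at most one cell. -/
abbrev QQ (C : Fin k → Type) : Type := Option (Σ j : Fin k, Option (C j))

/-- Stack type: `none` is the bottom symbol `⊥`; otherwise a tagged cell. -/
abbrev SS (C : Fin k → Type) : Type := Option (Σ j : Fin k, C j)

/-- Embedding of a cell in the stack alphabet. -/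
abbrev emb (j : Fin k) (c : C j) : SS C := some ⟨j, c⟩

inductive PushT : QQ C → T → SS C → QQ C → SS C → Prop
  | start {a : T} {j d e} : Dec (Sem j) (c₀ j) a [d, e] →
      PushT none a none (some ⟨j, some d⟩) (emb j e)
  | cache {a : T} {j c d e x} : Dec (Sem j) c a [d, e] →
      PushT (some ⟨j, some c⟩) a x (some ⟨j, some d⟩) (emb j e)

inductive ReplT : QQ C → T → SS C → QQ C → SS C → Prop
  | start0 {a : T} {j} : Dec (Sem j) (c₀ j) a [] →
      ReplT none a none (some ⟨j, none⟩) none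
  | start1 {a : T} {j d} : Dec (Sem j) (c₀ j) a [d] →
      ReplT none a none (some ⟨j, some d⟩) none
  | cache0 {a : T} {j c x} : Dec (Sem j) c a [] →
      ReplT (some ⟨j, some c⟩) a x (some ⟨j, none⟩) x
  | cache1 {a : T} {j c d x} : Dec (Sem j) c a [d] →
      ReplT (some ⟨j, some c⟩) a x (some ⟨j, some d⟩) x
  | top1 {a : T} {j c d} : Dec (Sem j) c a [d] →
      ReplT (some ⟨j, none⟩) a (emb j c) (some ⟨j, none⟩) (emb j d)
  | top2 {a : T} {j c d e} : Dec (Sem j) c a [d, e] →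
      ReplT (some ⟨j, none⟩) a (emb j c) (some ⟨j, some d⟩) (emb j e)

inductive PopT : QQ C → T → SS C → QQ C → Prop
  | top0 {a : T} {j c} : Dec (Sem j) c a [] →
      PopT (some ⟨j, none⟩) a (emb j c) (some ⟨j, none⟩)

/-- The big machine. -/
def bigM : RestrictedPDA (QQ C) T (SS C) where
  start := none
  bot := none
  pushTrans := PushT Sem c₀
  replTrans := ReplT Sem c₀
  popTrans := PopT Sem
  accept := ∅

/-- Helper: a replace transition whose stack symbol is arbitrary, applied to a nonempty
stack, leaves the stack unchanged. -/
lemma step_repl_any {q r : QQ C} {a : T} {σ : List (SS C)} (hσ : σ ≠ [])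
    (htr : ∀ x, ReplT Sem c₀ q a x r x) : (bigM Sem c₀).Step (q, σ) a (r, σ) := by
  cases σ with
  | nil => exact absurd rfl hσ
  | cons x β => exact RestrictedPDA.Step.repl (htr x)

lemma step_push_any {q r : QQ C} {a : T} {y : SS C} {σ : List (SS C)} (hσ : σ ≠ [])
    (htr : ∀ x, PushT Sem c₀ q a x r y) : (bigM Sem c₀).Step (q, σ) a (r, y :: σ) := by
  cases σ with
  | nil => exact absurd rfl hσ
  | cons x β => exact RestrictedPDA.Step.push (htr x)

/-- Completeness: a run exists consuming any word matching the simulated cell stack. -/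
lemma run_of_semL (hef : ∀ j, EpsFree (Sem j)) (hres : ∀ j, HasRes (Sem j)) (j : Fin k) :
    ∀ (n : ℕ) (w : List T), w.length ≤ n →
      ∀ (γ : List (C j)) (co : Option (C j)) (δ : List (C j)) (base : List (SS C)),
        base ≠ [] → SemL (Sem j) γ w → γ = co.toList ++ δ →
        (bigM Sem c₀).Scans (some ⟨j, co⟩, δ.map (emb j) ++ base) w (some ⟨j, none⟩, base) := by
  intro n
  induction n with
  | zero =>
      intro w hw γ co δ base hbase hsem hγ
      rw [Nat.le_zero, List.length_eq_zero_iff] at hw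
      subst hw
      have := semL_nil_of_epsFree (Sem j) (hef j) hsem rfl
      subst hγ
      rw [List.append_eq_nil_iff] at this
      obtain ⟨h1, h2⟩ := this
      subst h2
      cases co with
      | none => exact RestrictedPDA.Scans.refl _
      | some c => cases h1
  | succ n ih =>
      intro w hw γ co δ base hbase hsem hγ
      cases w with
      | nil =>
          have := semL_nil_of_epsFree (Sem j) (hef j) hsem rfl
          subst hγ
          rw [List.append_eq_nil_iff] at this
          obtain ⟨h1, h2⟩ := this
          subst h2
          cases co with
          | none => exact RestrictedPDA.Scans.refl _
          | some c => cases h1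
      | cons a w' =>
          subst hγ
          cases co with
          | some c =>
              rw [Option.toList_some, List.cons_append] at hsem
              obtain ⟨u, v, huv, hc, hδ⟩ := SemL.cons_inv (Sem j) hsem
              cases u with
              | nil => exact absurd hc (hef j _)
              | cons b u' =>
                  rw [List.cons_append, List.cons_eq_cons] at huv
                  obtain ⟨rfl, rfl⟩ := huv
                  obtain ⟨γd, hdec, hsemd⟩ := (hres j) c a u' hc
                  have hsem'' : SemL (Sem j) (γd ++ δ) (u' ++ v) := SemL.append_mk _ hsemd hδ
                  have hlen : (u' ++ v).length ≤ n := by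
                    simp only [List.length_cons, List.length_append] at hw ⊢; omega
                  match γd, hdec with
                  | [], hdec =>
                      exact RestrictedPDA.Scans.step
                        (step_repl_any Sem c₀ (by simp [hbase]) fun x => ReplT.cache0 hdec)
                        (ih _ hlen _ none δ base hbase hsem'' rfl)
                  | [d], hdec =>
                      exact RestrictedPDA.Scans.step
                        (step_repl_any Sem c₀ (by simp [hbase]) fun x => ReplT.cache1 hdec)
                        (ih _ hlen _ (some d) δ base hbase hsem'' rfl)
                  | [d, e], hdec =>
                      exact RestrictedPDA.Scans.step
                        (step_push_any Sem c₀ (by simp [hbase]) fun x => PushT.cache hdec)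
                        (ih _ hlen _ (some d) (e :: δ) base hbase hsem'' (by simp))
          | none =>
              rw [Option.toList_none, List.nil_append] at hsem
              cases δ with
              | nil => exact nomatch hsem
              | cons c δ' =>
                  obtain ⟨u, v, huv, hc, hδ⟩ := SemL.cons_inv (Sem j) hsem
                  cases u with
                  | nil => exact absurd hc (hef j _)
                  | cons b u' =>
                      rw [List.cons_append, List.cons_eq_cons] at huv
                      obtain ⟨rfl, rfl⟩ := huv
                      obtain ⟨γd, hdec, hsemd⟩ := (hres j) c a u' hc
                      have hsem'' : SemL (Sem j) (γd ++ δ') (u' ++ v) := SemL.append_mk _ hsemd hδ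
                      have hlen : (u' ++ v).length ≤ n := by
                        simp only [List.length_cons, List.length_append] at hw ⊢; omega
                      match γd, hdec with
                      | [], hdec =>
                          exact RestrictedPDA.Scans.step
                            (RestrictedPDA.Step.pop (PopT.top0 hdec))
                            (ih _ hlen _ none δ' base hbase hsem'' rfl)
                      | [d], hdec =>
                          exact RestrictedPDA.Scans.step
                            (RestrictedPDA.Step.repl (ReplT.top1 hdec))
                            (ih _ hlen _ none (d :: δ') base hbase hsem'' rfl)
                      | [d, e], hdec =>
                          exact RestrictedPDA.Scans.step
                            (RestrictedPDA.Step.repl (ReplT.top2 hdec))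
                            (ih _ hlen _ (some d) (e :: δ') base hbase hsem'' (by simp))

/-- Soundness: any accepting run consumes a word matching the simulated cell stack. -/
lemma semL_of_run (j : Fin k) :
    ∀ {cfg : QQ C × List (SS C)} {w : List T} {cend : QQ C × List (SS C)},
      (bigM Sem c₀).Scans cfg w cend →
      ∀ {co : Option (C j)} {δ : List (C j)} {β : List (SS C)},
        cfg = (some ⟨j, co⟩, δ.map (emb j) ++ [(none : SS C)]) →
        cend = (some ⟨j, none⟩, (none : SS C) :: β) →
        SemL (Sem j) (co.toList ++ δ) w := by
  intro cfg w cend h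
  induction h with
  | refl c =>
      intro co δ β h1 h2
      rw [h1] at h2
      have hq : (some ⟨j, co⟩ : QQ C) = some ⟨j, none⟩ := congrArg Prod.fst h2
      have hσ : δ.map (emb j) ++ [(none : SS C)] = none :: β := congrArg Prod.snd h2
      simp only [Option.some.injEq, Sigma.mk.inj_iff, heq_eq_eq, true_and] at hq
      subst hq
      cases δ with
      | nil => exact SemL.nil
      | cons c₁ δ₁ => simp [emb] at hσ
  | @step c c' c'' a w hstep hscan ih =>
      intro co δ β h1 h2
      subst h1
      cases δ with
      | nil =>
          cases hstep with
          | push htr =>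
              cases htr with
              | cache hdec =>
                  rename_i cc d e
                  have hsem := ih (co := some d) (δ := [e]) (by simp [emb]) h2
                  exact semL_step _ hdec (by simpa using hsem)
          | repl htr =>
              cases htr with
              | cache0 hdec =>
                  have hsem := ih (co := none) (δ := []) (by simp) h2
                  exact semL_step _ hdec (by simpa using hsem)
              | cache1 hdec =>
                  rename_i cc d
                  have hsem := ih (co := some d) (δ := []) (by simp) h2
                  exact semL_step _ hdec (by simpa using hsem)
          | pop htr => cases htr
      | cons c₁ δ₁ =>
          simp only [List.map_cons, List.cons_append] at hstep
          cases hstep with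
          | push htr =>
              cases htr with
              | cache hdec =>
                  rename_i cc d e
                  have hsem := ih (co := some d) (δ := e :: c₁ :: δ₁) (by simp [emb]) h2
                  exact semL_step _ hdec (by simpa using hsem)
          | repl htr =>
              cases htr with
              | cache0 hdec =>
                  have hsem := ih (co := none) (δ := c₁ :: δ₁) (by simp [emb]) h2
                  exact semL_step _ hdec (by simpa using hsem)
              | cache1 hdec =>
                  rename_i cc d
                  have hsem := ih (co := some d) (δ := c₁ :: δ₁) (by simp [emb]) h2
                  exact semL_step _ hdec (by simpa using hsem)
              | top1 hdec =>
                  rename_i d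
                  have hsem := ih (co := none) (δ := d :: δ₁) (by simp [emb]) h2
                  exact semL_step _ hdec (by simpa using hsem)
              | top2 hdec =>
                  rename_i d e
                  have hsem := ih (co := some d) (δ := e :: δ₁) (by simp [emb]) h2
                  exact semL_step _ hdec (by simpa using hsem)
          | pop htr =>
              cases htr with
              | top0 hdec =>
                  have hsem := ih (co := none) (δ := δ₁) (by simp [emb]) h2
                  exact semL_step _ hdec (by simpa using hsem)

/-- Every transition's target state is of the form `some ⟨j, _⟩`. -/
lemma step_target {cfg : QQ C × List (SS C)} {a : T} {c' : QQ C × List (SS C)}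
    (h : (bigM Sem c₀).Step cfg a c') : ∃ j co, c'.1 = some ⟨j, co⟩ := by
  cases h with
  | push htr => cases htr <;> exact ⟨_, _, rfl⟩
  | repl htr => cases htr <;> exact ⟨_, _, rfl⟩
  | pop htr => cases htr; exact ⟨_, _, rfl⟩

/-- Transitions from a machine-`j` state stay in machine `j`. -/
lemma step_stay {j : Fin k} {co : Option (C j)} {σ : List (SS C)} {a : T}
    {c' : QQ C × List (SS C)} (h : (bigM Sem c₀).Step (some ⟨j, co⟩, σ) a c') :
    ∃ co', c'.1 = some ⟨j, co'⟩ := by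
  cases h with
  | push htr => cases htr; exact ⟨_, rfl⟩
  | repl htr => cases htr <;> exact ⟨_, rfl⟩
  | pop htr => cases htr; exact ⟨_, rfl⟩

lemma scans_stay {cfg : QQ C × List (SS C)} {w : List T} {cend : QQ C × List (SS C)}
    (h : (bigM Sem c₀).Scans cfg w cend) :
    ∀ {j : Fin k} {co : Option (C j)}, cfg.1 = some ⟨j, co⟩ →
      ∃ co', cend.1 = some ⟨j, co'⟩ := by
  induction h with
  | refl c => exact fun hq => ⟨_, hq⟩
  | @step c c' c'' a w hstep hscan ih =>
      intro j co hq
      obtain ⟨q, σ⟩ := c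
      cases hq
      obtain ⟨co', hco'⟩ := step_stay Sem c₀ hstep
      obtain ⟨q', σ'⟩ := c'
      cases hco'
      exact ih rfl

/-- A run ending in the global start state must be trivial. -/
lemma scans_none_end {cfg : QQ C × List (SS C)} {w : List T} {cend : QQ C × List (SS C)}
    (h : (bigM Sem c₀).Scans cfg w cend) (hend : cend.1 = none) : w = [] ∧ cfg = cend := by
  induction h with
  | refl c => exact ⟨rfl, rfl⟩
  | step hstep hscan ih =>
      obtain ⟨rfl, rfl⟩ := ih hend
      obtain ⟨j, co, hq⟩ := step_target Sem c₀ hstep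
      rw [hq] at hend
      cases hend

/-- The designated state sets. -/
def GG (j : Fin k) : Set (QQ C) := {q | (q = none ∧ E j) ∨ q = some ⟨j, none⟩}

/-- Main theorem about the big machine. -/
theorem bigM_correct (hef : ∀ j, EpsFree (Sem j)) (hres : ∀ j, HasRes (Sem j))
    (j : Fin k) (w : List T) :
    ((w = [] ∧ E j) ∨ Sem j (c₀ j) w) ↔
      ∃ r ∈ GG E j, ∃ β : List (SS C),
        (bigM Sem c₀).Scans (none, [none]) w (r, (none : SS C) :: β) := by
  constructor
  · rintro (⟨rfl, hE⟩ | hsem)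
    · exact ⟨none, Or.inl ⟨rfl, hE⟩, [], RestrictedPDA.Scans.refl _⟩
    · cases w with
      | nil => exact absurd hsem (hef j _)
      | cons a w' =>
          obtain ⟨γd, hdec, hsemd⟩ := (hres j) _ a w' hsem
          refine ⟨some ⟨j, none⟩, Or.inr rfl, [], ?_⟩
          match γd, hdec with
          | [], hdec =>
              refine RestrictedPDA.Scans.step
                (RestrictedPDA.Step.repl (β := []) (ReplT.start0 hdec)) ?_
              cases hsemd
              exact RestrictedPDA.Scans.refl _
          | [d], hdec =>
              refine RestrictedPDA.Scans.step
                (RestrictedPDA.Step.repl (β := []) (ReplT.start1 hdec)) ?_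
              exact run_of_semL Sem c₀ hef hres j _ w' le_rfl _ (some d) [] [none]
                (by simp) hsemd rfl
          | [d, e], hdec =>
              refine RestrictedPDA.Scans.step
                (RestrictedPDA.Step.push (β := []) (PushT.start hdec)) ?_
              exact run_of_semL Sem c₀ hef hres j _ w' le_rfl _ (some d) [e] [none]
                (by simp) hsemd (by simp)
  · rintro ⟨r, hr, β, hscan⟩
    rcases hr with ⟨rfl, hE⟩ | rfl
    · obtain ⟨rfl, -⟩ := scans_none_end Sem c₀ hscan rfl
      exact Or.inl ⟨rfl, hE⟩
    · cases w with
      | nil =>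
          cases hscan
      | cons a w' =>
          refine Or.inr ?_
          cases hscan with
          | step hstep hscan' =>
              cases hstep with
              | push htr =>
                  cases htr with
                  | start hdec =>
                      rename_i j' d e
                      obtain ⟨co', hco'⟩ := scans_stay Sem c₀ hscan' rfl
                      simp only [Option.some.injEq, Sigma.mk.inj_iff] at hco'
                      obtain ⟨rfl, -⟩ := hco'
                      have hsem := semL_of_run Sem c₀ j hscan' (co := some d) (δ := [e])
                        (by simp [emb]) rfl
                      exact dec_sound _ hdec (by simpa using hsem)
              | repl htr =>
                  cases htr with
                  | start0 hdec =>
                      rename_i j'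
                      obtain ⟨co', hco'⟩ := scans_stay Sem c₀ hscan' rfl
                      simp only [Option.some.injEq, Sigma.mk.inj_iff] at hco'
                      obtain ⟨rfl, -⟩ := hco'
                      have hsem := semL_of_run Sem c₀ j hscan' (co := none) (δ := [])
                        (by simp) rfl
                      have : w' = [] := by cases hsem; rfl
                      subst this
                      exact hdec
                  | start1 hdec =>
                      rename_i j' d
                      obtain ⟨co', hco'⟩ := scans_stay Sem c₀ hscan' rfl
                      simp only [Option.some.injEq, Sigma.mk.inj_iff] at hco'
                      obtain ⟨rfl, -⟩ := hco'
                      have hsem := semL_of_run Sem c₀ j hscan' (co := some d) (δ := [])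
                        (by simp) rfl
                      exact dec_sound _ hdec (by simpa using hsem)
              | pop htr => cases htr

end PDA

end RPDAProof

/-- For any finite list of context-free languages `L₁, …, L_k` over a common alphabet `Σ`,
there are a single restricted PDA `P` over `Σ` and subsets `G₁, …, G_k` of its states such
that for every string `w` and every `j`: `w ∈ L_j` iff some run of `P` scanning `w` ends in
a state of `G_j` with `⊥` as the top stack symbol.  Consequently, `w ∈ L₁ ∩ ⋯ ∩ L_k` iff for
every `j` some run of `P` scanning `w` ends in a state of `G_j` with `⊥` on top. -/

theorem exists_restrictedPDA_for_intersection {T : Type} (k : ℕ) (L : Fin k → Language T)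
    (hL : ∀ j, (L j).IsContextFree) :
    ∃ (Q S : Type) (_ : Fintype Q) (_ : Fintype S) (M : RestrictedPDA Q T S)
      (G : Fin k → Set Q),
      (∀ (w : List T) (j : Fin k),
        w ∈ L j ↔ ∃ r ∈ G j, ∃ β : List S, M.Scans (M.start, [M.bot]) w (r, M.bot :: β)) ∧
      (∀ w : List T,
        (∀ j : Fin k, w ∈ L j) ↔
          ∀ j : Fin k, ∃ r ∈ G j, ∃ β : List S,
            M.Scans (M.start, [M.bot]) w (r, M.bot :: β)) := by
  classical
  choose Gr hfin hgen using fun j => RPDAProof.exists_BG (hL j)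
  haveI hN : ∀ j, Finite (Gr j).N := hfin
  let C : Fin k → Type := fun j => RPDAProof.Cell (Gr j)
  let Sem : ∀ j, C j → List T → Prop := fun j => RPDAProof.CSem (Gr j)
  let c₀ : ∀ j, C j := fun j => Sum.inl (Gr j).start
  let E : Fin k → Prop := fun j => [] ∈ L j
  haveI hC : ∀ j, Finite (C j) := fun j => by
    haveI := hN j
    exact inferInstance
  haveI hO : ∀ j, Finite (Option (C j)) := fun j => by
    letI := Fintype.ofFinite (C j); exact Finite.of_fintype _
  haveI hSig : Finite (Σ j, Option (C j)) := Finite.instSigma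
  haveI hSig2 : Finite (Σ j, C j) := Finite.instSigma
  haveI hQ : Finite (RPDAProof.QQ C) := by
    letI := Fintype.ofFinite (Σ j, Option (C j)); exact Finite.of_fintype _
  haveI hS : Finite (RPDAProof.SS C) := by
    letI := Fintype.ofFinite (Σ j, C j); exact Finite.of_fintype _
  have key : ∀ (w : List T) (j : Fin k),
      w ∈ L j ↔ ∃ r ∈ RPDAProof.GG E j, ∃ β : List (RPDAProof.SS C),
        (RPDAProof.bigM Sem c₀).Scans ((RPDAProof.bigM Sem c₀).start,
          [(RPDAProof.bigM Sem c₀).bot]) w (r, (RPDAProof.bigM Sem c₀).bot :: β) := by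
    intro w j
    have hkey := RPDAProof.bigM_correct Sem c₀ E
      (fun j => RPDAProof.csem_epsFree (Gr j)) (fun j => RPDAProof.csem_hasRes (Gr j)) j w
    have hmem : w ∈ L j ↔ ((w = [] ∧ E j) ∨ Sem j (c₀ j) w) := by
      constructor
      · intro hw
        rcases eq_or_ne w [] with rfl | hne
        · exact Or.inl ⟨rfl, hw⟩
        · exact Or.inr ⟨(hgen j w).mpr hw, hne⟩
      · rintro (⟨rfl, hE⟩ | ⟨hg, -⟩)
        · exact hE
        · exact (hgen j w).mp hg
    exact hmem.trans hkey
  exact ⟨RPDAProof.QQ C, RPDAProof.SS C, Fintype.ofFinite _, Fintype.ofFinite _,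
    RPDAProof.bigM Sem c₀, RPDAProof.GG E, key,
    fun w => forall_congr' fun j => key w j⟩
end

section
/- The reading of the superposition stack equals a weighted sum over the runs of a one-state, one-stack-symbol nondeterministic stack: for every t ≥ 1, s_t[1] = Σ over all action sequences (a₁, …, a_t) ∈ {push, no-op, pop}^t of (∏_{k=1}^t w_k(a_k)) · top(a₁, …, a_t), where w_k(push) = u_k, w_k(no-op) = o_k, w_k(pop) = d_k, and top(a₁, …, a_t) ∈ ℝ^m is the top element of the stack of vectors obtained by executing the actions in order on an initially empty stack, where the action at step k either pushes the vector v_k, leaves the stack unchanged (no-op), or removes the top element if the stack is nonempty and otherwise leaves it empty (pop), and where the top of an empty stack is taken to be 0 ∈ ℝ^m. -/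
/-- An action on the superposition stack: push, no-op, or pop. -/
inductive Act where
  | push
  | noop
  | pop
  deriving DecidableEq

instance : Fintype Act where
  elems := {Act.push, Act.noop, Act.pop}
  complete := by intro x; cases x <;> simp

/-- The superposition stack of Joulin and Mikolov: `sup v u o d t i` is `s_t[i]`, where
`s_t[0] = v_{t+1}`, `s_0[i] = 0` for `i ≥ 1`, and for `t ≥ 1`,
`s_t[i] = u_t·s_{t-1}[i-1] + o_t·s_{t-1}[i] + d_t·s_{t-1}[i+1]` for `1 ≤ i ≤ t` and
`s_t[i] = 0` for `i > t`. -/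
def sup {m : ℕ} (v : ℕ → Fin m → ℝ) (u o d : ℕ → ℝ) : ℕ → ℕ → Fin m → ℝ
  | t, 0 => v (t + 1)
  | 0, _ + 1 => 0
  | t + 1, i + 1 =>
      if i + 1 ≤ t + 1 then
        u (t + 1) • sup v u o d t i + o (t + 1) • sup v u o d t (i + 1)
          + d (t + 1) • sup v u o d t (i + 2)
      else 0

/-- The weight of an action at timestep `k`: `u k` for push, `o k` for no-op, `d k` for
pop. -/
def actWeight (u o d : ℕ → ℝ) (k : ℕ) : Act → ℝ
  | .push => u k
  | .noop => o k
  | .pop => d k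

/-- The weight `∏_{k} w_k(a_k)` of a sequence of actions whose first action happens at
timestep `k`. -/
def seqWeight (u o d : ℕ → ℝ) : ℕ → List Act → ℝ
  | _, [] => 1
  | k, a :: rest => actWeight u o d k a * seqWeight u o d (k + 1) rest

/-- Execute a sequence of actions on a stack of vectors (head = top), where the action at
timestep `k` either pushes the vector `v k`, leaves the stack unchanged (no-op), or removes
the top element if the stack is nonempty and otherwise leaves it empty (pop). -/
def execStack {m : ℕ} (v : ℕ → Fin m → ℝ) : ℕ → List (Fin m → ℝ) → List Act → List (Fin m → ℝ)
  | _, st, [] => st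
  | k, st, .push :: rest => execStack v (k + 1) (v k :: st) rest
  | k, st, .noop :: rest => execStack v (k + 1) st rest
  | k, st, .pop :: rest => execStack v (k + 1) st.tail rest

/-- `top(a₁, …, a_t)`: the top element of the stack of vectors obtained by executing the
actions in order (at timesteps `1, …, t`) on an initially empty stack; the top of an empty
stack is taken to be `0`. -/
def stackTop {m : ℕ} (v : ℕ → Fin m → ℝ) (acts : List Act) : Fin m → ℝ :=
  (execStack v 1 [] acts).headD 0

/-- Element at 1-indexed position `i` of a stack, where position `0` is a designated
"next input" vector and out-of-range positions are `0`. -/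
def elemAt {m : ℕ} (x : Fin m → ℝ) (st : List (Fin m → ℝ)) : ℕ → (Fin m → ℝ)
  | 0 => x
  | i + 1 => st.getD i 0

lemma sum_act {α : Type*} [AddCommMonoid α] (f : Act → α) :
    ∑ b : Act, f b = f .push + f .noop + f .pop := by
  have h : (Finset.univ : Finset Act) = {.push, .noop, .pop} := by decide
  rw [h]
  simp [Finset.sum_insert, add_assoc]

lemma seqWeight_append (u o d : ℕ → ℝ) (k : ℕ) (l : List Act) (b : Act) :
    seqWeight u o d k (l ++ [b]) = seqWeight u o d k l * actWeight u o d (k + l.length) b := by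
  induction l generalizing k with
  | nil => simp [seqWeight]
  | cons a rest ih =>
      simp only [List.cons_append, seqWeight, List.append_eq, List.length_cons]
      rw [ih (k + 1), show k + 1 + rest.length = k + (rest.length + 1) by omega]
      ring

lemma execStack_append {m : ℕ} (v : ℕ → Fin m → ℝ) (k : ℕ) (st : List (Fin m → ℝ))
    (l l' : List Act) :
    execStack v k st (l ++ l') = execStack v (k + l.length) (execStack v k st l) l' := by
  induction l generalizing k st with
  | nil => simp [execStack]
  | cons a rest ih =>
      cases a <;>
        simp only [List.cons_append, execStack, List.append_eq, List.length_cons] <;>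
        rw [show k + (rest.length + 1) = k + 1 + rest.length by omega] <;>
        exact ih _ _

lemma execStack_length {m : ℕ} (v : ℕ → Fin m → ℝ) (k : ℕ) (st : List (Fin m → ℝ))
    (l : List Act) :
    (execStack v k st l).length ≤ st.length + l.length := by
  induction l generalizing k st with
  | nil => simp [execStack]
  | cons a rest ih =>
      cases a
      · have h := ih (k + 1) (v k :: st)
        simp only [execStack, List.length_cons] at h ⊢
        omega
      · have h := ih (k + 1) st
        simp only [execStack, List.length_cons] at h ⊢
        omega
      · have h := ih (k + 1) st.tail
        have h2 := List.length_tail (l := st)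
        simp only [execStack, List.length_cons] at h ⊢
        omega

lemma sum_seqWeight (u o d : ℕ → ℝ) (K : ℕ) (hnorm : ∀ k, K ≤ k → u k + o k + d k = 1) :
    ∀ t k, K ≤ k → ∑ a : Fin t → Act, seqWeight u o d k (List.ofFn a) = 1 := by
  intro t
  induction t with
  | zero => intro k hk; simp [seqWeight]
  | succ t ih =>
      intro k hk
      rw [← Equiv.sum_comp (Fin.consEquiv fun _ : Fin (t + 1) => Act)]
      rw [Fintype.sum_prod_type]
      have : ∀ b : Act, ∀ a : Fin t → Act,
          seqWeight u o d k (List.ofFn ((Fin.consEquiv fun _ => Act) (b, a)))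
          = actWeight u o d k b * seqWeight u o d (k + 1) (List.ofFn a) := by
        intro b a
        simp [Fin.consEquiv, List.ofFn_succ, seqWeight, Fin.cons]
      simp only [this]
      rw [← Finset.sum_mul_sum]
      rw [ih (k + 1) (by omega)]
      rw [sum_act (fun b => actWeight u o d k b)]
      simp [actWeight, hnorm k hk]

lemma key {m : ℕ} (v : ℕ → Fin m → ℝ) (u o d : ℕ → ℝ)
    (hnorm : ∀ k, 1 ≤ k → u k + o k + d k = 1) :
    ∀ t i, sup v u o d t i =
      ∑ a : Fin t → Act,
        seqWeight u o d 1 (List.ofFn a) • elemAt (v (t + 1)) (execStack v 1 [] (List.ofFn a)) i := by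
  intro t
  induction t with
  | zero =>
      intro i
      have : ∀ a : Fin 0 → Act, List.ofFn a = [] := fun a => by simp
      cases i with
      | zero => simp [sup, seqWeight, execStack, elemAt]
      | succ i => simp [sup, seqWeight, execStack, elemAt]
  | succ t ih =>
      intro i
      -- rewrite RHS via snoc decomposition
      have hsum : ∀ f : (Fin (t + 1) → Act) → (Fin m → ℝ),
          ∑ a : Fin (t + 1) → Act, f a
            = ∑ a : Fin t → Act, ∑ b : Act, f (Fin.snoc a b) := by
        intro f
        rw [← Equiv.sum_comp (Fin.snocEquiv fun _ : Fin (t + 1) => Act)]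
        rw [Fintype.sum_prod_type]
        rw [Finset.sum_comm]
        rfl
      have hofFn : ∀ (a : Fin t → Act) (b : Act),
          List.ofFn (Fin.snoc a b : Fin (t+1) → Act) = List.ofFn a ++ [b] := by
        intro a b
        rw [List.ofFn_succ']
        simp [Fin.snoc_castSucc, List.concat_eq_append]
      have hW : ∀ (a : Fin t → Act) (b : Act),
          seqWeight u o d 1 (List.ofFn a ++ [b])
            = seqWeight u o d 1 (List.ofFn a) * actWeight u o d (t + 1) b := by
        intro a b
        rw [seqWeight_append]
        congr 2
        simp [Nat.add_comm]
      have hE : ∀ (a : Fin t → Act) (b : Act),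
          execStack v 1 [] (List.ofFn a ++ [b])
            = execStack v (t + 1) (execStack v 1 [] (List.ofFn a)) [b] := by
        intro a b
        rw [execStack_append]
        congr 1
        simp [Nat.add_comm]
      cases i with
      | zero =>
          show v (t + 1 + 1) = _
          have : ∀ a : Fin (t + 1) → Act,
              seqWeight u o d 1 (List.ofFn a)
                  • elemAt (v (t + 1 + 1)) (execStack v 1 [] (List.ofFn a)) 0
                = seqWeight u o d 1 (List.ofFn a) • v (t + 1 + 1) := fun a => rfl
          simp only [this, ← Finset.sum_smul]
          rw [sum_seqWeight u o d 1 hnorm (t + 1) 1 le_rfl, one_smul]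
      | succ j =>
          by_cases hj : j + 1 ≤ t + 1
          · rw [show sup v u o d (t + 1) (j + 1)
                = u (t + 1) • sup v u o d t j + o (t + 1) • sup v u o d t (j + 1)
                  + d (t + 1) • sup v u o d t (j + 2) by rw [sup]; simp [hj]]
            rw [hsum, ih j, ih (j + 1), ih (j + 2)]
            rw [Finset.smul_sum, Finset.smul_sum, Finset.smul_sum, ← Finset.sum_add_distrib,
              ← Finset.sum_add_distrib]
            refine Finset.sum_congr rfl fun a _ => ?_
            rw [sum_act, hofFn, hofFn, hofFn, hW, hW, hW, hE, hE, hE]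
            set st := execStack v 1 [] (List.ofFn a) with hst
            have hpush : execStack v (t + 1) st [Act.push] = v (t + 1) :: st := rfl
            have hnoop : execStack v (t + 1) st [Act.noop] = st := rfl
            have hpop : execStack v (t + 1) st [Act.pop] = st.tail := rfl
            rw [hpush, hnoop, hpop]
            have e1 : elemAt (v (t + 1 + 1)) (v (t + 1) :: st) (j + 1)
                = elemAt (v (t + 1)) st j := by
              cases j with
              | zero => rfl
              | succ j => rfl
            have e2 : elemAt (v (t + 1 + 1)) st (j + 1) = elemAt (v (t + 1)) st (j + 1) := rfl
            have e3 : elemAt (v (t + 1 + 1)) st.tail (j + 1) = elemAt (v (t + 1)) st (j + 2) := by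
              show st.tail.getD j 0 = st.getD (j + 1) 0
              cases st with
              | nil => rfl
              | cons x xs => rfl
            rw [e1, e2, e3]
            simp only [actWeight, smul_smul]
            funext x
            simp only [Pi.add_apply, Pi.smul_apply, smul_eq_mul]
            ring
          · rw [show sup v u o d (t + 1) (j + 1) = 0 by rw [sup]; simp [hj]]
            symm
            refine Finset.sum_eq_zero fun a _ => ?_
            have hlen : (execStack v 1 [] (List.ofFn a)).length ≤ t + 1 := by
              have := execStack_length v 1 [] (List.ofFn a)
              simpa using this
            have : elemAt (v (t + 1 + 1)) (execStack v 1 [] (List.ofFn a)) (j + 1) = 0 := by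
              show (execStack v 1 [] (List.ofFn a)).getD j 0 = 0
              apply List.getD_eq_default
              omega
            rw [this, smul_zero]

/-- **The reading of the superposition stack is a weighted sum over the runs of a one-state,
one-stack-symbol nondeterministic stack**: if `u_t + o_t + d_t = 1` for all `t ≥ 1`, then
for every `t ≥ 1`,
`s_t[1] = Σ_{(a₁,…,a_t) ∈ {push, no-op, pop}^t} (∏_{k=1}^t w_k(a_k)) · top(a₁, …, a_t)`. -/
theorem superposition_reading_eq_sum_over_runs {m : ℕ} (hm : 1 ≤ m)
    (v : ℕ → Fin m → ℝ) (u o d : ℕ → ℝ) (hnorm : ∀ k, 1 ≤ k → u k + o k + d k = 1)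
    (t : ℕ) (ht : 1 ≤ t) :
    sup v u o d t 1 =
      ∑ a : Fin t → Act,
        seqWeight u o d 1 (List.ofFn a) • stackTop v (List.ofFn a) := by
  rw [key v u o d hnorm t 1]
  refine Finset.sum_congr rfl fun a _ => ?_
  congr 1
  show (execStack v 1 [] (List.ofFn a)).getD 0 0 = (execStack v 1 [] (List.ofFn a)).headD 0
  cases execStack v 1 [] (List.ofFn a) with
  | nil => rfl
  | cons x xs => rfl
end
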